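/- arXiv:1807.06559 — 4 statements merged into one kernel-verified Lean document; each statement's English description precedes it below -/
import Mathlib

section
/- Let M and N be matroids on the same finite ground set E. Then every flat of N is a flat of M if and only if there is no circuit C of M and no cocircuit D of N such that C and D intersect in exactly one element. -/
/-- A circuit of a matroid: a minimal dependent set. -/
def Matroid.IsCircuit' {α : Type*} (M : Matroid α) (C : Set α) : Prop :=
  M.Dep C ∧ ∀ D, M.Dep D → D ⊆ C → D = C

/-- A cocircuit of a matroid: a circuit of the dual matroid. -/
def Matroid.IsCocircuit' {α : Type*} (M : Matroid α) (C : Set α) : Prop :=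
  M✶.IsCircuit' C

/-- The rank of a set in a matroid: the largest cardinality of an independent subset. -/
noncomputable def Matroid.rk' {α : Type*} (M : Matroid α) (A : Set α) : ℕ :=
  sSup {n : ℕ | ∃ I, I ⊆ A ∧ M.Indep I ∧ I.ncard = n}

/-- `e` is the minimum element of the set `C`. -/
def IsMinOf {α : Type*} [LinearOrder α] (C : Set α) (e : α) : Prop :=
  e ∈ C ∧ ∀ x ∈ C, e ≤ x

/-- `Int_M(A)`: internally active elements of `A` w.r.t. `M`
(the ground set is the whole type, so `E ∖ A = Aᶜ`). -/
def IntSet {α : Type*} [LinearOrder α] (M : Matroid α) (A : Set α) : Set α :=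
  {e | e ∈ A ∧ ∃ C, M.IsCocircuit' C ∧ C ⊆ Aᶜ ∪ {e} ∧ IsMinOf C e}

/-- `Ext_M(A)`: externally active elements w.r.t. `M`. -/
def ExtSet {α : Type*} [LinearOrder α] (M : Matroid α) (A : Set α) : Set α :=
  {e | e ∉ A ∧ ∃ C, M.IsCircuit' C ∧ C ⊆ A ∪ {e} ∧ IsMinOf C e}

/-- `P_M(A)`: smallest elements of cocircuits of `M` contained in `E ∖ A`. -/
def PActSet {α : Type*} [LinearOrder α] (M : Matroid α) (A : Set α) : Set α :=
  {e | e ∉ A ∧ ∃ C, M.IsCocircuit' C ∧ C ⊆ Aᶜ ∧ IsMinOf C e}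

/-- `Q_M(A)`: smallest elements of circuits of `M` contained in `A`. -/
def QActSet {α : Type*} [LinearOrder α] (M : Matroid α) (A : Set α) : Set α :=
  {e | e ∈ A ∧ ∃ C, M.IsCircuit' C ∧ C ⊆ A ∧ IsMinOf C e}



open Set

section helpers

variable {α : Type*}

private lemma exists_circuit_subset_aux [Fintype α] {M : Matroid α} :
    ∀ n (X : Set α), X.ncard ≤ n → M.Dep X →
      ∃ C, C ⊆ X ∧ (M.Dep C ∧ ∀ D, M.Dep D → D ⊆ C → D = C) := by
  intro n
  induction n with
  | zero =>
    intro X hX hdep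
    rw [Nat.le_zero, Set.ncard_eq_zero X.toFinite] at hX
    subst hX
    exact absurd M.empty_indep hdep.not_indep
  | succ n ih =>
    intro X hX hdep
    by_cases h : ∀ D, M.Dep D → D ⊆ X → D = X
    · exact ⟨X, Subset.rfl, hdep, h⟩
    · push_neg at h
      obtain ⟨D, hD, hDX, hne⟩ := h
      obtain ⟨C, hCD, hC⟩ := ih D (by
        have h1 := Set.ncard_lt_ncard (hDX.ssubset_of_ne hne) X.toFinite
        omega) hD
      exact ⟨C, hCD.trans hDX, hC⟩

private lemma exists_circuit_subset [Fintype α] {M : Matroid α} {X : Set α} (hX : M.Dep X) :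
    ∃ C, C ⊆ X ∧ (M.Dep C ∧ ∀ D, M.Dep D → D ⊆ C → D = C) :=
  exists_circuit_subset_aux X.ncard X le_rfl hX

private lemma flat_of_closure_subset {M : Matroid α} {F : Set α} (hFE : F ⊆ M.E)
    (h : M.closure F ⊆ F) : M.IsFlat F := by
  refine ⟨fun I X hIF hIX => ?_, hFE⟩
  calc X ⊆ M.closure X := M.subset_closure X hIX.subset_ground
    _ = M.closure I := hIX.closure_eq_closure.symm
    _ = M.closure F := hIF.closure_eq_closure
    _ ⊆ F := h

/-- with full ground set, the complement of a "fundamental hyperplane" is a cocircuit -/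
private lemma compl_closure_cocircuit {N : Matroid α} (hNE : N.E = univ) {B : Set α} {e : α}
    (hB : N.IsBase B) (heB : e ∈ B) : N✶.Dep (N.closure (B \ {e}))ᶜ ∧
      ∀ D, N✶.Dep D → D ⊆ (N.closure (B \ {e}))ᶜ → D = (N.closure (B \ {e}))ᶜ := by
  set H := N.closure (B \ {e}) with hH
  have hBe : N.Indep (B \ {e}) := hB.indep.subset diff_subset
  have heH : e ∉ H := by
    intro he
    have : N.Indep (insert e (B \ {e})) := by
      rw [insert_diff_singleton, insert_eq_of_mem heB]; exact hB.indep
    rw [hBe.insert_indep_iff_of_notMem (fun h => h.2 rfl)] at this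
    exact this.2 he
  have hdep : N✶.Dep Hᶜ := by
    rw [Matroid.dep_iff]
    refine ⟨fun hco => ?_, by rw [Matroid.dual_ground, hNE]; exact subset_univ _⟩
    obtain ⟨B', hB', hB'sub⟩ := Matroid.Coindep.exists_isBase_subset_compl hco
    have hB'H : B' ⊆ H := by
      intro y hy
      have := hB'sub hy
      rw [hNE] at this
      simpa using this.2
    have : N.E ⊆ H := by
      rw [← hB'.closure_eq, hH]
      exact (N.closure_subset_closure hB'H).trans (by rw [hH, N.closure_closure])
    exact heH (this (by rw [hNE]; trivial))
  refine ⟨hdep, fun D' hdep' hsub => ?_⟩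
  by_contra hne
  obtain ⟨x, hxH, hxD'⟩ := exists_of_ssubset (hsub.ssubset_of_ne hne)
  have hxH' : x ∉ H := hxH
  have hxBe : x ∉ B \ {e} := fun h => hxH' (N.subset_closure _ (by rw [hNE]; exact subset_univ _) h)
  have hind : N.Indep (insert x (B \ {e})) := by
    rw [hBe.insert_indep_iff_of_notMem hxBe]
    exact ⟨by rw [hNE]; trivial, hxH'⟩
  have hbase : N.IsBase (insert x (B \ {e})) := by
    rcases eq_or_ne x e with rfl | hxe
    · rwa [insert_diff_singleton, insert_eq_of_mem heB]
    · have hxB : x ∉ B := fun h => hxBe ⟨h, hxe⟩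
      exact hB.exchange_isBase_of_indep hxB hind
  have hco : N.Coindep D' := by
    rw [Matroid.coindep_iff_exists (by rw [hNE]; exact subset_univ _)]
    refine ⟨_, hbase, fun y hy => ?_⟩
    rw [hNE]
    refine ⟨trivial, fun hyD' => ?_⟩
    rcases hy with rfl | hy
    · exact hxD' hyD'
    · exact (hsub hyD') (N.subset_closure _ (by rw [hNE]; exact subset_univ _) hy)
  exact hdep'.not_indep hco

/-- the complement of a cocircuit is a flat (full ground set) -/
private lemma flat_compl_of_cocircuit {N : Matroid α} (hNE : N.E = univ) {D : Set α}
    (hDdep : N✶.Dep D) (hDmin : ∀ D', N✶.Dep D' → D' ⊆ D → D' = D) : N.IsFlat Dᶜ := by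
  refine flat_of_closure_subset (by rw [hNE]; exact subset_univ _) ?_
  intro x hx
  by_contra hxDc
  rw [Set.notMem_compl_iff] at hxDc
  have h1 : N✶.Dep (D \ {x}) := by
    rw [Matroid.dep_iff]
    refine ⟨fun hco => ?_, by rw [Matroid.dual_ground, hNE]; exact subset_univ _⟩
    obtain ⟨B', hB', hB'sub⟩ := Matroid.Coindep.exists_isBase_subset_compl hco
    have hB'cl : B' ⊆ N.closure Dᶜ := by
      intro y hy
      obtain ⟨-, hy2⟩ := hB'sub hy
      rcases eq_or_ne y x with rfl | hyx
      · exact hx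
      · exact N.subset_closure Dᶜ (by rw [hNE]; exact subset_univ _)
          (fun hyD => hy2 ⟨hyD, hyx⟩)
    have hsp : N.E ⊆ N.closure Dᶜ := by
      rw [← hB'.closure_eq]
      exact (N.closure_subset_closure hB'cl).trans (by rw [N.closure_closure])
    have hsp2 : N.Spanning Dᶜ := by
      rw [Matroid.spanning_iff_closure_eq (by rw [hNE]; exact subset_univ _)]
      exact (N.closure_subset_ground _).antisymm hsp
    obtain ⟨B'', hB'', hB''sub⟩ := hsp2.exists_isBase_subset
    have : N.Coindep D := (Matroid.coindep_iff_exists (by rw [hNE]; exact subset_univ _)).2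
      ⟨B'', hB'', fun y hy => ⟨by rw [hNE]; trivial, fun hyD => (hB''sub hy) hyD⟩⟩
    exact hDdep.not_indep this
  have h2 := hDmin _ h1 diff_subset
  have : x ∈ D \ {x} := h2.symm ▸ hxDc
  exact this.2 rfl

end helpers

/-- Every flat of `N` is a flat of `M` iff no circuit of `M` and cocircuit of `N`
intersect in exactly one element. -/
theorem stmt0 {α : Type*} [Fintype α] (M N : Matroid α)
    (hME : M.E = Set.univ) (hNE : N.E = Set.univ) :
    (∀ F, N.IsFlat F → M.IsFlat F) ↔
      ¬ ∃ C D e, M.IsCircuit' C ∧ N.IsCocircuit' D ∧ C ∩ D = {e} := by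
  constructor
  · rintro h ⟨C, D, e, hC, hD, hCD⟩
    have hflatN : N.IsFlat Dᶜ := flat_compl_of_cocircuit hNE hD.1 hD.2
    have hflatM : M.IsFlat Dᶜ := h _ hflatN
    have heCD : e ∈ C ∩ D := by rw [hCD]; exact rfl
    have heC : e ∈ C := heCD.1
    have heD : e ∈ D := heCD.2
    have hCe : M.Indep (C \ {e}) := by
      by_contra hind
      have hdep : M.Dep (C \ {e}) := ⟨hind, diff_subset.trans hC.1.subset_ground⟩
      have h2 := hC.2 _ hdep diff_subset
      have heC' : e ∈ C \ {e} := by rw [h2]; exact heC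
      exact heC'.2 rfl
    have hecl : e ∈ M.closure (C \ {e}) := by
      have hdepC : M.Dep (insert e (C \ {e})) := by
        rw [insert_diff_singleton, insert_eq_of_mem heC]; exact hC.1
      rw [hCe.insert_dep_iff] at hdepC
      exact hdepC.1
    have hsub : C \ {e} ⊆ Dᶜ := by
      intro x hx hxD
      have hmem : x ∈ C ∩ D := ⟨hx.1, hxD⟩
      rw [hCD] at hmem
      exact hx.2 hmem
    have : e ∈ Dᶜ := hflatM.closure ▸ (M.closure_subset_closure hsub) hecl
    exact this heD
  · intro h F hF
    have hFE : F ⊆ M.E := by rw [hME]; exact Set.subset_univ _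
    refine flat_of_closure_subset hFE ?_
    intro e he
    by_contra heF
    obtain ⟨I, hI⟩ := M.exists_isBasis F hFE
    have heI : e ∉ I := fun h' => heF (hI.subset h')
    have hdep : M.Dep (insert e I) := by
      rw [hI.indep.insert_dep_iff]
      exact ⟨by rwa [hI.closure_eq_closure], heI⟩
    obtain ⟨C, hCsub, hCdep, hCmin⟩ := exists_circuit_subset hdep
    have heC : e ∈ C := by
      by_contra heC
      exact hCdep.not_indep (hI.indep.subset fun x hx =>
        ((hCsub hx).resolve_left (fun h' => heC (h' ▸ hx))))
    obtain ⟨J, hJ⟩ := N.exists_isBasis F (by rw [hNE]; exact Set.subset_univ _)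
    have heJ : e ∉ J := fun h' => heF (hJ.subset h')
    have hindJ : N.Indep (insert e J) := by
      rw [hJ.indep.insert_indep_iff_of_notMem heJ]
      refine ⟨by rw [hNE]; trivial, ?_⟩
      rw [hJ.closure_eq_closure, hF.closure]
      exact heF
    obtain ⟨B, hB, hJB⟩ := hindJ.exists_isBase_superset
    have heB : e ∈ B := hJB (Set.mem_insert _ _)
    obtain ⟨hDdep, hDmin⟩ := compl_closure_cocircuit hNE hB heB
    set D := (N.closure (B \ {e}))ᶜ with hDdef
    have heD : e ∈ D := by
      intro hecl2
      have hBe2 : N.Indep (B \ {e}) := hB.indep.subset Set.diff_subset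
      have hBi : N.Indep (insert e (B \ {e})) := by
        rw [Set.insert_diff_singleton, Set.insert_eq_of_mem heB]; exact hB.indep
      rw [hBe2.insert_indep_iff_of_notMem (fun h' => h'.2 rfl)] at hBi
      exact hBi.2 hecl2
    have hFD : F ⊆ Dᶜ := by
      rw [hDdef, compl_compl]
      have hJBe : J ⊆ B \ {e} := fun x hx => ⟨hJB (Set.mem_insert_of_mem _ hx), fun h' => heJ (h' ▸ hx)⟩
      calc F ⊆ N.closure F := N.subset_closure F (by rw [hNE]; exact Set.subset_univ _)
        _ = N.closure J := hJ.closure_eq_closure.symm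
        _ ⊆ N.closure (B \ {e}) := N.closure_subset_closure hJBe
    apply h
    refine ⟨C, D, e, ⟨hCdep, hCmin⟩, ⟨hDdep, hDmin⟩, ?_⟩
    apply Set.Subset.antisymm
    · rintro x ⟨hxC, hxD⟩
      by_contra hxe
      have hxI : x ∈ I := (hCsub hxC).resolve_left hxe
      exact (hFD (hI.subset hxI)) hxD
    · intro x hx
      rw [Set.mem_singleton_iff] at hx
      subst hx
      exact ⟨heC, heD⟩
end

section
/- Let M→N be a matroid perspective on a finite linearly ordered ground set E. Then for all elements x, u, y, v, z of a commutative ring, the following identity holds: Σ_{A⊆E} (x+u−1)^{r(N)−r_N(A)} · (y+v−1)^{|A|−r_M(A)} · z^{(r(M)−r_M(A))−(r(N)−r_N(A))} = Σ_{A⊆E} x^{|Int_N(A)|} · u^{|P_N(A)|} · y^{|Ext_M(A)|} · v^{|Q_M(A)|} · z^{(r(M)−r_M(A))−(r(N)−r_N(A))}, where all exponents are nonnegative integers (in particular (r(M)−r_M(A))−(r(N)−r_N(A)) ≥ 0 since M→N is a perspective). -/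
set_option linter.unusedSectionVars false

namespace LasVergnas

open Set Matroid

variable {α : Type*} [Fintype α] {M : Matroid α} {A B C D I X Y : Set α} {e f : α}

section RankA

variable (hE : M.E = Set.univ)
include hE

lemma sub_ground (X : Set α) : X ⊆ M.E := by simp [hE]

lemma cl_absorb (h : Y ⊆ M.closure X) : M.closure (X ∪ Y) = M.closure X :=
  subset_antisymm (M.closure_subset_closure_of_subset_closure
      (union_subset (M.subset_closure X (sub_ground hE X)) h))
    (M.closure_subset_closure subset_union_left)

lemma exists_basis'' (A : Set α) : ∃ I, M.IsBasis I A :=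
  M.exists_isBasis A (sub_ground hE A)

lemma rk'_eq_of_basis (hI : M.IsBasis I A) : M.rk' A = I.ncard := by
  have hub : ∀ n ∈ {n : ℕ | ∃ J, J ⊆ A ∧ M.Indep J ∧ J.ncard = n}, n ≤ I.ncard := by
    rintro n ⟨J, hJA, hJind, rfl⟩
    obtain ⟨J', hJ', hJJ'⟩ := hJind.subset_isBasis_of_subset hJA (sub_ground hE A)
    have h1 : J.ncard ≤ J'.ncard := Set.ncard_le_ncard hJJ' (Set.toFinite J')
    have h2 : J'.encard = I.encard := hJ'.encard_eq_encard hI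
    have : J'.ncard = I.ncard := by rw [Set.ncard, Set.ncard, h2]
    omega
  exact le_antisymm (csSup_le ⟨I.ncard, I, hI.subset, hI.indep, rfl⟩ hub)
    (le_csSup ⟨I.ncard, hub⟩ ⟨I, hI.subset, hI.indep, rfl⟩)

lemma rk'_indep (hI : M.Indep I) : M.rk' I = I.ncard :=
  rk'_eq_of_basis hE hI.isBasis_self

lemma rk'_mono (h : A ⊆ B) : M.rk' A ≤ M.rk' B := by
  obtain ⟨I, hI⟩ := exists_basis'' hE A
  obtain ⟨J, hJ, hIJ⟩ := hI.indep.subset_isBasis_of_subset (hI.subset.trans h) (sub_ground hE B)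
  rw [rk'_eq_of_basis hE hI, rk'_eq_of_basis hE hJ]
  exact Set.ncard_le_ncard hIJ (Set.toFinite J)

lemma rk'_eq_of_subset_closure (hAB : A ⊆ B) (hBA : B ⊆ M.closure A) : M.rk' B = M.rk' A := by
  obtain ⟨I, hI⟩ := exists_basis'' hE A
  have hIB : M.IsBasis I B := hI.indep.isBasis_of_subset_of_subset_closure (hI.subset.trans hAB)
    (hBA.trans (by rw [hI.closure_eq_closure]))
  rw [rk'_eq_of_basis hE hI, rk'_eq_of_basis hE hIB]

lemma rk'_spanning (h : M.closure A = Set.univ) : M.rk' A = M.rk' Set.univ :=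
  (rk'_eq_of_subset_closure hE (subset_univ A) (by rw [h])).symm

lemma rk'_insert_of_not_mem_closure (he : e ∉ M.closure A) :
    M.rk' (insert e A) = M.rk' A + 1 := by
  obtain ⟨I, hI⟩ := exists_basis'' hE A
  have heI : e ∉ I := fun h' => he (hI.closure_eq_closure ▸ (M.subset_closure I hI.indep.subset_ground) h' :)
  have hecl : e ∉ M.closure I := by rwa [hI.closure_eq_closure]
  have hind : M.Indep (insert e I) := by
    rw [hI.indep.insert_indep_iff_of_notMem heI]
    exact ⟨by simp [hE], hecl⟩
  have hbasis : M.IsBasis (insert e I) (insert e A) := by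
    refine hind.isBasis_of_subset_of_subset_closure (insert_subset_insert hI.subset) ?_
    refine insert_subset (M.subset_closure _ hind.subset_ground (mem_insert e I)) ?_
    exact fun x hx => (M.closure_subset_closure (subset_insert e I))
      (hI.subset_closure hx)
  rw [rk'_eq_of_basis hE hI, rk'_eq_of_basis hE hbasis,
    Set.ncard_insert_of_notMem heI (Set.toFinite I)]

lemma rk'_diff_singleton (he : e ∈ A) (h : e ∉ M.closure (A \ {e})) :
    M.rk' A = M.rk' (A \ {e}) + 1 := by
  have h1 : insert e (A \ {e}) = A := Set.insert_diff_singleton.trans (by simp [he])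
  have h2 := rk'_insert_of_not_mem_closure hE h
  rw [h1] at h2
  exact h2

end RankA

end LasVergnas

namespace LasVergnas
open Set Matroid
variable {α : Type*} [Fintype α] {M : Matroid α} {A B C D I X Y : Set α} {e f : α}

section CircuitA

variable (hE : M.E = Set.univ)
include hE

lemma exists_circuit_subset_of_dep (hD : M.Dep D) : ∃ C, C ⊆ D ∧ M.IsCircuit' C := by
  classical
  obtain ⟨C, hC, hCmin⟩ := Set.Finite.exists_minimal
    (Set.toFinite {X | M.Dep X ∧ X ⊆ D}) ⟨D, hD, Subset.rfl⟩
  refine ⟨C, hC.2, hC.1, fun D' hD' hsub => ?_⟩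
  exact subset_antisymm hsub (hCmin ⟨hD', hsub.trans hC.2⟩ hsub)

lemma circuit_diff_indep (hC : M.IsCircuit' C) (he : e ∈ C) :
    M.Indep (C \ {e}) := by
  by_contra h
  have hdep : M.Dep (C \ {e}) := dep_of_not_indep h (sub_ground hE _)
  have h2 := hC.2 _ hdep Set.diff_subset
  rw [← h2] at he
  exact he.2 rfl

lemma circuit_mem_closure (hC : M.IsCircuit' C) (he : e ∈ C) :
    e ∈ M.closure (C \ {e}) := by
  have hind := circuit_diff_indep hE hC he
  have hdep : M.Dep (insert e (C \ {e})) := by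
    rw [Set.insert_diff_singleton, Set.insert_eq_of_mem he]
    exact hC.1
  rw [hind.insert_dep_iff] at hdep
  exact hdep.1

lemma exists_circuit_of_mem_closure (he : e ∈ M.closure X) (heX : e ∉ X) :
    ∃ C, M.IsCircuit' C ∧ e ∈ C ∧ C ⊆ insert e X := by
  obtain ⟨I, hI⟩ := exists_basis'' hE X
  have heI : e ∈ M.closure I := by rwa [hI.closure_eq_closure]
  have heI' : e ∉ I := fun h => heX (hI.subset h)
  have hdep : M.Dep (insert e I) := by
    rw [hI.indep.insert_dep_iff]
    exact ⟨heI, heI'⟩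
  obtain ⟨C, hCsub, hC⟩ := exists_circuit_subset_of_dep hE hdep
  refine ⟨C, hC, ?_, hCsub.trans (insert_subset_insert hI.subset)⟩
  by_contra heC
  exact hC.1.not_indep (hI.indep.subset fun x hx =>
    ((hCsub hx).resolve_left (fun h => heC (h ▸ hx))))

lemma mem_closure_of_circuit_subset (hC : M.IsCircuit' C) (he : e ∈ C)
    (hCX : C ⊆ insert e X) : e ∈ M.closure X := by
  have h1 := circuit_mem_closure hE hC he
  refine (M.closure_subset_closure ?_) h1
  intro x hx
  exact ((hCX hx.1).resolve_left hx.2)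

lemma mem_closure_iff_circuit (heX : e ∉ X) :
    e ∈ M.closure X ↔ ∃ C, M.IsCircuit' C ∧ e ∈ C ∧ C ⊆ insert e X :=
  ⟨fun h => exists_circuit_of_mem_closure hE h heX,
   fun ⟨C, hC, heC, hCX⟩ => mem_closure_of_circuit_subset hE hC heC hCX⟩

end CircuitA

section CocircuitA

variable (hE : M.E = Set.univ)
include hE

lemma dual_ground_eq : M✶.E = Set.univ := by rw [Matroid.dual_ground]; exact hE

lemma cocircuit_compl_not_spanning (hD : M✶.Dep D) : M.closure Dᶜ ≠ Set.univ := by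
  intro hcon
  have hsp : M.Spanning Dᶜ := ⟨by rw [hcon, hE], sub_ground hE _⟩
  obtain ⟨B₁, hB₁, hB₁sub⟩ := hsp.exists_isBase_subset
  have hind : M✶.Indep D := by
    rw [dual_indep_iff_exists (sub_ground hE D)]
    exact ⟨B₁, hB₁, Set.disjoint_left.mpr fun x hx hxB => (hB₁sub hxB) hx⟩
  exact hD.not_indep hind

/-- If `e ∉ cl(X)` then there is a cocircuit through `e` disjoint from `X`. -/
lemma exists_cocircuit_of_not_mem_closure (he : e ∉ M.closure X) :
    ∃ D, M.IsCocircuit' D ∧ e ∈ D ∧ D ∩ X = ∅ := by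
  classical
  have heX : e ∉ X := fun h => he (M.subset_closure X (sub_ground hE X) h)
  obtain ⟨I, hI⟩ := exists_basis'' hE X
  have heI : e ∉ M.closure I := by rwa [hI.closure_eq_closure]
  have hinsind : M.Indep (insert e I) := by
    rw [hI.indep.insert_indep_iff_of_notMem (fun h => heX (hI.subset h))]
    exact ⟨by simp [hE], heI⟩
  obtain ⟨B₀, hB₀, hsubB₀⟩ := hinsind.exists_isBase_superset
  set H := M.closure (B₀ \ {e}) with hH
  have heB₀ : e ∈ B₀ := hsubB₀ (mem_insert e I)
  have heH : e ∉ H := by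
    have h2 := (indep_iff_forall_notMem_closure_diff hB₀.indep.subset_ground).mp hB₀.indep
    exact h2 heB₀
  have hIB₀ : I ⊆ B₀ \ {e} := fun y hy =>
    ⟨hsubB₀ (mem_insert_of_mem e hy),
     fun hc => heI (Set.mem_singleton_iff.mp hc ▸ (M.subset_closure I hI.indep.subset_ground hy))⟩
  have hXH : X ⊆ H := fun x hx =>
    M.closure_subset_closure hIB₀ (hI.subset_closure hx)
  have hHclosed : M.closure H = H := M.closure_closure _
  have hHns : H ≠ Set.univ := fun hcon => heH (by rw [hcon]; trivial)
  refine ⟨Hᶜ, ⟨?_, ?_⟩, by simpa using heH, by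
    rw [Set.eq_empty_iff_forall_notMem]; exact fun x hx => hx.1 (hXH hx.2)⟩
  · rw [dep_iff]
    refine ⟨fun hind => ?_, sub_ground (dual_ground_eq hE) _⟩
    rw [dual_indep_iff_exists (sub_ground hE _)] at hind
    obtain ⟨B₁, hB₁, hdisj⟩ := hind
    have hB₁H : B₁ ⊆ H := fun x hx => by
      by_contra hc; exact (Set.disjoint_left.mp hdisj (by simpa using hc)) hx
    have hsp : H = Set.univ := by
      rw [← hE]
      refine subset_antisymm (sub_ground hE _) ?_
      rw [← hB₁.closure_eq, ← hHclosed]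
      exact M.closure_subset_closure hB₁H
    exact hHns hsp
  · intro D' hD' hsub
    by_contra hne
    obtain ⟨g, hgD, hgD'⟩ : ∃ g, g ∈ Hᶜ ∧ g ∉ D' := by
      by_contra hcon
      push_neg at hcon
      exact hne (subset_antisymm hsub hcon)
    have hgH : g ∉ H := hgD
    have hgB : g ∉ B₀ \ {e} := fun h => hgH (M.subset_closure _ (sub_ground hE _) h)
    have hindg : M.Indep (insert g (B₀ \ {e})) := by
      rw [(hB₀.indep.subset Set.diff_subset).insert_indep_iff_of_notMem hgB]
      exact ⟨by simp [hE], hgH⟩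
    obtain ⟨B₂, hB₂, hsubB₂⟩ := hindg.exists_isBase_superset
    have hcards : (insert g (B₀ \ {e})).encard = B₀.encard := by
      rw [Set.encard_insert_of_notMem hgB, Set.encard_diff_singleton_add_one heB₀]
    have hBeq : insert g (B₀ \ {e}) = B₂ := by
      refine Set.Finite.eq_of_subset_of_encard_le' (Set.toFinite _) hsubB₂ ?_
      rw [hB₂.encard_eq_encard_of_isBase hB₀, hcards]
    have hB₂sub : B₂ ⊆ (D')ᶜ := by
      rw [← hBeq]
      rintro x (rfl | hx)
      · exact hgD'
      · intro hc
        exact ((hsub hc) : x ∈ Hᶜ) (M.subset_closure _ (sub_ground hE _) hx)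
    have : M✶.Indep D' := by
      rw [dual_indep_iff_exists (sub_ground hE D')]
      exact ⟨B₂, hB₂, Set.disjoint_left.mpr fun x hx hxB => (hB₂sub hxB) hx⟩
    exact hD'.not_indep this

/-- If `D` is a cocircuit, `e ∈ D`, and `D ∩ X = ∅`, then `e ∉ cl(X)`. -/
lemma not_mem_closure_of_cocircuit (hD : M.IsCocircuit' D) (heD : e ∈ D)
    (hdisj : D ∩ X = ∅) : e ∉ M.closure X := by
  have hns := cocircuit_compl_not_spanning hE hD.1
  -- D \ {e} is coindependent
  have hDe : M✶.Indep (D \ {e}) := by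
    by_contra h
    have hdep : M✶.Dep (D \ {e}) := dep_of_not_indep h (sub_ground (dual_ground_eq hE) _)
    have h2 := hD.2 _ hdep Set.diff_subset
    rw [← h2] at heD
    exact heD.2 rfl
  rw [dual_indep_iff_exists (sub_ground hE _)] at hDe
  obtain ⟨B₁, hB₁, hdisjB⟩ := hDe
  have hB₁sub : B₁ ⊆ Dᶜ ∪ {e} := by
    intro x hx
    by_cases hxD : x ∈ D
    · by_cases hxe : x = e
      · exact Or.inr (by simp [hxe])
      · exact absurd (⟨hxD, hxe⟩ : x ∈ D \ {e}) (Set.disjoint_right.mp hdisjB hx)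
    · exact Or.inl hxD
  -- e ∉ cl(Dᶜ)
  have hecl : e ∉ M.closure Dᶜ := by
    intro hecl
    have hsub2 : B₁ ⊆ M.closure Dᶜ := fun x hx => by
      rcases hB₁sub hx with h | h
      · exact M.subset_closure _ (sub_ground hE _) h
      · rw [Set.mem_singleton_iff] at h; rw [h]; exact hecl
    have : M.closure Dᶜ = Set.univ := by
      rw [← hE]
      refine subset_antisymm (sub_ground hE _) ?_
      rw [← hB₁.closure_eq]
      exact M.closure_subset_closure_of_subset_closure hsub2
    exact hns this
  intro hecon
  have hXD : X ⊆ Dᶜ := fun x hx hxD =>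
    (Set.eq_empty_iff_forall_notMem.mp hdisj x) ⟨hxD, hx⟩
  exact hecl (M.closure_subset_closure hXD hecon)

end CocircuitA
end LasVergnas
namespace LasVergnas
open Set Matroid
variable {α : Type*} [Fintype α] [LinearOrder α] {M N : Matroid α} {A B C D I X Y : Set α} {e f : α}

section Activities

variable (hE : M.E = Set.univ)
include hE

lemma mem_IntSet_iff (he : e ∈ A) :
    e ∈ IntSet M A ↔ e ∉ M.closure ((A \ {e}) ∪ Set.Iio e) := by
  constructor
  · rintro ⟨-, D, hD, hDsub, heD, hmin⟩
    refine not_mem_closure_of_cocircuit hE hD heD ?_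
    rw [Set.eq_empty_iff_forall_notMem]
    rintro x ⟨hxD, hx⟩
    rcases hx with ⟨hxA, hxe⟩ | hxlt
    · rcases hDsub hxD with h | h
      · exact h hxA
      · exact hxe h
    · exact absurd (hmin x hxD) (not_le.mpr hxlt)
  · intro h
    obtain ⟨D, hD, heD, hdisj⟩ := exists_cocircuit_of_not_mem_closure hE h
    refine ⟨he, D, hD, ?_, heD, ?_⟩
    · intro x hxD
      by_cases hxA : x ∈ A
      · right
        by_contra hxe
        exact (Set.eq_empty_iff_forall_notMem.mp hdisj x) ⟨hxD, Or.inl ⟨hxA, hxe⟩⟩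
      · exact Or.inl hxA
    · intro x hxD
      by_contra hlt
      exact (Set.eq_empty_iff_forall_notMem.mp hdisj x) ⟨hxD, Or.inr (not_le.mp hlt)⟩

lemma mem_PActSet_iff (he : e ∉ A) :
    e ∈ PActSet M A ↔ e ∉ M.closure (A ∪ Set.Iio e) := by
  constructor
  · rintro ⟨-, D, hD, hDsub, heD, hmin⟩
    refine not_mem_closure_of_cocircuit hE hD heD ?_
    rw [Set.eq_empty_iff_forall_notMem]
    rintro x ⟨hxD, hx⟩
    rcases hx with hxA | hxlt
    · exact (hDsub hxD) hxA
    · exact absurd (hmin x hxD) (not_le.mpr hxlt)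
  · intro h
    obtain ⟨D, hD, heD, hdisj⟩ := exists_cocircuit_of_not_mem_closure hE h
    refine ⟨he, D, hD, ?_, heD, ?_⟩
    · intro x hxD hxA
      exact (Set.eq_empty_iff_forall_notMem.mp hdisj x) ⟨hxD, Or.inl hxA⟩
    · intro x hxD
      by_contra hlt
      exact (Set.eq_empty_iff_forall_notMem.mp hdisj x) ⟨hxD, Or.inr (not_le.mp hlt)⟩

lemma mem_ExtSet_iff (he : e ∉ A) :
    e ∈ ExtSet M A ↔ e ∈ M.closure (A ∩ Set.Ioi e) := by
  have heX : e ∉ A ∩ Set.Ioi e := fun h => absurd h.2 (lt_irrefl e)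
  constructor
  · rintro ⟨-, C, hC, hCsub, heC, hmin⟩
    refine mem_closure_of_circuit_subset hE hC heC ?_
    intro x hxC
    rcases hCsub hxC with hxA | hxe
    · by_cases hxeq : x = e
      · exact Or.inl hxeq
      · exact Or.inr ⟨hxA, lt_of_le_of_ne (hmin x hxC) (Ne.symm hxeq)⟩
    · exact Or.inl hxe
  · intro h
    obtain ⟨C, hC, heC, hCsub⟩ := exists_circuit_of_mem_closure hE h heX
    refine ⟨he, C, hC, ?_, heC, ?_⟩
    · intro x hxC
      rcases hCsub hxC with hxe | hx
      · exact Or.inr hxe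
      · exact Or.inl hx.1
    · intro x hxC
      rcases hCsub hxC with hxe | hx
      · exact le_of_eq hxe.symm
      · exact le_of_lt hx.2

lemma mem_QActSet_iff (he : e ∈ A) :
    e ∈ QActSet M A ↔ e ∈ M.closure (A ∩ Set.Ioi e) := by
  have heX : e ∉ A ∩ Set.Ioi e := fun h => absurd h.2 (lt_irrefl e)
  constructor
  · rintro ⟨-, C, hC, hCsub, heC, hmin⟩
    refine mem_closure_of_circuit_subset hE hC heC ?_
    intro x hxC
    by_cases hxeq : x = e
    · exact Or.inl hxeq
    · exact Or.inr ⟨hCsub hxC, lt_of_le_of_ne (hmin x hxC) (Ne.symm hxeq)⟩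
  · intro h
    obtain ⟨C, hC, heC, hCsub⟩ := exists_circuit_of_mem_closure hE h heX
    refine ⟨he, C, hC, ?_, heC, ?_⟩
    · intro x hxC
      rcases hCsub hxC with hxe | hx
      · exact hxe ▸ he
      · exact hx.1
    · intro x hxC
      rcases hCsub hxC with hxe | hx
      · exact le_of_eq hxe.symm
      · exact le_of_lt hx.2

end Activities

/-- The key perspective property in closure form. -/
lemma closure_subset_closure_of_flats (hME : M.E = Set.univ) (hNE : N.E = Set.univ)
    (hMN : ∀ F, N.IsFlat F → M.IsFlat F) (X : Set α) : M.closure X ⊆ N.closure X := by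
  rw [Matroid.closure_def, Matroid.closure_def]
  intro x hx
  intro F hF
  simp only [Set.mem_setOf_eq] at hF
  exact hx F ⟨hMN F hF.1, by rw [hME]; rw [hNE] at hF; exact hF.2⟩

end LasVergnas
namespace LasVergnas
open Set Matroid
variable {α : Type*} [Fintype α] [LinearOrder α] {M N : Matroid α} {B S T A X Y : Set α} {e f : α}

/-- The data of a "pseudobasis with active subsets" for a matroid perspective. -/
structure IVD (M N : Matroid α) (B S T : Set α) : Prop where
  hBi : M.Indep B
  hBs : N.closure B = Set.univ
  hS : S ⊆ B
  hSa : ∀ s ∈ S, s ∉ N.closure ((B \ {s}) ∪ Set.Iio s)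
  hTB : ∀ t ∈ T, t ∉ B
  hTa : ∀ t ∈ T, t ∈ M.closure (B ∩ Set.Ioi t)

section Interval

variable (hME : M.E = Set.univ) (hNE : N.E = Set.univ)
  (clMN : ∀ X : Set α, M.closure X ⊆ N.closure X)
  (h : IVD M N B S T)
include hME hNE clMN h

/-- Key exchange lemma: externally-spanned elements stay spanned after deleting `S`. -/
lemma iv_K1 (heB : e ∉ B) (hecl : e ∈ M.closure (B ∩ Set.Ioi e)) :
    e ∈ M.closure ((B \ S) ∩ Set.Ioi e) := by
  refine Set.Finite.induction_on_subset (motive := fun S' _ => e ∈ M.closure ((B \ S') ∩ Set.Ioi e))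
    S (Set.toFinite S) ?_ ?_
  · simpa using hecl
  · intro a S' haS hS'S haS' hIH
    by_cases hmem : e ∈ M.closure ((B \ insert a S') ∩ Set.Ioi e)
    · exact hmem
    exfalso
    set X := (B \ insert a S') ∩ Set.Ioi e with hX
    have h1 : (B \ S') ∩ Set.Ioi e ⊆ insert a X := by
      rintro x ⟨⟨hxB, hxS'⟩, hxe⟩
      by_cases hxa : x = a
      · exact Or.inl hxa
      · exact Or.inr ⟨⟨hxB, fun hc => hc.elim hxa hxS'⟩, hxe⟩
    have h2 : e ∈ M.closure (insert a X) := M.closure_subset_closure h1 hIH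
    have hex := Matroid.closure_exchange (M := M) ⟨h2, hmem⟩
    have hea : e < a := by
      by_contra hlt
      have : (B \ S') ∩ Set.Ioi e ⊆ X := by
        rintro x ⟨⟨hxB, hxS'⟩, hxe⟩
        refine ⟨⟨hxB, fun hc => ?_⟩, hxe⟩
        rcases hc with rfl | hc
        · exact hlt hxe
        · exact hxS' hc
      exact hmem (M.closure_subset_closure this hIH)
    have hsub2 : insert e X ⊆ (B \ {a}) ∪ Set.Iio a := by
      rintro x (rfl | ⟨⟨hxB, hxa⟩, _⟩)
      · exact Or.inr hea
      · exact Or.inl ⟨hxB, fun hc => hxa (Or.inl (Set.mem_singleton_iff.mp hc))⟩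
    exact h.hSa a haS (N.closure_subset_closure hsub2 (clMN _ hex.1))

lemma iv_K3a (htT : f ∈ T) (hsS : e ∈ S) :
    f ∈ N.closure ((B \ {e}) ∪ Set.Iio e) := by
  rcases lt_trichotomy f e with hlt | heq | hgt
  · exact N.subset_closure _ (sub_ground hNE _) (Or.inr hlt)
  · exact absurd (heq ▸ h.hS hsS) (h.hTB f htT)
  · refine N.closure_subset_closure (?_ : B ∩ Set.Ioi f ⊆ (B \ {e}) ∪ Set.Iio e)
      (clMN _ (h.hTa f htT))
    rintro x ⟨hxB, hxf⟩
    exact Or.inl ⟨hxB, fun hc => absurd (Set.mem_singleton_iff.mp hc ▸ hxf) (not_lt.mpr (le_of_lt hgt))⟩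

/-- `P`-activity, easy inclusion: elements of `S` are not spanned. -/
lemma iv_P_sup (hsS : e ∈ S) :
    e ∉ N.closure (((B \ S) ∪ T) ∪ Set.Iio e) := by
  intro hcon
  have hTcl : T ⊆ N.closure ((B \ {e}) ∪ Set.Iio e) := fun t ht => iv_K3a hME hNE clMN h ht hsS
  have habs : N.closure (((B \ {e}) ∪ Set.Iio e) ∪ T) = N.closure ((B \ {e}) ∪ Set.Iio e) :=
    cl_absorb hNE hTcl
  have hsub : ((B \ S) ∪ T) ∪ Set.Iio e ⊆ ((B \ {e}) ∪ Set.Iio e) ∪ T := by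
    rintro x ((⟨hxB, hxS⟩ | hxT) | hxlt)
    · exact Or.inl (Or.inl ⟨hxB, fun hc => hxS (Set.mem_singleton_iff.mp hc ▸ hsS)⟩)
    · exact Or.inr hxT
    · exact Or.inl (Or.inr hxlt)
  exact h.hSa e hsS (habs ▸ N.closure_subset_closure hsub hcon)

/-- The exchange-reduction lemma: `S`-elements above `e` can be removed from a spanning set. -/
lemma iv_Kx (hA : A = (B \ S) ∪ T) :
    ∀ (S' : Set α), S' ⊆ S → (∀ x ∈ S', e < x) →
      e ∈ N.closure (((A \ {e}) ∪ Set.Iio e) ∪ S') → e ∈ N.closure ((A \ {e}) ∪ Set.Iio e) := by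
  subst hA
  set base := ((((B \ S) ∪ T) \ {e}) ∪ Set.Iio e) with hbase
  have main : ∀ (n : ℕ) (S' : Set α), S'.ncard = n → S' ⊆ S → (∀ x ∈ S', e < x) →
      e ∈ N.closure (base ∪ S') → e ∈ N.closure base := by
    intro n
    induction n using Nat.strong_induction_on with
    | _ n IH =>
      intro S' hcard hsub hgt hmem
      rcases Set.eq_empty_or_nonempty S' with rfl | hne
      · simpa using hmem
      obtain ⟨s, hsS', hmax⟩ := Set.exists_max_image S' id (Set.toFinite S') hne
      by_cases h' : e ∈ N.closure (base ∪ (S' \ {s}))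
      · exact IH (S' \ {s}).ncard (hcard ▸ Set.ncard_diff_singleton_lt_of_mem hsS')
          (S' \ {s}) rfl (Set.diff_subset.trans hsub) (fun x hx => hgt x hx.1) h'
      exfalso
      have hun : base ∪ S' = insert s (base ∪ (S' \ {s})) := by
        ext x
        constructor
        · rintro (hx | hx)
          · exact Or.inr (Or.inl hx)
          · by_cases hxs : x = s
            · exact Or.inl hxs
            · exact Or.inr (Or.inr ⟨hx, hxs⟩)
        · rintro (rfl | (hx | hx))
          · exact Or.inr hsS'
          · exact Or.inl hx
          · exact Or.inr hx.1
      rw [hun] at hmem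
      have hex := Matroid.closure_exchange (M := N) ⟨hmem, h'⟩
      have hes : e < s := hgt s hsS'
      have hsub2 : insert e (base ∪ (S' \ {s})) ⊆ ((B \ S) ∪ T) ∪ Set.Iio s := by
        rintro x (rfl | (hx | hx))
        · exact Or.inr hes
        · rcases hx with hx | hx
          · exact Or.inl hx.1
          · exact Or.inr (hx.trans hes)
        · exact Or.inr (lt_of_le_of_ne (hmax x hx.1) hx.2)
      exact iv_P_sup hME hNE clMN h (hsub hsS')
        (N.closure_subset_closure hsub2 hex.1)
  exact fun S' h1 h2 h3 => main S'.ncard S' rfl h1 h2 h3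

lemma iv_S_sub : S ⊆ IntSet N B :=
  fun s hs => (mem_IntSet_iff hNE (h.hS hs)).mpr (h.hSa s hs)

lemma iv_T_sub : T ⊆ ExtSet M B :=
  fun t ht => (mem_ExtSet_iff hME (h.hTB t ht)).mpr (h.hTa t ht)

lemma iv_Q_eq : QActSet M ((B \ S) ∪ T) = T := by
  apply subset_antisymm
  · rintro e ⟨heA, hact⟩
    have hchar := (mem_QActSet_iff hME heA).mp ⟨heA, hact⟩
    by_contra heT
    have heBS : e ∈ B \ S := heA.resolve_right heT
    -- everything in A ∩ Ioi e is in the closure of (B \ {e}) ∩ Ioi e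
    have hsub : ((B \ S) ∪ T) ∩ Set.Ioi e ⊆ M.closure ((B \ {e}) ∩ Set.Ioi e) := by
      rintro x ⟨hx, hxe⟩
      rcases hx with ⟨hxB, -⟩ | hxT
      · exact M.subset_closure _ (sub_ground hME _)
          ⟨⟨hxB, fun hc => absurd (Set.mem_singleton_iff.mp hc ▸ hxe) (lt_irrefl e)⟩, hxe⟩
      · refine M.closure_subset_closure (?_ : B ∩ Set.Ioi x ⊆ (B \ {e}) ∩ Set.Ioi e)
          (h.hTa x hxT)
        rintro y ⟨hyB, hyx⟩
        exact ⟨⟨hyB, fun hc => absurd (Set.mem_singleton_iff.mp hc ▸ (hxe.trans hyx))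
          (lt_irrefl e)⟩, hxe.trans hyx⟩
    have hecl : e ∈ M.closure (B \ {e}) := by
      have h1 := M.closure_subset_closure_of_subset_closure hsub hchar
      exact M.closure_subset_closure (Set.inter_subset_left) h1
    exact ((indep_iff_forall_notMem_closure_diff (h.hBi.subset_ground)).mp h.hBi)
      heBS.1 hecl
  · intro t htT
    have htA : t ∈ (B \ S) ∪ T := Or.inr htT
    refine (mem_QActSet_iff hME htA).mpr ?_
    refine M.closure_subset_closure (Set.inter_subset_inter_left _ ?_)
      (iv_K1 hME hNE clMN h (h.hTB t htT) (h.hTa t htT))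
    exact Set.subset_union_left

lemma iv_P_eq : PActSet N ((B \ S) ∪ T) = S := by
  apply subset_antisymm
  · rintro e ⟨heA, hact⟩
    have hchar := (mem_PActSet_iff hNE heA).mp ⟨heA, hact⟩
    by_contra heS
    have heB : e ∉ B := fun heB => heA (Or.inl ⟨heB, heS⟩)
    have hecl : e ∈ N.closure B := by rw [h.hBs]; trivial
    have hsub : B ⊆ ((((B \ S) ∪ T) \ {e}) ∪ Set.Iio e) ∪ (S ∩ Set.Ioi e) := by
      intro x hxB
      by_cases hxS : x ∈ S
      · rcases lt_trichotomy x e with hlt | rfl | hgt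
        · exact Or.inl (Or.inr hlt)
        · exact absurd hxB heB
        · exact Or.inr ⟨hxS, hgt⟩
      · refine Or.inl (Or.inl ⟨Or.inl ⟨hxB, hxS⟩, ?_⟩)
        intro hc
        exact heB (Set.mem_singleton_iff.mp hc ▸ hxB)
    have h2 := iv_Kx hME hNE clMN h rfl (S ∩ Set.Ioi e) Set.inter_subset_left
      (fun x hx => hx.2) (N.closure_subset_closure hsub hecl)
    rw [Set.diff_singleton_eq_self heA] at h2
    exact hchar h2
  · intro s hsS
    have hsA : s ∉ (B \ S) ∪ T := by
      rintro (⟨-, hs⟩ | hsT)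
      · exact hs hsS
      · exact h.hTB s hsT (h.hS hsS)
    refine (mem_PActSet_iff hNE hsA).mpr (iv_P_sup hME hNE clMN h hsS)

lemma iv_I_eq : IntSet N ((B \ S) ∪ T) = IntSet N B \ S := by
  apply subset_antisymm
  · rintro e ⟨heA, hact⟩
    have hchar := (mem_IntSet_iff hNE heA).mp ⟨heA, hact⟩
    -- first, e ∉ T
    have heT : e ∉ T := by
      intro heT
      have h1 : B ∩ Set.Ioi e ⊆
          ((((B \ S) ∪ T) \ {e}) ∪ Set.Iio e) ∪ (S ∩ Set.Ioi e) := by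
        rintro x ⟨hxB, hxe⟩
        by_cases hxS : x ∈ S
        · exact Or.inr ⟨hxS, hxe⟩
        · exact Or.inl (Or.inl ⟨Or.inl ⟨hxB, hxS⟩,
            fun hc => absurd (Set.mem_singleton_iff.mp hc ▸ hxe) (lt_irrefl e)⟩)
      have h2 := iv_Kx hME hNE clMN h rfl (S ∩ Set.Ioi e) Set.inter_subset_left
        (fun x hx => hx.2)
        (N.closure_subset_closure h1 (clMN _ (h.hTa e heT)))
      exact hchar h2
    have heBS : e ∈ B \ S := heA.resolve_right heT
    refine ⟨(mem_IntSet_iff hNE heBS.1).mpr ?_, heBS.2⟩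
    intro hcon
    have h1 : (B \ {e}) ∪ Set.Iio e ⊆
        ((((B \ S) ∪ T) \ {e}) ∪ Set.Iio e) ∪ (S ∩ Set.Ioi e) := by
      rintro x (⟨hxB, hxe⟩ | hxlt)
      · by_cases hxS : x ∈ S
        · rcases lt_trichotomy x e with hlt | rfl | hgt
          · exact Or.inl (Or.inr hlt)
          · exact absurd rfl hxe
          · exact Or.inr ⟨hxS, hgt⟩
        · exact Or.inl (Or.inl ⟨Or.inl ⟨hxB, hxS⟩, hxe⟩)
      · exact Or.inl (Or.inr hxlt)
    have h2 := iv_Kx hME hNE clMN h rfl (S ∩ Set.Ioi e) Set.inter_subset_left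
      (fun x hx => hx.2) (N.closure_subset_closure h1 hcon)
    exact hchar h2
  · rintro e ⟨heI, heS⟩
    have heB := heI.1
    have hchar := (mem_IntSet_iff hNE heB).mp heI
    have heA : e ∈ (B \ S) ∪ T := Or.inl ⟨heB, heS⟩
    refine (mem_IntSet_iff hNE heA).mpr ?_
    intro hcon
    have hsub : (((B \ S) ∪ T) \ {e}) ∪ Set.Iio e ⊆
        N.closure ((B \ {e}) ∪ Set.Iio e) := by
      rintro x (⟨hx, hxe⟩ | hxlt)
      · rcases hx with ⟨hxB, -⟩ | hxT
        · exact N.subset_closure _ (sub_ground hNE _) (Or.inl ⟨hxB, hxe⟩)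
        · rcases lt_trichotomy x e with hlt | rfl | hgt
          · exact N.subset_closure _ (sub_ground hNE _) (Or.inr hlt)
          · exact absurd rfl hxe
          · refine N.closure_subset_closure
              (?_ : B ∩ Set.Ioi x ⊆ (B \ {e}) ∪ Set.Iio e) (clMN _ (h.hTa x hxT))
            rintro y ⟨hyB, hyx⟩
            exact Or.inl ⟨hyB, fun hc => absurd (Set.mem_singleton_iff.mp hc ▸ (hgt.trans hyx))
              (lt_irrefl e)⟩
      · exact N.subset_closure _ (sub_ground hNE _) (Or.inr hxlt)
    exact hchar (N.closure_subset_closure_of_subset_closure hsub hcon)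

lemma iv_X_eq : ExtSet M ((B \ S) ∪ T) = ExtSet M B \ T := by
  apply subset_antisymm
  · rintro e ⟨heA, hact⟩
    have hchar := (mem_ExtSet_iff hME heA).mp ⟨heA, hact⟩
    have heT : e ∉ T := fun heT => heA (Or.inr heT)
    have hBcl : e ∈ M.closure (B ∩ Set.Ioi e) := by
      have hsub : ((B \ S) ∪ T) ∩ Set.Ioi e ⊆ M.closure (B ∩ Set.Ioi e) := by
        rintro x ⟨hx, hxe⟩
        rcases hx with ⟨hxB, -⟩ | hxT
        · exact M.subset_closure _ (sub_ground hME _) ⟨hxB, hxe⟩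
        · refine M.closure_subset_closure (?_ : B ∩ Set.Ioi x ⊆ B ∩ Set.Ioi e)
            (h.hTa x hxT)
          rintro y ⟨hyB, hyx⟩
          exact ⟨hyB, hxe.trans hyx⟩
      exact M.closure_subset_closure_of_subset_closure hsub hchar
    have heB : e ∉ B := by
      intro heB
      have heS : e ∈ S := by
        by_contra heS
        exact heA (Or.inl ⟨heB, heS⟩)
      refine h.hSa e heS (N.closure_subset_closure
        (?_ : B ∩ Set.Ioi e ⊆ (B \ {e}) ∪ Set.Iio e) (clMN _ hBcl))
      rintro y ⟨hyB, hye⟩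
      exact Or.inl ⟨hyB, fun hc => absurd (Set.mem_singleton_iff.mp hc ▸ hye) (lt_irrefl e)⟩
    exact ⟨(mem_ExtSet_iff hME heB).mpr hBcl, heT⟩
  · rintro e ⟨heX, heT⟩
    have heB := heX.1
    have hchar := (mem_ExtSet_iff hME heB).mp heX
    have heA : e ∉ (B \ S) ∪ T := by
      rintro (⟨hx, -⟩ | hx)
      · exact heB hx
      · exact heT hx
    refine (mem_ExtSet_iff hME heA).mpr ?_
    refine M.closure_subset_closure (Set.inter_subset_inter_left _ Set.subset_union_left)
      (iv_K1 hME hNE clMN h heB hchar)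

lemma iv_rkM : M.rk' ((B \ S) ∪ T) + S.ncard = B.ncard := by
  have hind : M.Indep (B \ S) := h.hBi.subset Set.diff_subset
  have hTcl : T ⊆ M.closure (B \ S) := by
    intro t ht
    exact M.closure_subset_closure Set.inter_subset_left
      (iv_K1 hME hNE clMN h (h.hTB t ht) (h.hTa t ht))
  have h1 : M.rk' ((B \ S) ∪ T) = M.rk' (B \ S) :=
    rk'_eq_of_subset_closure hME Set.subset_union_left
      (Set.union_subset (M.subset_closure _ (sub_ground hME _)) hTcl)
  rw [h1, rk'_indep hME hind, Set.ncard_diff h.hS (Set.toFinite S)]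
  have := Set.ncard_le_ncard h.hS (Set.toFinite B)
  omega

lemma iv_rkN : N.rk' ((B \ S) ∪ T) + S.ncard = N.rk' Set.univ := by
  have hstep : ∀ (S' : Set α), S' ⊆ S → N.rk' ((B \ S') ∪ T) + S'.ncard = N.rk' (B ∪ T) := by
    intro S''
    refine Set.Finite.induction_on_subset
      (motive := fun S' _ => S' ⊆ S → N.rk' ((B \ S') ∪ T) + S'.ncard = N.rk' (B ∪ T))
      S'' (Set.toFinite S'') ?_ ?_
    · intro _; simp
    · intro a S' haS'' hS'sub haS' hIH hsub
      have haS : a ∈ S := hsub (mem_insert a S')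
      have hS'S : S' ⊆ S := (subset_insert a S').trans hsub
      have haB : a ∈ B := h.hS haS
      have haT : a ∉ T := h.hTB a |>.mt (fun hc => hc haB) |> fun f => by
        intro hT; exact (h.hTB a hT) haB
      have hunion : (B \ S') ∪ T = insert a ((B \ insert a S') ∪ T) := by
        ext x
        constructor
        · rintro (⟨hxB, hxS'⟩ | hxT)
          · by_cases hxa : x = a
            · exact Or.inl hxa
            · exact Or.inr (Or.inl ⟨hxB, fun hc => hc.elim hxa hxS'⟩)
          · exact Or.inr (Or.inr hxT)
        · rintro (rfl | (hx | hx))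
          · exact Or.inl ⟨haB, haS'⟩
          · exact Or.inl ⟨hx.1, fun hc => hx.2 (Or.inr hc)⟩
          · exact Or.inr hx
      have hnotcl : a ∉ N.closure ((B \ insert a S') ∪ T) := by
        intro hcon
        have hTcl : T ⊆ N.closure ((B \ {a}) ∪ Set.Iio a) :=
          fun t ht => iv_K3a hME hNE clMN h ht haS
        have habs : N.closure (((B \ {a}) ∪ Set.Iio a) ∪ T) =
            N.closure ((B \ {a}) ∪ Set.Iio a) := cl_absorb hNE hTcl
        have hsub2 : (B \ insert a S') ∪ T ⊆ ((B \ {a}) ∪ Set.Iio a) ∪ T := by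
          rintro x (⟨hxB, hxS⟩ | hxT)
          · exact Or.inl (Or.inl ⟨hxB, fun hc => hxS (Or.inl (Set.mem_singleton_iff.mp hc))⟩)
          · exact Or.inr hxT
        exact h.hSa a haS (habs ▸ N.closure_subset_closure hsub2 hcon)
      have hrk := rk'_insert_of_not_mem_closure hNE hnotcl
      rw [← hunion] at hrk
      have hcard : (insert a S').ncard = S'.ncard + 1 :=
        Set.ncard_insert_of_notMem haS' (Set.toFinite S')
      have hIH' := hIH hS'S
      omega
  have hspan : N.rk' (B ∪ T) = N.rk' Set.univ := by
    refine rk'_spanning hNE ?_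
    refine subset_antisymm (by rw [← hNE]; exact N.closure_subset_ground _) ?_
    rw [← h.hBs]
    exact N.closure_subset_closure Set.subset_union_left
  rw [← hspan]
  exact hstep S Subset.rfl

lemma iv_B_le : B.ncard ≤ M.rk' Set.univ := by
  have := rk'_mono hME (Set.subset_univ B)
  rwa [rk'_indep hME h.hBi] at this

omit h in
lemma ivd_of_subsets (hBi : M.Indep B) (hBs : N.closure B = Set.univ)
    (hS : S ⊆ IntSet N B) (hT : T ⊆ ExtSet M B) : IVD M N B S T where
  hBi := hBi
  hBs := hBs
  hS := fun s hs => (hS hs).1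
  hSa := fun s hs => (mem_IntSet_iff hNE (hS hs).1).mp (hS hs)
  hTB := fun t ht => (hT ht).1
  hTa := fun t ht => (mem_ExtSet_iff hME (hT ht).1).mp (hT ht)

lemma iv_recover :
    ((((B \ S) ∪ T) \ QActSet M ((B \ S) ∪ T)) ∪ PActSet N ((B \ S) ∪ T)) = B := by
  rw [iv_Q_eq hME hNE clMN h, iv_P_eq hME hNE clMN h]
  ext x
  constructor
  · rintro (⟨hx | hx, hxT⟩ | hxS)
    · exact hx.1
    · exact absurd hx hxT
    · exact h.hS hxS
  · intro hxB
    by_cases hxS : x ∈ S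
    · exact Or.inr hxS
    · exact Or.inl ⟨Or.inl ⟨hxB, hxS⟩, fun hc => h.hTB x hc hxB⟩

end Interval

section Greedy

/-- The greedy pseudobasis membership predicate, by downward recursion. -/
noncomputable def memB (M N : Matroid α) (A : Set α) : α → Prop :=
  (Finite.to_wellFoundedGT (α := α)).wf.fix
    (fun e rec =>
      (e ∈ A ∧ e ∉ M.closure {f | ∃ h : e < f, rec f h}) ∨
      (e ∉ A ∧ e ∉ N.closure ({f | ∃ h : e < f, rec f h} ∪ Set.Iio e)))

lemma memB_iff (M N : Matroid α) (A : Set α) (e : α) :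
    memB M N A e ↔
      (e ∈ A ∧ e ∉ M.closure ({f | memB M N A f} ∩ Set.Ioi e)) ∨
      (e ∉ A ∧ e ∉ N.closure (({f | memB M N A f} ∩ Set.Ioi e) ∪ Set.Iio e)) := by
  have hset : {f | ∃ h : e < f, memB M N A f} = {f | memB M N A f} ∩ Set.Ioi e := by
    ext f
    exact ⟨fun ⟨h1, h2⟩ => ⟨h2, h1⟩, fun ⟨h1, h2⟩ => ⟨h2, h1⟩⟩
  conv_lhs => rw [memB, WellFounded.fix_eq]
  show (e ∈ A ∧ e ∉ M.closure {f | ∃ _ : e < f, memB M N A f}) ∨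
      (e ∉ A ∧ e ∉ N.closure ({f | ∃ _ : e < f, memB M N A f} ∪ Set.Iio e)) ↔ _
  rw [show {f | ∃ _ : e < f, memB M N A f} = {f | memB M N A f} ∩ Set.Ioi e from hset]

variable (hME : M.E = Set.univ) (hNE : N.E = Set.univ)
  (clMN : ∀ X : Set α, M.closure X ⊆ N.closure X)
include hME hNE clMN

lemma indep_of_forall_Ioi (hI : ∀ e ∈ X, e ∉ M.closure (X ∩ Set.Ioi e)) : M.Indep X := by
  have main : ∀ (n : ℕ) (J : Set α), J.ncard = n → J ⊆ X → M.Indep J := by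
    intro n
    induction n using Nat.strong_induction_on with
    | _ n IH =>
      intro J hcard hsub
      rcases Set.eq_empty_or_nonempty J with rfl | hne
      · exact M.empty_indep
      obtain ⟨m, hmJ, hmin⟩ := Set.exists_min_image J id (Set.toFinite J) hne
      have hJm : M.Indep (J \ {m}) := IH (J \ {m}).ncard
        (hcard ▸ Set.ncard_diff_singleton_lt_of_mem hmJ) _ rfl (Set.diff_subset.trans hsub)
      have hmcl : m ∉ M.closure (J \ {m}) := by
        intro hcon
        refine hI m (hsub hmJ) (M.closure_subset_closure ?_ hcon)
        rintro y ⟨hyJ, hym⟩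
        exact ⟨hsub hyJ, lt_of_le_of_ne (hmin y hyJ) (fun hc => hym (Set.mem_singleton_iff.mpr hc.symm))⟩
      have hmm : m ∉ J \ {m} := fun hc => hc.2 rfl
      have := (hJm.insert_indep_iff_of_notMem hmm).mpr ⟨by simp [hME], hmcl⟩
      rwa [Set.insert_diff_singleton, Set.insert_eq_of_mem hmJ] at this
  exact main X.ncard X rfl Subset.rfl

lemma greedy_ivd (A : Set α) :
    IVD M N {f | memB M N A f} ({f | memB M N A f} \ A) (A \ {f | memB M N A f}) := by
  set Bg := {f | memB M N A f} with hBg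
  have hBind : M.Indep Bg := by
    refine indep_of_forall_Ioi hME hNE clMN ?_
    intro e heB
    rcases (memB_iff M N A e).mp heB with ⟨-, hcl⟩ | ⟨-, hcl⟩
    · exact hcl
    · intro hcon
      exact hcl (clMN _ (M.closure_subset_closure Set.subset_union_left hcon))
  have hspan : ∀ e, e ∈ N.closure Bg := by
    intro e
    induction e using ((Finite.to_wellFoundedLT (α := α)).wf).induction with
    | _ e IH =>
      by_cases heB : e ∈ Bg
      · exact N.subset_closure _ (sub_ground hNE _) heB
      have hnot := (memB_iff M N A e).not.mp heB
      push_neg at hnot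
      by_cases heA : e ∈ A
      · exact N.closure_subset_closure Set.inter_subset_left (clMN _ (hnot.1 heA))
      · refine N.closure_subset_closure_of_subset_closure ?_ (hnot.2 heA)
        rintro x (⟨hx, -⟩ | hx)
        · exact N.subset_closure _ (sub_ground hNE _) hx
        · exact IH x hx
  refine ⟨hBind, subset_antisymm (by rw [← hNE]; exact N.closure_subset_ground _)
    (fun e _ => hspan e), Set.diff_subset, ?_, fun t ht => ht.2, ?_⟩
  · rintro s ⟨hsB, hsA⟩
    rcases (memB_iff M N A s).mp hsB with ⟨hc, -⟩ | ⟨-, hcl⟩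
    · exact absurd hc hsA
    · intro hcon
      refine hcl (N.closure_subset_closure ?_ hcon)
      rintro x (⟨hxB, hxs⟩ | hx)
      · rcases lt_trichotomy x s with hlt | rfl | hgt
        · exact Or.inr hlt
        · exact absurd rfl hxs
        · exact Or.inl ⟨hxB, hgt⟩
      · exact Or.inr hx
  · rintro t ⟨htA, htB⟩
    have hnot := (memB_iff M N A t).not.mp htB
    push_neg at hnot
    exact hnot.1 htA

lemma greedy_eq (A : Set α) :
    (({f | memB M N A f} \ ({f | memB M N A f} \ A)) ∪ (A \ {f | memB M N A f})) = A := by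
  ext x
  by_cases h1 : x ∈ A <;> by_cases h2 : memB M N A x <;>
    simp [h1, h2]

end Greedy
end LasVergnas
namespace LasVergnas
open Set Matroid Finset

section Sums
variable {β γ : Type*} {R : Type*} [CommRing R]

lemma sum_pow_powerset [DecidableEq β] (F : Finset β) (a : R) :
    ∑ S ∈ F.powerset, a ^ S.card = (a + 1) ^ F.card := by
  induction F using Finset.induction_on with
  | empty => simp
  | @insert w F hw IH =>
    rw [Finset.sum_powerset_insert hw, Finset.card_insert_of_notMem hw]
    have h2 : ∑ t ∈ F.powerset, a ^ (insert w t).card =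
        ∑ t ∈ F.powerset, a * a ^ t.card := by
      refine Finset.sum_congr rfl fun t ht => ?_
      rw [Finset.card_insert_of_notMem (fun hc => hw (Finset.mem_powerset.mp ht hc)),
        pow_succ]
      ring
    rw [h2, ← Finset.mul_sum, IH]
    ring

lemma sum_binom_powerset [DecidableEq β] (F : Finset β) (a b : R) :
    ∑ S ∈ F.powerset, a ^ (F.card - S.card) * b ^ S.card = (a + b) ^ F.card := by
  induction F using Finset.induction_on with
  | empty => simp
  | @insert w F hw IH =>
    rw [Finset.sum_powerset_insert hw, Finset.card_insert_of_notMem hw]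
    have e1 : ∑ t ∈ F.powerset, a ^ (F.card + 1 - t.card) * b ^ t.card =
        a * ∑ t ∈ F.powerset, a ^ (F.card - t.card) * b ^ t.card := by
      rw [Finset.mul_sum]
      refine Finset.sum_congr rfl fun t ht => ?_
      have hle : t.card ≤ F.card := Finset.card_le_card (Finset.mem_powerset.mp ht)
      have : F.card + 1 - t.card = (F.card - t.card) + 1 := by omega
      rw [this, pow_succ]
      ring
    have e2 : ∑ t ∈ F.powerset, a ^ (F.card + 1 - (insert w t).card) * b ^ (insert w t).card =
        b * ∑ t ∈ F.powerset, a ^ (F.card - t.card) * b ^ t.card := by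
      rw [Finset.mul_sum]
      refine Finset.sum_congr rfl fun t ht => ?_
      have hwt : w ∉ t := fun hc => hw (Finset.mem_powerset.mp ht hc)
      rw [Finset.card_insert_of_notMem hwt]
      have hle : t.card ≤ F.card := Finset.card_le_card (Finset.mem_powerset.mp ht)
      have : F.card + 1 - (t.card + 1) = F.card - t.card := by omega
      rw [this, pow_succ]
      ring
    rw [e1, e2, IH]
    ring

lemma sum_prod_split (P1 : Finset (Finset β)) (P2 : Finset (Finset γ))
    (f : Finset β → R) (g : Finset γ → R) (c : R) :
    ∑ p ∈ P1 ×ˢ P2, f p.1 * g p.2 * c = (∑ S ∈ P1, f S) * (∑ T ∈ P2, g T) * c := by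
  rw [Finset.sum_product]
  calc ∑ S ∈ P1, ∑ T ∈ P2, f S * g T * c
      = ∑ S ∈ P1, f S * ((∑ T ∈ P2, g T) * c) := by
        refine Finset.sum_congr rfl fun S _ => ?_
        rw [Finset.sum_mul, Finset.mul_sum]
        exact Finset.sum_congr rfl fun T _ => by ring
    _ = (∑ S ∈ P1, f S) * ((∑ T ∈ P2, g T) * c) := by rw [← Finset.sum_mul]
    _ = (∑ S ∈ P1, f S) * (∑ T ∈ P2, g T) * c := by ring

end Sums

section FinsetDefs
variable {α : Type*} [Fintype α] [LinearOrder α]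

noncomputable def BgF (M N : Matroid α) (A : Finset α) : Finset α :=
  (Set.toFinite {f | memB M N (↑A) f}).toFinset

noncomputable def IntF (N : Matroid α) (B : Finset α) : Finset α :=
  (Set.toFinite (IntSet N ↑B)).toFinset

noncomputable def ExtF (M : Matroid α) (B : Finset α) : Finset α :=
  (Set.toFinite (ExtSet M ↑B)).toFinset

lemma coe_BgF (M N : Matroid α) (A : Finset α) :
    (↑(BgF M N A) : Set α) = {f | memB M N (↑A) f} := Set.Finite.coe_toFinset _

variable {M N : Matroid α} {A B S T : Finset α}
variable (hME : M.E = Set.univ) (hNE : N.E = Set.univ)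
  (clMN : ∀ X : Set α, M.closure X ⊆ N.closure X)
include hME hNE clMN

lemma BgF_ivd (A : Finset α) :
    IVD M N (↑(BgF M N A)) ((↑(BgF M N A) : Set α) \ ↑A) ((↑A : Set α) \ ↑(BgF M N A)) := by
  rw [coe_BgF]
  exact greedy_ivd hME hNE clMN (↑A)

lemma BgF_eq (A : Finset α) :
    (((↑(BgF M N A) : Set α) \ ((↑(BgF M N A) : Set α) \ ↑A)) ∪ ((↑A : Set α) \ ↑(BgF M N A)))
      = (↑A : Set α) := by
  rw [coe_BgF]
  exact greedy_eq hME hNE clMN (M := M) (N := N) (↑A)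

/-- Uniqueness: the greedy pseudobasis of `(B \ S) ∪ T` is `B`. -/
lemma BgF_recover (h' : IVD M N (↑B) (↑S) (↑T)) : BgF M N ((B \ S) ∪ T) = B := by
  have hcoe : (↑((B \ S) ∪ T) : Set α) = ((↑B : Set α) \ ↑S) ∪ ↑T := by
    push_cast; rfl
  have h1 := iv_recover hME hNE clMN h'
  have hg := BgF_ivd hME hNE clMN (M := M) (N := N) ((B \ S) ∪ T)
  have h2 := iv_recover hME hNE clMN hg
  rw [BgF_eq hME hNE clMN] at h2
  rw [← hcoe] at h1
  rw [h1] at h2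
  exact Finset.coe_injective h2.symm

lemma ivd_finset (hBi : M.Indep (↑B : Set α)) (hBs : N.closure ↑B = Set.univ)
    (hS : S ⊆ IntF N B) (hT : T ⊆ ExtF M B) : IVD M N (↑B) (↑S) (↑T) := by
  refine ivd_of_subsets hME hNE clMN hBi hBs ?_ ?_
  · intro a ha
    exact (Set.Finite.mem_toFinset _).mp (hS (by exact_mod_cast ha))
  · intro a ha
    exact (Set.Finite.mem_toFinset _).mp (hT (by exact_mod_cast ha))

lemma exponents (h' : IVD M N (↑B) (↑S) (↑T)) :
    (N.rk' Set.univ - N.rk' ↑((B \ S) ∪ T) = S.card)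
    ∧ (((B \ S) ∪ T).card - M.rk' ↑((B \ S) ∪ T) = T.card)
    ∧ ((M.rk' Set.univ - M.rk' ↑((B \ S) ∪ T)) - (N.rk' Set.univ - N.rk' ↑((B \ S) ∪ T))
        = M.rk' Set.univ - B.card) := by
  have hcoe : (↑((B \ S) ∪ T) : Set α) = (((↑B : Set α) \ ↑S) ∪ ↑T) := by push_cast; rfl
  have hrkN := iv_rkN hME hNE clMN h'
  have hrkM := iv_rkM hME hNE clMN h'
  have hBle := iv_B_le hME hNE clMN h'
  rw [Set.ncard_coe_finset] at hrkN hrkM hBle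
  rw [Set.ncard_coe_finset] at hrkM
  have hSB : S ⊆ B := fun a ha => by
    have := h'.hS (a := a) (by exact_mod_cast ha)
    exact_mod_cast this
  have hTd : Disjoint (B \ S) T := by
    rw [Finset.disjoint_right]
    intro a ha hc
    exact h'.hTB a (by exact_mod_cast ha) (by exact_mod_cast (Finset.mem_sdiff.mp hc).1)
  have hcard : ((B \ S) ∪ T).card = (B.card - S.card) + T.card := by
    rw [Finset.card_union_of_disjoint hTd, Finset.card_sdiff_of_subset hSB]
  have hScard : S.card ≤ B.card := Finset.card_le_card hSB
  rw [hcoe]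
  exact ⟨by omega, by omega, by omega⟩

lemma actcards (h' : IVD M N (↑B) (↑S) (↑T)) :
    ((IntSet N ↑((B \ S) ∪ T)).ncard = (IntF N B).card - S.card)
    ∧ (S.card ≤ (IntF N B).card)
    ∧ ((PActSet N ↑((B \ S) ∪ T)).ncard = S.card)
    ∧ ((ExtSet M ↑((B \ S) ∪ T)).ncard = (ExtF M B).card - T.card)
    ∧ (T.card ≤ (ExtF M B).card)
    ∧ ((QActSet M ↑((B \ S) ∪ T)).ncard = T.card) := by
  have hcoe : (↑((B \ S) ∪ T) : Set α) = (((↑B : Set α) \ ↑S) ∪ ↑T) := by push_cast; rfl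
  have hIcard : (IntF N B).card = (IntSet N ↑B).ncard :=
    (Set.ncard_eq_toFinset_card _ (Set.toFinite _)).symm
  have hXcard : (ExtF M B).card = (ExtSet M ↑B).ncard :=
    (Set.ncard_eq_toFinset_card _ (Set.toFinite _)).symm
  have hSsub := iv_S_sub hME hNE clMN h'
  have hTsub := iv_T_sub hME hNE clMN h'
  have hSle : S.card ≤ (IntF N B).card := by
    rw [hIcard, ← Set.ncard_coe_finset S]
    exact Set.ncard_le_ncard hSsub (Set.toFinite _)
  have hTle : T.card ≤ (ExtF M B).card := by
    rw [hXcard, ← Set.ncard_coe_finset T]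
    exact Set.ncard_le_ncard hTsub (Set.toFinite _)
  rw [hcoe]
  refine ⟨?_, hSle, ?_, ?_, hTle, ?_⟩
  · rw [iv_I_eq hME hNE clMN h', Set.ncard_diff hSsub (Set.toFinite _),
      Set.ncard_coe_finset, hIcard]
  · rw [iv_P_eq hME hNE clMN h', Set.ncard_coe_finset]
  · rw [iv_X_eq hME hNE clMN h', Set.ncard_diff hTsub (Set.toFinite _),
      Set.ncard_coe_finset, hXcard]
  · rw [iv_Q_eq hME hNE clMN h', Set.ncard_coe_finset]

end FinsetDefs
end LasVergnas

open LasVergnas Matroid Set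

/-- The 5-variable expansion of the Tutte polynomial of a matroid perspective:
`t(M,N; x+u, y+v, z)` equals the sum over subsets `A` of
`x^|Int_N(A)| u^|P_N(A)| y^|Ext_M(A)| v^|Q_M(A)| z^{(r(M)−r_M(A))−(r(N)−r_N(A))}`. -/
theorem stmt2 {α : Type*} [Fintype α] [LinearOrder α] (M N : Matroid α)
    (hME : M.E = Set.univ) (hNE : N.E = Set.univ)
    (hMN : ∀ F, N.IsFlat F → M.IsFlat F)
    {R : Type*} [CommRing R] (x u y v z : R) :
    ∑ A : Finset α,
        (x + u - 1) ^ (N.rk' Set.univ - N.rk' ↑A) *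
          (y + v - 1) ^ (A.card - M.rk' ↑A) *
          z ^ ((M.rk' Set.univ - M.rk' ↑A) - (N.rk' Set.univ - N.rk' ↑A)) =
      ∑ A : Finset α,
        x ^ (IntSet N ↑A).ncard * u ^ (PActSet N ↑A).ncard *
          y ^ (ExtSet M ↑A).ncard * v ^ (QActSet M ↑A).ncard *
          z ^ ((M.rk' Set.univ - M.rk' ↑A) - (N.rk' Set.univ - N.rk' ↑A)) := by
  classical
  have clMN : ∀ X : Set α, M.closure X ⊆ N.closure X :=
    closure_subset_closure_of_flats hME hNE hMN
  let fL : Finset α → R := fun A =>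
    (x + u - 1) ^ (N.rk' Set.univ - N.rk' ↑A) *
      (y + v - 1) ^ (A.card - M.rk' ↑A) *
      z ^ ((M.rk' Set.univ - M.rk' ↑A) - (N.rk' Set.univ - N.rk' ↑A))
  let fR : Finset α → R := fun A =>
    x ^ (IntSet N ↑A).ncard * u ^ (PActSet N ↑A).ncard *
      y ^ (ExtSet M ↑A).ncard * v ^ (QActSet M ↑A).ncard *
      z ^ ((M.rk' Set.univ - M.rk' ↑A) - (N.rk' Set.univ - N.rk' ↑A))
  show ∑ A : Finset α, fL A = ∑ A : Finset α, fR A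
  let pb : Finset (Finset α) :=
    Finset.univ.filter (fun B => M.Indep ↑B ∧ N.closure ↑B = Set.univ)
  let tt : Finset ((_ : Finset α) × (Finset α × Finset α)) :=
    pb.sigma (fun B => (IntF N B).powerset ×ˢ (ExtF M B).powerset)
  -- membership facts for sigma elements
  have hmem_tt : ∀ p : ((_ : Finset α) × (Finset α × Finset α)), p ∈ tt →
      IVD M N (↑p.1) (↑p.2.1) (↑p.2.2) := by
    rintro ⟨B, S, T⟩ hp
    rw [Finset.mem_sigma, Finset.mem_filter, Finset.mem_product, Finset.mem_powerset,
      Finset.mem_powerset] at hp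
    exact ivd_finset hME hNE clMN hp.1.2.1 hp.1.2.2 hp.2.1 hp.2.2
  have him : ∀ A : Finset α,
      (⟨BgF M N A, (BgF M N A \ A, A \ BgF M N A)⟩ :
        (_ : Finset α) × (Finset α × Finset α)) ∈ tt := by
    intro A
    have hg := BgF_ivd hME hNE clMN (M := M) (N := N) A
    rw [Finset.mem_sigma, Finset.mem_filter, Finset.mem_product, Finset.mem_powerset,
      Finset.mem_powerset]
    refine ⟨⟨Finset.mem_univ _, hg.hBi, hg.hBs⟩, ?_, ?_⟩
    · intro a ha
      rw [Finset.mem_sdiff] at ha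
      have ha' : a ∈ (↑(BgF M N A) : Set α) \ (↑A : Set α) := ⟨ha.1, ha.2⟩
      exact (Set.Finite.mem_toFinset _).mpr (iv_S_sub hME hNE clMN hg ha')
    · intro a ha
      rw [Finset.mem_sdiff] at ha
      have ha' : a ∈ (↑A : Set α) \ (↑(BgF M N A) : Set α) := ⟨ha.1, ha.2⟩
      exact (Set.Finite.mem_toFinset _).mpr (iv_T_sub hME hNE clMN hg ha')
  have hji : ∀ A : Finset α, (BgF M N A \ (BgF M N A \ A)) ∪ (A \ BgF M N A) = A := by
    intro A
    ext a
    simp only [Finset.mem_union, Finset.mem_sdiff]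
    tauto
  have hij : ∀ p : ((_ : Finset α) × (Finset α × Finset α)), p ∈ tt →
      (⟨BgF M N ((p.1 \ p.2.1) ∪ p.2.2),
        (BgF M N ((p.1 \ p.2.1) ∪ p.2.2) \ ((p.1 \ p.2.1) ∪ p.2.2),
         ((p.1 \ p.2.1) ∪ p.2.2) \ BgF M N ((p.1 \ p.2.1) ∪ p.2.2))⟩ :
        (_ : Finset α) × (Finset α × Finset α)) = p := by
    rintro ⟨B, S, T⟩ hp
    have h' := hmem_tt _ hp
    dsimp only at h'
    have hB : BgF M N ((B \ S) ∪ T) = B := BgF_recover hME hNE clMN h'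
    have hSB : S ⊆ B := fun a ha => by
      have := h'.hS (a := a) (by exact_mod_cast ha)
      exact_mod_cast this
    have hTB : ∀ a ∈ T, a ∉ B := fun a ha hc =>
      h'.hTB a (by exact_mod_cast ha) (by exact_mod_cast hc)
    have h2 : B \ ((B \ S) ∪ T) = S := by
      ext a
      simp only [Finset.mem_sdiff, Finset.mem_union]
      constructor
      · rintro ⟨haB, hno⟩
        push_neg at hno
        exact hno.1 haB
      · intro haS
        refine ⟨hSB haS, ?_⟩
        rintro (⟨-, hc⟩ | hc)
        · exact hc haS
        · exact hTB a hc (hSB haS)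
    have h3 : ((B \ S) ∪ T) \ B = T := by
      ext a
      simp only [Finset.mem_sdiff, Finset.mem_union]
      constructor
      · rintro ⟨h1 | h1, hB'⟩
        · exact absurd h1.1 hB'
        · exact h1
      · intro haT
        exact ⟨Or.inr haT, hTB a haT⟩
    show (⟨BgF M N ((B \ S) ∪ T),
      (BgF M N ((B \ S) ∪ T) \ ((B \ S) ∪ T), ((B \ S) ∪ T) \ BgF M N ((B \ S) ∪ T))⟩ :
        (_ : Finset α) × (Finset α × Finset α)) = ⟨B, (S, T)⟩
    rw [hB, h2, h3]
  -- reindex both sums over the sigma set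
  have hL : ∑ A : Finset α, fL A = ∑ p ∈ tt, fL ((p.1 \ p.2.1) ∪ p.2.2) := by
    refine Finset.sum_nbij'
      (fun A => ⟨BgF M N A, (BgF M N A \ A, A \ BgF M N A)⟩)
      (fun p => (p.1 \ p.2.1) ∪ p.2.2)
      (fun A _ => him A) (fun p _ => Finset.mem_univ _)
      (fun A _ => hji A) (fun p hp => hij p hp) (fun A _ => by rw [hji A])
  have hR : ∑ A : Finset α, fR A = ∑ p ∈ tt, fR ((p.1 \ p.2.1) ∪ p.2.2) := by
    refine Finset.sum_nbij'
      (fun A => ⟨BgF M N A, (BgF M N A \ A, A \ BgF M N A)⟩)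
      (fun p => (p.1 \ p.2.1) ∪ p.2.2)
      (fun A _ => him A) (fun p _ => Finset.mem_univ _)
      (fun A _ => hji A) (fun p hp => hij p hp) (fun A _ => by rw [hji A])
  rw [hL, hR]
  -- per-term closed forms
  have htermL : ∀ p : ((_ : Finset α) × (Finset α × Finset α)), p ∈ tt →
      fL ((p.1 \ p.2.1) ∪ p.2.2) =
        (x + u - 1) ^ p.2.1.card * (y + v - 1) ^ p.2.2.card *
          z ^ (M.rk' Set.univ - p.1.card) := by
    rintro ⟨B, S, T⟩ hp
    have h' := hmem_tt _ hp
    dsimp only at h' ⊢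
    obtain ⟨e1, e2, e3⟩ := exponents hME hNE clMN h'
    show (x + u - 1) ^ (N.rk' Set.univ - N.rk' ↑((B \ S) ∪ T)) *
      (y + v - 1) ^ (((B \ S) ∪ T).card - M.rk' ↑((B \ S) ∪ T)) *
      z ^ ((M.rk' Set.univ - M.rk' ↑((B \ S) ∪ T)) -
        (N.rk' Set.univ - N.rk' ↑((B \ S) ∪ T))) = _
    rw [e3, e1, e2]
  have htermR : ∀ p : ((_ : Finset α) × (Finset α × Finset α)), p ∈ tt →
      fR ((p.1 \ p.2.1) ∪ p.2.2) =
        (x ^ ((IntF N p.1).card - p.2.1.card) * u ^ p.2.1.card) *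
          (y ^ ((ExtF M p.1).card - p.2.2.card) * v ^ p.2.2.card) *
          z ^ (M.rk' Set.univ - p.1.card) := by
    rintro ⟨B, S, T⟩ hp
    have h' := hmem_tt _ hp
    dsimp only at h' ⊢
    obtain ⟨a1, -, a3, a4, -, a6⟩ := actcards hME hNE clMN h'
    obtain ⟨-, -, e3⟩ := exponents hME hNE clMN h'
    show x ^ (IntSet N ↑((B \ S) ∪ T)).ncard * u ^ (PActSet N ↑((B \ S) ∪ T)).ncard *
      y ^ (ExtSet M ↑((B \ S) ∪ T)).ncard * v ^ (QActSet M ↑((B \ S) ∪ T)).ncard *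
      z ^ ((M.rk' Set.univ - M.rk' ↑((B \ S) ∪ T)) -
        (N.rk' Set.univ - N.rk' ↑((B \ S) ∪ T))) = _
    rw [a1, a3, a4, a6, e3]
    ring
  rw [Finset.sum_congr rfl htermL, Finset.sum_congr rfl htermR]
  rw [Finset.sum_sigma, Finset.sum_sigma]
  refine Finset.sum_congr rfl fun B _ => ?_
  have hxu : x + u - 1 + 1 = x + u := by ring
  have hyv : y + v - 1 + 1 = y + v := by ring
  rw [sum_prod_split ((IntF N B).powerset) ((ExtF M B).powerset)
      (fun S => (x + u - 1) ^ S.card) (fun T => (y + v - 1) ^ T.card)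
      (z ^ (M.rk' Set.univ - B.card)),
    sum_prod_split ((IntF N B).powerset) ((ExtF M B).powerset)
      (fun S => x ^ ((IntF N B).card - S.card) * u ^ S.card)
      (fun T => y ^ ((ExtF M B).card - T.card) * v ^ T.card)
      (z ^ (M.rk' Set.univ - B.card)),
    sum_pow_powerset, sum_pow_powerset, sum_binom_powerset, sum_binom_powerset, hxu, hyv]
end

section
/- Let M be a matroid on a finite linearly ordered ground set E. Then for all elements x, u, y, v of a commutative ring, Σ_{A⊆E} (x+u−1)^{r(M)−r_M(A)} · (y+v−1)^{|A|−r_M(A)} = Σ_{A⊆E} x^{|Int_M(A)|} · u^{r(M)−r_M(A)} · y^{|Ext_M(A)|} · v^{|A|−r_M(A)}. -/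
set_option linter.unusedSectionVars false
set_option linter.unusedVariables false


open Set

namespace TutteAux3

variable {α : Type*} [Fintype α] [LinearOrder α] {M : Matroid α}
variable {B C D I S X A : Set α} {e f g : α}

lemma sg (hME : M.E = Set.univ) (X : Set α) : X ⊆ M.E := hME ▸ Set.subset_univ X

lemma exists_circuit_subset {D : Set α} (hD : M.Dep D) : ∃ C, C ⊆ D ∧ M.IsCircuit' C := by
  have hne : {n : ℕ | ∃ C, C ⊆ D ∧ M.Dep C ∧ C.ncard = n}.Nonempty :=
    ⟨D.ncard, D, Set.Subset.rfl, hD, rfl⟩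
  obtain ⟨C, hCD, hCdep, hC⟩ := Nat.sInf_mem hne
  refine ⟨C, hCD, hCdep, fun D' hD' hsub => ?_⟩
  have h1 : C.ncard ≤ D'.ncard := by
    rw [hC]; exact Nat.sInf_le ⟨D', hsub.trans hCD, hD', rfl⟩
  exact Set.eq_of_subset_of_ncard_le hsub h1 (Set.toFinite C)

lemma circuit_diff_indep (hC : M.IsCircuit' C) (he : e ∈ C) : M.Indep (C \ {e}) := by
  by_contra h
  have hdep : M.Dep (C \ {e}) :=
    M.dep_of_not_indep h (Set.diff_subset.trans hC.1.subset_ground)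
  have heq := hC.2 _ hdep Set.diff_subset
  have he' : e ∈ C \ {e} := by rw [heq]; exact he
  exact he'.2 rfl

lemma circuit_mem_closure (hC : M.IsCircuit' C) (he : e ∈ C) : e ∈ M.closure (C \ {e}) := by
  rw [(circuit_diff_indep hC he).mem_closure_iff]
  left
  rw [Set.insert_diff_singleton, Set.insert_eq_self.2 he]
  exact hC.1

lemma circuit_not_subset_indep (hC : M.IsCircuit' C) (hI : M.Indep I) : ¬ C ⊆ I :=
  fun h => hC.1.not_indep (hI.subset h)

/-- Fundamental circuit property: `D` is a circuit of `insert f B` through `f`. -/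
def FCP (M : Matroid α) (B : Set α) (f : α) (D : Set α) : Prop :=
  M.IsCircuit' D ∧ D ⊆ insert f B ∧ f ∈ D

lemma exists_FCP (hME : M.E = Set.univ) (hB : M.IsBase B) (hf : f ∉ B) : ∃ D, FCP M B f D := by
  have hdep : M.Dep (insert f B) := hB.insert_dep ⟨by simp [hME], hf⟩
  obtain ⟨D, hDsub, hD⟩ := exists_circuit_subset hdep
  refine ⟨D, hD, hDsub, ?_⟩
  by_contra hfD
  exact circuit_not_subset_indep hD hB.indep ((Set.subset_insert_iff_of_notMem hfD).1 hDsub)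

lemma base_exchange_of_indep (hB : M.IsBase B) (he : e ∈ B) (hf : f ∉ B)
    (h : M.Indep (insert f (B \ {e}))) : M.IsBase (insert f (B \ {e})) := by
  obtain ⟨B', hB', hsub⟩ := h.exists_isBase_superset
  have hcard : B'.encard = B.encard := hB'.encard_eq_encard_of_isBase hB
  have h1 : (insert f (B \ {e})).encard = B.encard := by
    rw [Set.encard_insert_of_notMem (fun hh => hf hh.1)]
    exact Set.encard_sdiff_singleton_add_one he
  have heq : insert f (B \ {e}) = B' :=
    Set.Finite.eq_of_subset_of_encard_le (Set.toFinite _) hsub (by rw [hcard, h1])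
  rwa [heq]

lemma FCP_base_of_mem (hME : M.E = Set.univ) (hB : M.IsBase B) (hf : f ∉ B)
    (hD : FCP M B f D) (hg : g ∈ D) (hgf : g ≠ f) : M.IsBase (insert f (B \ {g})) := by
  have hgB : g ∈ B := (hD.2.1 hg).resolve_left hgf
  have hind : M.Indep (insert f (B \ {g})) := by
    by_contra h
    have hdep : M.Dep (insert f (B \ {g})) := M.dep_of_not_indep h (sg hME _)
    obtain ⟨D', hD'sub, hD'⟩ := exists_circuit_subset hdep
    have hfD' : f ∈ D' := by
      by_contra hf'
      exact circuit_not_subset_indep hD' (hB.indep.subset Set.diff_subset)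
        ((Set.subset_insert_iff_of_notMem hf').1 hD'sub)
    have hfcl : f ∈ M.closure (B \ {g}) := by
      refine M.closure_subset_closure ?_ (circuit_mem_closure hD' hfD')
      intro x hx
      rcases hD'sub hx.1 with h1 | h2
      · exact absurd h1 hx.2
      · exact h2
    have hgcl : g ∈ M.closure (insert f (B \ {g})) := by
      refine M.closure_subset_closure ?_ (circuit_mem_closure hD.1 hg)
      intro x hx
      rcases hD.2.1 hx.1 with h1 | h2
      · exact h1 ▸ Set.mem_insert _ _
      · exact Set.mem_insert_of_mem _ ⟨h2, hx.2⟩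
    rw [M.closure_insert_eq_of_mem_closure hfcl] at hgcl
    exact hB.indep.notMem_closure_diff_of_mem hgB hgcl
  exact base_exchange_of_indep hB hgB hf hind

lemma FCP_mem_of_base (hD : FCP M B f D) (hgB : g ∈ B)
    (hbase : M.IsBase (insert f (B \ {g}))) (hfD : f ∉ B) : g ∈ D := by
  by_contra hg
  refine circuit_not_subset_indep hD.1 hbase.indep ?_
  intro x hx
  rcases hD.2.1 hx with rfl | hxB
  · exact Set.mem_insert _ _
  · exact Set.mem_insert_of_mem _ ⟨hxB, fun h => hg (Set.mem_singleton_iff.1 h ▸ hx)⟩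

lemma FCP_unique (hME : M.E = Set.univ) (hB : M.IsBase B) (hf : f ∉ B) {D D' : Set α}
    (hD : FCP M B f D) (hD' : FCP M B f D') : D = D' := by
  have hsub : D ⊆ D' := by
    intro g hg
    by_contra hg'
    have hgf : g ≠ f := fun h => hg' (h ▸ hD'.2.2)
    have hbase := FCP_base_of_mem hME hB hf hD hg hgf
    refine circuit_not_subset_indep hD'.1 hbase.indep (fun x hx => ?_)
    rcases hD'.2.1 hx with rfl | hxB
    · exact Set.mem_insert _ _
    · exact Set.mem_insert_of_mem _ ⟨hxB, fun h => hg' (Set.mem_singleton_iff.1 h ▸ hx)⟩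
  exact hD'.1.2 _ hD.1.1 hsub

/-! ### Duality -/

lemma dual_ground_univ (hME : M.E = Set.univ) : M✶.E = Set.univ := by
  rw [Matroid.dual_ground]; exact hME

lemma compl_base_dual' (hME : M.E = Set.univ) (hB : M.IsBase B) : M✶.IsBase Bᶜ := by
  have := hB.compl_isBase_dual
  rwa [hME, ← Set.compl_eq_univ_diff] at this

lemma base_compl_iff' (hME : M.E = Set.univ) {X : Set α} : M.IsBase Xᶜ ↔ M✶.IsBase X := by
  rw [Matroid.dual_isBase_iff (show X ⊆ M.E from sg hME X), hME, ← Set.compl_eq_univ_diff]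

lemma compl_insert_diff {g h : α} (hg : g ∈ B) (hh : h ∉ B) (hhg : h ≠ g) :
    (insert g (Bᶜ \ {h}))ᶜ = insert h (B \ {g}) := by
  ext x
  simp only [Set.mem_compl_iff, Set.mem_insert_iff, Set.mem_diff, Set.mem_singleton_iff,
    not_or, not_and, not_not]
  constructor
  · rintro ⟨hxg, hx2⟩
    by_cases hxh : x = h
    · exact Or.inl hxh
    · exact Or.inr ⟨by by_contra hxB; exact hxh (hx2 hxB), hxg⟩
  · rintro (rfl | ⟨hxB, hxg⟩)
    · exact ⟨hhg, fun _ => rfl⟩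
    · exact ⟨hxg, fun hx' => absurd hxB hx'⟩

/-- Fundamental cocircuit property. -/
def FCoP (M : Matroid α) (B : Set α) (g : α) (D : Set α) : Prop :=
  FCP M✶ Bᶜ g D

lemma FCoP_cocircuit (hD : FCoP M B g D) : M.IsCocircuit' D := hD.1

lemma FCoP_subset (hD : FCoP M B g D) : D ⊆ insert g Bᶜ := hD.2.1

lemma FCoP_mem (hD : FCoP M B g D) : g ∈ D := hD.2.2

lemma exists_FCoP (hME : M.E = Set.univ) (hB : M.IsBase B) (hg : g ∈ B) : ∃ D, FCoP M B g D :=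
  exists_FCP (dual_ground_univ hME) (compl_base_dual' hME hB) (by simp [hg])

lemma FCoP_base_of_mem (hME : M.E = Set.univ) (hB : M.IsBase B) (hg : g ∈ B)
    (hD : FCoP M B g D) {h : α} (hh : h ∈ D) (hhg : h ≠ g) :
    h ∉ B ∧ M.IsBase (insert h (B \ {g})) := by
  have hhB : h ∈ Bᶜ := (hD.2.1 hh).resolve_left hhg
  have hbase : M✶.IsBase (insert g (Bᶜ \ {h})) :=
    FCP_base_of_mem (dual_ground_univ hME) (compl_base_dual' hME hB) (by simp [hg]) hD hh hhg
  have hcompl := compl_insert_diff hg hhB hhg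
  refine ⟨hhB, ?_⟩
  rw [← hcompl]
  exact (base_compl_iff' hME).2 hbase

lemma FCoP_mem_of_base (hME : M.E = Set.univ) (hB : M.IsBase B) (hg : g ∈ B)
    (hD : FCoP M B g D) {h : α} (hhB : h ∉ B) (hbase : M.IsBase (insert h (B \ {g}))) : h ∈ D := by
  have hhg : h ≠ g := fun he => hhB (he ▸ hg)
  refine FCP_mem_of_base hD (show h ∈ Bᶜ from hhB) ?_ (by simp [hg])
  rw [← base_compl_iff' hME, compl_insert_diff hg hhB hhg]
  exact hbase

lemma cocircuit_compl_closure (hME : M.E = Set.univ) (hD : M.IsCocircuit' D) (he : e ∈ D) :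
    e ∉ M.closure Dᶜ := by
  have hind : M✶.Indep (D \ {e}) := circuit_diff_indep hD he
  obtain ⟨W, hW, hsub⟩ := hind.exists_isBase_superset
  have heW : e ∉ W := by
    intro heW
    refine circuit_not_subset_indep hD hW.indep (fun x hx => ?_)
    rcases eq_or_ne x e with rfl | hne
    · exact heW
    · exact hsub ⟨hx, hne⟩
  have hBc : M.IsBase Wᶜ := (base_compl_iff' hME).2 hW
  have heB : e ∈ Wᶜ := heW
  have hDc : Dᶜ ⊆ M.closure (Wᶜ \ {e}) := by
    intro x hx
    by_cases hxB : x ∈ Wᶜ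
    · exact M.subset_closure (Wᶜ \ {e}) (sg hME _)
        ⟨hxB, fun hxe => hx (Set.mem_singleton_iff.1 hxe ▸ he)⟩
    · by_contra hxcl
      have hxe : x ≠ e := fun h => hx (h ▸ he)
      have hind2 : M.Indep (insert x (Wᶜ \ {e})) := by
        rw [(hBc.indep.subset Set.diff_subset).insert_indep_iff_of_notMem
          (fun hmem => hxB hmem.1)]
        exact ⟨by simp [hME], hxcl⟩
      have hbase2 := base_exchange_of_indep hBc heB hxB hind2
      have hcompl := compl_insert_diff heB hxB hxe
      rw [compl_compl] at hcompl
      have hbase3 : M✶.IsBase (insert e (W \ {x})) := by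
        refine (base_compl_iff' hME).1 ?_
        rwa [hcompl]
      refine circuit_not_subset_indep hD hbase3.indep (fun y hy => ?_)
      rcases eq_or_ne y e with rfl | hne
      · exact Set.mem_insert _ _
      · exact Set.mem_insert_of_mem _ ⟨hsub ⟨hy, hne⟩, fun hyx => hx (Set.mem_singleton_iff.1 hyx ▸ hy)⟩
  intro hecl
  have h1 : e ∈ M.closure (Wᶜ \ {e}) := M.closure_subset_closure_of_subset_closure hDc hecl
  exact hBc.indep.notMem_closure_diff_of_mem heB h1

lemma circuit_cocircuit (hME : M.E = Set.univ) (hC : M.IsCircuit' C) (hD : M.IsCocircuit' D)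
    (heC : e ∈ C) (heD : e ∈ D) : ∃ g, g ∈ C ∧ g ∈ D ∧ g ≠ e := by
  by_contra h
  push_neg at h
  have hsub : C \ {e} ⊆ Dᶜ := by
    intro x hx hxD
    exact hx.2 (Set.mem_singleton_iff.2 (h x hx.1 hxD))
  exact cocircuit_compl_closure hME hD heD
    ((M.closure_subset_closure hsub) (circuit_mem_closure hC heC))

/-! ### The greedy order and greedy basis -/

def rS (S : Set α) (a b : α) : Prop :=
  (a ∈ S ∧ b ∉ S) ∨ (a ∈ S ∧ b ∈ S ∧ b < a) ∨ (a ∉ S ∧ b ∉ S ∧ a < b)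

lemma rS_irrefl (S : Set α) (a : α) : ¬ rS S a a := by
  rintro (⟨h1, h2⟩ | ⟨h1, h2, h3⟩ | ⟨h1, h2, h3⟩)
  · exact h2 h1
  · exact lt_irrefl _ h3
  · exact lt_irrefl _ h3

lemma rS_trans {S : Set α} {a b c : α} : rS S a b → rS S b c → rS S a c := by
  rintro (⟨ha, hb⟩ | ⟨ha, hb, hba⟩ | ⟨ha, hb, hab⟩)
    (⟨hb', hc⟩ | ⟨hb', hc, hcb⟩ | ⟨hb', hc, hbc⟩)
  · exact absurd hb' hb
  · exact absurd hb' hb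
  · exact Or.inl ⟨ha, hc⟩
  · exact Or.inl ⟨ha, hc⟩
  · exact Or.inr (Or.inl ⟨ha, hc, hcb.trans hba⟩)
  · exact absurd hb hb'
  · exact absurd hb' hb
  · exact absurd hb' hb
  · exact Or.inr (Or.inr ⟨ha, hc, hab.trans hbc⟩)

lemma rS_total {S : Set α} {a b : α} (h : a ≠ b) : rS S a b ∨ rS S b a := by
  by_cases ha : a ∈ S <;> by_cases hb : b ∈ S
  · rcases h.lt_or_gt with hl | hl
    · exact Or.inr (Or.inr (Or.inl ⟨hb, ha, hl⟩))
    · exact Or.inl (Or.inr (Or.inl ⟨ha, hb, hl⟩))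
  · exact Or.inl (Or.inl ⟨ha, hb⟩)
  · exact Or.inr (Or.inl ⟨hb, ha⟩)
  · rcases h.lt_or_gt with hl | hl
    · exact Or.inl (Or.inr (Or.inr ⟨ha, hb, hl⟩))
    · exact Or.inr (Or.inr (Or.inr ⟨hb, ha, hl⟩))

lemma rS_wf (S : Set α) : WellFounded (rS S) := by
  have h1 : IsTrans α (rS S) := ⟨fun _ _ _ => rS_trans⟩
  have h2 : IsIrrefl α (rS S) := ⟨rS_irrefl S⟩
  exact Finite.wellFounded_of_trans_of_irrefl _

lemma exists_rS_max {S C : Set α} (hC : C.Nonempty) :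
    ∃ m ∈ C, ∀ x ∈ C, x ≠ m → rS S x m := by
  have h1 : IsTrans α (fun a b => rS S b a) := ⟨fun _ _ _ h h' => rS_trans h' h⟩
  have h2 : IsIrrefl α (fun a b => rS S b a) := ⟨rS_irrefl S⟩
  obtain ⟨m, hm, hmin⟩ :=
    (Finite.wellFounded_of_trans_of_irrefl (fun a b : α => rS S b a)).has_min C hC
  refine ⟨m, hm, fun x hx hxm => ?_⟩
  rcases rS_total (S := S) hxm with h | h
  · exact h
  · exact absurd h (hmin x hx)

def gPred (S : Set α) (e : α) : Set α := {x | rS S x e}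

noncomputable def gBase (M : Matroid α) (S : Set α) : Set α :=
  {e | e ∉ M.closure (gPred S e)}

lemma gPred_subset_closure (hME : M.E = Set.univ) (S : Set α) (e : α) :
    gPred S e ⊆ M.closure (gBase M S ∩ gPred S e) := by
  refine (rS_wf S).induction
    (C := fun e => gPred S e ⊆ M.closure (gBase M S ∩ gPred S e)) e ?_
  intro e IH x hx
  by_cases hxB : x ∈ gBase M S
  · exact M.subset_closure _ (sg hME _) ⟨hxB, hx⟩
  · have hxcl : x ∈ M.closure (gPred S x) := not_not.1 hxB
    have h1 : gPred S x ⊆ M.closure (gBase M S ∩ gPred S e) := by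
      intro y hy
      exact M.closure_subset_closure
        (Set.inter_subset_inter_right _ (fun z hz => rS_trans hz hx)) (IH x hx hy)
    exact M.closure_subset_closure_of_subset_closure h1 hxcl

lemma gBase_indep (hME : M.E = Set.univ) {S : Set α} : M.Indep (gBase M S) := by
  by_contra h
  obtain ⟨C, hCsub, hC⟩ := exists_circuit_subset (M.dep_of_not_indep h (sg hME _))
  obtain ⟨m, hm, hmax⟩ := exists_rS_max (S := S) hC.1.nonempty
  have h1 : C \ {m} ⊆ gPred S m :=
    fun x hx => hmax x hx.1 (fun he => hx.2 (Set.mem_singleton_iff.2 he))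
  exact (hCsub hm) (M.closure_subset_closure h1 (circuit_mem_closure hC hm))

lemma gBase_base (hME : M.E = Set.univ) {S : Set α} : M.IsBase (gBase M S) := by
  refine (gBase_indep hME).isBase_of_ground_subset_closure ?_
  intro e _
  by_cases he : e ∈ gBase M S
  · exact M.subset_closure _ (sg hME _) he
  · have h1 : e ∈ M.closure (gPred S e) := not_not.1 he
    exact M.closure_subset_closure_of_subset_closure
      ((gPred_subset_closure hME S e).trans
        (M.closure_subset_closure Set.inter_subset_left)) h1

lemma gBase_exchange (hME : M.E = Set.univ) {S : Set α} (hf : f ∉ gBase M S)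
    (hg : g ∈ gBase M S) (hbase : M.IsBase (insert f (gBase M S \ {g}))) : rS S g f := by
  have hfg : f ≠ g := fun h => hf (h ▸ hg)
  by_contra hgf
  have hsub : gBase M S ∩ gPred S f ⊆ gBase M S \ {g} := by
    rintro x ⟨hxB, hxp⟩
    exact ⟨hxB, fun hxg => hgf (Set.mem_singleton_iff.1 hxg ▸ hxp)⟩
  have hfcl : f ∈ M.closure (gBase M S \ {g}) := by
    have h1 : f ∈ M.closure (gPred S f) := not_not.1 hf
    exact M.closure_subset_closure_of_subset_closure
      ((gPred_subset_closure hME S f).trans (M.closure_subset_closure hsub)) h1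
  have hdep : M.Dep (insert f (gBase M S \ {g})) := by
    rw [((gBase_indep hME).subset Set.diff_subset).insert_dep_iff]
    exact ⟨hfcl, fun hmem => hf hmem.1⟩
  exact hdep.not_indep hbase.indep

/-! ### Activity via fundamental (co)circuits -/

lemma intSet_subset (M : Matroid α) (A : Set α) : IntSet M A ⊆ A := fun _ he => he.1

lemma extSet_disj (M : Matroid α) (A : Set α) : ∀ e ∈ ExtSet M A, e ∉ A := fun _ he => he.1

lemma intSet_iff_min (hME : M.E = Set.univ) (hB : M.IsBase B) (hg : g ∈ B)
    (hD : FCoP M B g D) : g ∈ IntSet M B ↔ IsMinOf D g := by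
  constructor
  · rintro ⟨-, C, hC, hCsub, hCmin⟩
    refine ⟨hD.2.2, fun f hf => ?_⟩
    rcases eq_or_ne f g with rfl | hfg
    · exact le_refl f
    have hf' := FCoP_base_of_mem hME hB hg hD hf hfg
    by_cases hfC : f ∈ C
    · exact hCmin.2 f hfC
    · obtain ⟨Dc, hDc⟩ := exists_FCP hME hB hf'.1
      have hgDc : g ∈ Dc := FCP_mem_of_base hDc hg hf'.2 hf'.1
      obtain ⟨h, hhDc, hhC, hhg⟩ := circuit_cocircuit hME hDc.1 hC hgDc hCmin.1
      have hhB : h ∉ B := by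
        rcases hCsub hhC with h1 | h2
        · exact h1
        · exact absurd (Set.mem_singleton_iff.1 h2) hhg
      have hhf : h = f := by
        rcases hDc.2.1 hhDc with h1 | h2
        · exact h1
        · exact absurd h2 hhB
      exact absurd (hhf ▸ hhC) hfC
  · intro hmin
    refine ⟨hg, D, hD.1, ?_, hmin⟩
    rw [Set.union_singleton]
    exact hD.2.1

lemma extSet_iff_min (hME : M.E = Set.univ) (hB : M.IsBase B) (hf : f ∉ B)
    (hD : FCP M B f D) : f ∈ ExtSet M B ↔ IsMinOf D f := by
  constructor
  · rintro ⟨-, C, hC, hCsub, hCmin⟩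
    have hCP : FCP M B f C := ⟨hC, by rwa [Set.union_singleton] at hCsub, hCmin.1⟩
    rw [← FCP_unique hME hB hf hCP hD]
    exact hCmin
  · intro hmin
    refine ⟨hf, D, hD.1, ?_, hmin⟩
    rw [Set.union_singleton]
    exact hD.2.1

/-! ### Facts about the greedy basis relative to `S` -/

lemma greedy_ext_min (hME : M.E = Set.univ) {S : Set α} (he : e ∈ S) (heB : e ∉ gBase M S)
    (hD : FCP M (gBase M S) e D) : IsMinOf D e ∧ D \ {e} ⊆ S ∩ gBase M S := by
  have hB : M.IsBase (gBase M S) := gBase_base hME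
  have key : ∀ g ∈ D, g ≠ e → g ∈ S ∧ e < g ∧ g ∈ gBase M S := by
    intro g hg hge
    have hgB : g ∈ gBase M S := (hD.2.1 hg).resolve_left hge
    have hbase : M.IsBase (insert e (gBase M S \ {g})) := FCP_base_of_mem hME hB heB hD hg hge
    have hrs : rS S g e := gBase_exchange hME heB hgB hbase
    rcases hrs with ⟨h1, h2⟩ | ⟨h1, h2, h3⟩ | ⟨h1, h2, h3⟩
    · exact absurd he h2
    · exact ⟨h1, h3, hgB⟩
    · exact absurd he h2
  constructor
  · refine ⟨hD.2.2, fun x hx => ?_⟩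
    rcases eq_or_ne x e with rfl | h
    · exact le_refl x
    · exact le_of_lt (key x hx h).2.1
  · rintro x ⟨hx, hxe⟩
    have h := key x hx (fun h' => hxe (Set.mem_singleton_iff.2 h'))
    exact ⟨h.1, h.2.2⟩

lemma greedy_int_min (hME : M.E = Set.univ) {S : Set α} (he : e ∈ gBase M S) (heS : e ∉ S)
    (hD : FCoP M (gBase M S) e D) : IsMinOf D e ∧ D \ {e} ⊆ Sᶜ := by
  have hB : M.IsBase (gBase M S) := gBase_base hME
  have key : ∀ f ∈ D, f ≠ e → f ∉ S ∧ e < f := by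
    intro f hf hfe
    have hf' := FCoP_base_of_mem hME hB he hD hf hfe
    have hrs : rS S e f := gBase_exchange hME hf'.1 he hf'.2
    rcases hrs with ⟨h1, h2⟩ | ⟨h1, h2, h3⟩ | ⟨h1, h2, h3⟩
    · exact absurd h1 heS
    · exact absurd h1 heS
    · exact ⟨h2, h3⟩
  constructor
  · refine ⟨hD.2.2, fun x hx => ?_⟩
    rcases eq_or_ne x e with rfl | h
    · exact le_refl x
    · exact le_of_lt (key x hx h).2
  · rintro x ⟨hx, hxe⟩
    exact (key x hx (fun h' => hxe (Set.mem_singleton_iff.2 h'))).1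

lemma greedy_int_min' (hME : M.E = Set.univ) {S : Set α} (he : e ∈ gBase M S) (heS : e ∈ S)
    (hD : FCoP M (gBase M S) e D) (hmin : IsMinOf D e) : D \ {e} ⊆ Sᶜ := by
  have hB : M.IsBase (gBase M S) := gBase_base hME
  rintro f ⟨hf, hfe'⟩
  have hfe : f ≠ e := fun h' => hfe' (Set.mem_singleton_iff.2 h')
  have hf' := FCoP_base_of_mem hME hB he hD hf hfe
  have hrs : rS S e f := gBase_exchange hME hf'.1 he hf'.2
  rcases hrs with ⟨h1, h2⟩ | ⟨h1, h2, h3⟩ | ⟨h1, h2, h3⟩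
  · exact h2
  · exact absurd h3 (not_lt.2 (hmin.2 f hf))
  · exact absurd heS h1

lemma greedy_P4 (hME : M.E = Set.univ) {S : Set α} :
    gBase M S \ S ⊆ IntSet M (gBase M S) := by
  rintro e ⟨heB, heS⟩
  obtain ⟨D, hD⟩ := exists_FCoP hME (gBase_base hME) heB
  exact (intSet_iff_min hME (gBase_base hME) heB hD).2 (greedy_int_min hME heB heS hD).1

lemma greedy_P5 (hME : M.E = Set.univ) {S : Set α} :
    S \ gBase M S ⊆ ExtSet M (gBase M S) := by
  rintro e ⟨heS, heB⟩
  obtain ⟨D, hD⟩ := exists_FCP hME (gBase_base hME) heB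
  exact (extSet_iff_min hME (gBase_base hME) heB hD).2 (greedy_ext_min hME heS heB hD).1

lemma greedy_P1 (hME : M.E = Set.univ) {S : Set α} : M.IsBasis (gBase M S ∩ S) S := by
  refine ((gBase_indep hME).inter_right S).isBasis_of_forall_insert Set.inter_subset_right ?_
  rintro e ⟨heS, heI⟩
  have heB : e ∉ gBase M S := fun h => heI ⟨h, heS⟩
  obtain ⟨D, hD⟩ := exists_FCP hME (gBase_base hME) heB
  have hL := greedy_ext_min hME heS heB hD
  refine hD.1.1.superset ?_ (sg hME _)
  intro x hx
  rcases eq_or_ne x e with rfl | hxe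
  · exact Set.mem_insert _ _
  · have h := hL.2 ⟨hx, fun h' => hxe (Set.mem_singleton_iff.1 h')⟩
    exact Set.mem_insert_of_mem _ ⟨h.2, h.1⟩

lemma greedy_P2 (hME : M.E = Set.univ) {S : Set α} :
    IntSet M S = IntSet M (gBase M S) ∩ S := by
  have hB : M.IsBase (gBase M S) := gBase_base hME
  ext e
  constructor
  · rintro ⟨heS, C, hC, hCsub, hCmin⟩
    have heB : e ∈ gBase M S := by
      by_contra heB
      obtain ⟨D, hD⟩ := exists_FCP hME hB heB
      have hL := greedy_ext_min hME heS heB hD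
      obtain ⟨g, hgD, hgC, hge⟩ := circuit_cocircuit hME hD.1 hC hD.2.2 hCmin.1
      have h1 : g ∉ S := by
        rcases hCsub hgC with h | h
        · exact h
        · exact absurd (Set.mem_singleton_iff.1 h) hge
      exact h1 (hL.2 ⟨hgD, fun h' => hge (Set.mem_singleton_iff.1 h')⟩).1
    refine ⟨?_, heS⟩
    obtain ⟨D, hD⟩ := exists_FCoP hME hB heB
    refine (intSet_iff_min hME hB heB hD).2 ⟨hD.2.2, fun f hf => ?_⟩
    rcases eq_or_ne f e with rfl | hfe
    · exact le_refl f
    have hfB := FCoP_base_of_mem hME hB heB hD hf hfe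
    by_cases hfC : f ∈ C
    · exact hCmin.2 f hfC
    · obtain ⟨Dc, hDc⟩ := exists_FCP hME hB hfB.1
      have heDc : e ∈ Dc := FCP_mem_of_base hDc heB hfB.2 hfB.1
      obtain ⟨g, hgDc, hgC, hge⟩ := circuit_cocircuit hME hDc.1 hC heDc hCmin.1
      have hgS : g ∉ S := by
        rcases hCsub hgC with h | h
        · exact h
        · exact absurd (Set.mem_singleton_iff.1 h) hge
      have hgB : g ∈ gBase M S := by
        rcases hDc.2.1 hgDc with h | h
        · exact absurd (h ▸ hgC) hfC
        · exact h
      have hgf : g ≠ f := fun h => hfC (h ▸ hgC)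
      have hbase2 : M.IsBase (insert f (gBase M S \ {g})) :=
        FCP_base_of_mem hME hB hfB.1 hDc hgDc hgf
      have hrs : rS S g f := gBase_exchange hME hfB.1 hgB hbase2
      have h3 : g < f := by
        rcases hrs with ⟨h1, h2⟩ | ⟨h1, h2, _⟩ | ⟨h1, h2, h3⟩
        · exact absurd h1 hgS
        · exact absurd h1 hgS
        · exact h3
      have heg : e < g := lt_of_le_of_ne (hCmin.2 g hgC) (Ne.symm hge)
      exact le_of_lt (heg.trans h3)
  · rintro ⟨heInt, heS⟩
    have heB : e ∈ gBase M S := heInt.1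
    obtain ⟨D, hD⟩ := exists_FCoP hME hB heB
    have hmin : IsMinOf D e := (intSet_iff_min hME hB heB hD).1 heInt
    have hsub := greedy_int_min' hME heB heS hD hmin
    refine ⟨heS, D, hD.1, ?_, hmin⟩
    intro x hx
    rcases eq_or_ne x e with rfl | hxe
    · exact Or.inr rfl
    · exact Or.inl (hsub ⟨hx, fun h' => hxe (Set.mem_singleton_iff.1 h')⟩)

lemma greedy_P3 (hME : M.E = Set.univ) {S : Set α} :
    ExtSet M S = ExtSet M (gBase M S) \ S := by
  have hB : M.IsBase (gBase M S) := gBase_base hME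
  ext f
  constructor
  · rintro ⟨hfS, D, hD, hDsub, hDmin⟩
    have hfB : f ∉ gBase M S := by
      intro hfB
      obtain ⟨Ds, hDs⟩ := exists_FCoP hME hB hfB
      have hL := greedy_int_min hME hfB hfS hDs
      obtain ⟨h, hhD, hhDs, hhf⟩ := circuit_cocircuit hME hD hDs.1 hDmin.1 hDs.2.2
      have h1 : h ∈ S := by
        rcases hDsub hhD with h' | h'
        · exact h'
        · exact absurd (Set.mem_singleton_iff.1 h') hhf
      exact (hL.2 ⟨hhDs, fun h' => hhf (Set.mem_singleton_iff.1 h')⟩) h1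
    refine ⟨?_, hfS⟩
    obtain ⟨Dc, hDc⟩ := exists_FCP hME hB hfB
    refine (extSet_iff_min hME hB hfB hDc).2 ⟨hDc.2.2, fun g hg => ?_⟩
    rcases eq_or_ne g f with rfl | hgf'
    · exact le_refl g
    have hgB : g ∈ gBase M S := (hDc.2.1 hg).resolve_left hgf'
    have hbase : M.IsBase (insert f (gBase M S \ {g})) :=
      FCP_base_of_mem hME hB hfB hDc hg hgf'
    by_cases hgD : g ∈ D
    · exact hDmin.2 g hgD
    · obtain ⟨Ds, hDs⟩ := exists_FCoP hME hB hgB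
      have hfDs : f ∈ Ds := FCoP_mem_of_base hME hB hgB hDs hfB hbase
      obtain ⟨h, hhD, hhDs, hhf⟩ := circuit_cocircuit hME hD hDs.1 hDmin.1 hfDs
      have hhS : h ∈ S := by
        rcases hDsub hhD with h' | h'
        · exact h'
        · exact absurd (Set.mem_singleton_iff.1 h') hhf
      have hfh : f < h := lt_of_le_of_ne (hDmin.2 h hhD) (Ne.symm hhf)
      have hhg : h ≠ g := fun hh => hgD (hh ▸ hhD)
      have hhB := FCoP_base_of_mem hME hB hgB hDs hhDs hhg
      have hrs : rS S g h := gBase_exchange hME hhB.1 hgB hhB.2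
      rcases hrs with ⟨h1, h2⟩ | ⟨h1, h2, h3⟩ | ⟨h1, h2, h3⟩
      · exact absurd hhS h2
      · exact le_of_lt (hfh.trans h3)
      · exact absurd hhS h2
  · rintro ⟨hfExt, hfS⟩
    have hfB : f ∉ gBase M S := hfExt.1
    obtain ⟨Dc, hDc⟩ := exists_FCP hME hB hfB
    have hmin := (extSet_iff_min hME hB hfB hDc).1 hfExt
    have hsub : Dc \ {f} ⊆ S := by
      rintro g ⟨hg, hgf'⟩
      have hgf : g ≠ f := fun h' => hgf' (Set.mem_singleton_iff.2 h')
      have hgB : g ∈ gBase M S := (hDc.2.1 hg).resolve_left hgf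
      have hbase := FCP_base_of_mem hME hB hfB hDc hg hgf
      have hrs := gBase_exchange hME hfB hgB hbase
      rcases hrs with ⟨h1, h2⟩ | ⟨h1, h2, h3⟩ | ⟨h1, h2, h3⟩
      · exact h1
      · exact absurd h2 hfS
      · exact absurd h3 (not_lt.2 (hmin.2 g hg))
    refine ⟨hfS, Dc, hDc.1, ?_, hmin⟩
    intro x hx
    rcases eq_or_ne x f with rfl | hxf
    · exact Or.inr rfl
    · exact Or.inl (hsub ⟨hx, fun h' => hxf (Set.mem_singleton_iff.1 h')⟩)

lemma greedy_P6 (hME : M.E = Set.univ) {S B' : Set α} (hB' : M.IsBase B')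
    (hInt : B' \ S ⊆ IntSet M B') (hExt : S \ B' ⊆ ExtSet M B') : B' = gBase M S := by
  ext e
  simp only [gBase, Set.mem_setOf_eq]
  constructor
  · intro heB'
    obtain ⟨D, hD⟩ := exists_FCoP hME hB' heB'
    intro hecl
    have hsub : gPred S e ⊆ Dᶜ := by
      intro x hx hxD
      have hxe : x ≠ e := fun h => rS_irrefl S e (h ▸ hx)
      have hxB := FCoP_base_of_mem hME hB' heB' hD hxD hxe
      rcases hx with ⟨hxS, heS⟩ | ⟨hxS, heS, hlt⟩ | ⟨hxS, heS, hlt⟩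
      · have heInt : e ∈ IntSet M B' := hInt ⟨heB', heS⟩
        have hemin : IsMinOf D e := (intSet_iff_min hME hB' heB' hD).1 heInt
        have hxExt : x ∈ ExtSet M B' := hExt ⟨hxS, hxB.1⟩
        obtain ⟨Dc, hDc⟩ := exists_FCP hME hB' hxB.1
        have hxmin := (extSet_iff_min hME hB' hxB.1 hDc).1 hxExt
        have heDc : e ∈ Dc := FCP_mem_of_base hDc heB' hxB.2 hxB.1
        exact hxe (le_antisymm (hxmin.2 e heDc) (hemin.2 x hxD))
      · have hxExt : x ∈ ExtSet M B' := hExt ⟨hxS, hxB.1⟩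
        obtain ⟨Dc, hDc⟩ := exists_FCP hME hB' hxB.1
        have hxmin := (extSet_iff_min hME hB' hxB.1 hDc).1 hxExt
        have heDc : e ∈ Dc := FCP_mem_of_base hDc heB' hxB.2 hxB.1
        exact absurd (hxmin.2 e heDc) (not_le.2 hlt)
      · have heInt : e ∈ IntSet M B' := hInt ⟨heB', heS⟩
        have hemin := (intSet_iff_min hME hB' heB' hD).1 heInt
        exact absurd (hemin.2 x hxD) (not_le.2 hlt)
    exact cocircuit_compl_closure hME hD.1 hD.2.2 (M.closure_subset_closure hsub hecl)
  · intro hecl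
    by_contra heB'
    obtain ⟨Dc, hDc⟩ := exists_FCP hME hB' heB'
    apply hecl
    have hsub : Dc \ {e} ⊆ gPred S e := by
      rintro g ⟨hg, hge'⟩
      have hge : g ≠ e := fun h' => hge' (Set.mem_singleton_iff.2 h')
      have hgB' : g ∈ B' := (hDc.2.1 hg).resolve_left hge
      have hbase : M.IsBase (insert e (B' \ {g})) := FCP_base_of_mem hME hB' heB' hDc hg hge
      by_cases heS : e ∈ S
      · have heExt : e ∈ ExtSet M B' := hExt ⟨heS, heB'⟩
        have hemin := (extSet_iff_min hME hB' heB' hDc).1 heExt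
        have helt : e < g := lt_of_le_of_ne (hemin.2 g hg) (Ne.symm hge)
        by_cases hgS : g ∈ S
        · exact Or.inr (Or.inl ⟨hgS, heS, helt⟩)
        · have hgInt : g ∈ IntSet M B' := hInt ⟨hgB', hgS⟩
          obtain ⟨Ds, hDs⟩ := exists_FCoP hME hB' hgB'
          have hgmin := (intSet_iff_min hME hB' hgB' hDs).1 hgInt
          have heDs : e ∈ Ds := FCoP_mem_of_base hME hB' hgB' hDs heB' hbase
          exact absurd (hgmin.2 e heDs) (not_le.2 helt)
      · by_cases hgS : g ∈ S
        · exact Or.inl ⟨hgS, heS⟩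
        · have hgInt : g ∈ IntSet M B' := hInt ⟨hgB', hgS⟩
          obtain ⟨Ds, hDs⟩ := exists_FCoP hME hB' hgB'
          have hgmin := (intSet_iff_min hME hB' hgB' hDs).1 hgInt
          have heDs : e ∈ Ds := FCoP_mem_of_base hME hB' hgB' hDs heB' hbase
          exact Or.inr (Or.inr ⟨hgS, heS, lt_of_le_of_ne (hgmin.2 e heDs) hge⟩)
    exact M.closure_subset_closure hsub (circuit_mem_closure hDc.1 hDc.2.2)

/-! ### Rank -/

lemma rk'_eq (hME : M.E = Set.univ) {I A : Set α} (hIA : M.IsBasis I A) : M.rk' A = I.ncard := by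
  have hub : ∀ n ∈ {n : ℕ | ∃ J, J ⊆ A ∧ M.Indep J ∧ J.ncard = n}, n ≤ I.ncard := by
    rintro n ⟨J, hJA, hJ, rfl⟩
    obtain ⟨J', hJ', hJJ'⟩ := hJ.subset_isBasis_of_subset hJA (sg hME A)
    have h1 : J'.encard = I.encard := hJ'.encard_eq_encard hIA
    have h2 : J.ncard ≤ J'.ncard := Set.ncard_le_ncard hJJ' (Set.toFinite J')
    have h3 : J'.ncard = I.ncard := by rw [Set.ncard, Set.ncard, h1]
    rwa [h3] at h2
  refine le_antisymm (csSup_le ⟨0, ∅, Set.empty_subset A, M.empty_indep, by simp⟩ hub)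
    (le_csSup ⟨I.ncard, hub⟩ ⟨I, hIA.subset, hIA.indep, rfl⟩)

lemma rk'_univ (hME : M.E = Set.univ) (hB : M.IsBase B) : M.rk' Set.univ = B.ncard := by
  refine rk'_eq hME ?_
  have := hB.isBasis_ground
  rwa [hME] at this

/-! ### Finset-level machinery -/

open scoped Classical in
noncomputable def IAF (M : Matroid α) (B : Finset α) : Finset α :=
  (Set.toFinite (IntSet M ↑B)).toFinset

open scoped Classical in
noncomputable def EAF (M : Matroid α) (B : Finset α) : Finset α :=
  (Set.toFinite (ExtSet M ↑B)).toFinset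

noncomputable def gBF (M : Matroid α) (S : Finset α) : Finset α :=
  (Set.toFinite (gBase M ↑S)).toFinset

@[simp] lemma coe_IAF (M : Matroid α) (B : Finset α) : ↑(IAF M B) = IntSet M ↑B :=
  Set.Finite.coe_toFinset _

@[simp] lemma coe_EAF (M : Matroid α) (B : Finset α) : ↑(EAF M B) = ExtSet M ↑B :=
  Set.Finite.coe_toFinset _

@[simp] lemma coe_gBF (M : Matroid α) (S : Finset α) : ↑(gBF M S) = gBase M ↑S :=
  Set.Finite.coe_toFinset _

lemma reconstruct (hME : M.E = Set.univ) {B I X : Finset α} (hB : M.IsBase (↑B : Set α))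
    (hI : I ⊆ IAF M B) (hX : X ⊆ EAF M B) :
    (↑B : Set α) = gBase M ↑((B \ I) ∪ X) ∧
    (↑B : Set α) \ ↑((B \ I) ∪ X) = ↑I ∧ (↑((B \ I) ∪ X) : Set α) \ ↑B = ↑X := by
  have hcoe : (↑((B \ I) ∪ X) : Set α) = ((↑B : Set α) \ ↑I) ∪ ↑X := by
    simp [Finset.coe_union, Finset.coe_sdiff]
  have hIsub : (↑I : Set α) ⊆ IntSet M ↑B := by
    have h := Finset.coe_subset.2 hI
    rwa [coe_IAF] at h
  have hXsub : (↑X : Set α) ⊆ ExtSet M ↑B := by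
    have h := Finset.coe_subset.2 hX
    rwa [coe_EAF] at h
  have hIB : (↑I : Set α) ⊆ ↑B := hIsub.trans (intSet_subset M _)
  have hXnB : ∀ z ∈ (↑X : Set α), z ∉ (↑B : Set α) := fun z hz => (hXsub hz).1
  have hBS1 : (↑B : Set α) \ ↑((B \ I) ∪ X) = ↑I := by
    rw [hcoe]
    ext z
    simp only [Set.mem_diff, Set.mem_union, not_or, not_and, not_not]
    constructor
    · rintro ⟨hzB, hz2, -⟩
      exact hz2 hzB
    · intro hzI
      exact ⟨hIB hzI, fun _ => hzI, fun hzX => absurd (hIB hzI) (hXnB z hzX)⟩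
  have hBS2 : (↑((B \ I) ∪ X) : Set α) \ ↑B = ↑X := by
    rw [hcoe]
    ext z
    simp only [Set.mem_diff, Set.mem_union]
    constructor
    · rintro ⟨h1 | h2, hzB⟩
      · exact absurd h1.1 hzB
      · exact h2
    · intro hzX
      exact ⟨Or.inr hzX, hXnB z hzX⟩
  refine ⟨?_, hBS1, hBS2⟩
  refine greedy_P6 hME hB ?_ ?_
  · rw [hBS1]; exact hIsub
  · rw [hBS2]; exact hXsub

lemma facts (hME : M.E = Set.univ) {B I X : Finset α} (hB : M.IsBase (↑B : Set α))
    (hI : I ⊆ IAF M B) (hX : X ⊆ EAF M B) :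
    (M.rk' Set.univ - M.rk' ↑((B \ I) ∪ X) = I.card) ∧
    (((B \ I) ∪ X).card - M.rk' ↑((B \ I) ∪ X) = X.card) ∧
    ((IntSet M ↑((B \ I) ∪ X)).ncard = (IAF M B).card - I.card) ∧
    ((ExtSet M ↑((B \ I) ∪ X)).ncard = (EAF M B).card - X.card) := by
  obtain ⟨hgB, hBS1, hBS2⟩ := reconstruct hME hB hI hX
  have hcoe : (↑((B \ I) ∪ X) : Set α) = ((↑B : Set α) \ ↑I) ∪ ↑X := by
    simp [Finset.coe_union, Finset.coe_sdiff]
  have hIsub : (↑I : Set α) ⊆ IntSet M ↑B := by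
    have h := Finset.coe_subset.2 hI
    rwa [coe_IAF] at h
  have hXsub : (↑X : Set α) ⊆ ExtSet M ↑B := by
    have h := Finset.coe_subset.2 hX
    rwa [coe_EAF] at h
  have hIB : (↑I : Set α) ⊆ ↑B := hIsub.trans (intSet_subset M _)
  have hIBf : I ⊆ B := Finset.coe_subset.1 hIB
  have hXnB : ∀ z ∈ (↑X : Set α), z ∉ (↑B : Set α) := fun z hz => (hXsub hz).1
  have hXnBf : ∀ z ∈ X, z ∉ B := fun z hz hzB =>
    hXnB z (Finset.mem_coe.2 hz) (Finset.mem_coe.2 hzB)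
  have hbasis : M.IsBasis ((↑B : Set α) ∩ ↑((B \ I) ∪ X)) ↑((B \ I) ∪ X) := by
    have h := greedy_P1 (M := M) hME (S := (↑((B \ I) ∪ X) : Set α))
    rwa [← hgB] at h
  have hBint : (↑B : Set α) ∩ ↑((B \ I) ∪ X) = ↑B \ ↑I := by
    rw [hcoe]
    ext z
    simp only [Set.mem_inter_iff, Set.mem_union, Set.mem_diff]
    constructor
    · rintro ⟨hzB, h1 | h2⟩
      · exact h1
      · exact absurd hzB (hXnB z h2)
    · rintro ⟨hzB, hzI⟩
      exact ⟨hzB, Or.inl ⟨hzB, hzI⟩⟩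
  have hrkS : M.rk' ↑((B \ I) ∪ X) = B.card - I.card := by
    rw [rk'_eq hME hbasis, hBint, ← Finset.coe_sdiff, Set.ncard_coe_finset,
      Finset.card_sdiff_of_subset hIBf]
  have hrkU : M.rk' Set.univ = B.card := by
    rw [rk'_univ hME hB, Set.ncard_coe_finset]
  have hIcard : I.card ≤ B.card := Finset.card_le_card hIBf
  have hdisj : Disjoint (B \ I) X := by
    rw [Finset.disjoint_left]
    intro a ha haX
    exact absurd (Finset.mem_sdiff.1 ha).1 (hXnBf a haX)
  have hcardS : ((B \ I) ∪ X).card = (B.card - I.card) + X.card := by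
    rw [Finset.card_union_of_disjoint hdisj, Finset.card_sdiff_of_subset hIBf]
  have hIntS : IntSet M ↑((B \ I) ∪ X) = IntSet M ↑B \ ↑I := by
    rw [greedy_P2 hME, ← hgB]
    ext z
    constructor
    · rintro ⟨hzInt, hzS⟩
      refine ⟨hzInt, fun hzI => ?_⟩
      rw [hcoe] at hzS
      rcases hzS with h | h
      · exact h.2 hzI
      · exact hXnB z h (intSet_subset M _ hzInt)
    · rintro ⟨hzInt, hzI⟩
      refine ⟨hzInt, ?_⟩
      rw [hcoe]
      exact Or.inl ⟨intSet_subset M _ hzInt, hzI⟩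
  have hExtS : ExtSet M ↑((B \ I) ∪ X) = ExtSet M ↑B \ ↑X := by
    rw [greedy_P3 hME, ← hgB]
    ext z
    constructor
    · rintro ⟨hzE, hzS⟩
      refine ⟨hzE, fun hzX => hzS ?_⟩
      rw [hcoe]
      exact Or.inr hzX
    · rintro ⟨hzE, hzX⟩
      refine ⟨hzE, fun hzS => ?_⟩
      rw [hcoe] at hzS
      rcases hzS with h | h
      · exact (extSet_disj M _ _ hzE) h.1
      · exact hzX h
  refine ⟨?_, ?_, ?_, ?_⟩
  · rw [hrkU, hrkS]; omega
  · rw [hcardS, hrkS]; omega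
  · rw [hIntS, ← coe_IAF, ← Finset.coe_sdiff, Set.ncard_coe_finset, Finset.card_sdiff_of_subset hI]
  · rw [hExtS, ← coe_EAF, ← Finset.coe_sdiff, Set.ncard_coe_finset, Finset.card_sdiff_of_subset hX]

open scoped Classical in
noncomputable def sigT (M : Matroid α) : Finset ((_ : Finset α) × Finset α × Finset α) :=
  (Finset.univ.filter (fun B : Finset α => M.IsBase ↑B)).sigma
    (fun B => (IAF M B).powerset ×ˢ (EAF M B).powerset)

lemma sum_decomp (hME : M.E = Set.univ) {R : Type*} [CommRing R] (t : Finset α → R) :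
    ∑ A : Finset α, t A = ∑ p ∈ sigT M, t ((p.1 \ p.2.1) ∪ p.2.2) := by
  classical
  have hLI : ∀ A : Finset α, (gBF M A \ (gBF M A \ A)) ∪ (A \ gBF M A) = A := by
    intro A
    ext z
    simp only [Finset.mem_union, Finset.mem_sdiff]
    tauto
  refine Finset.sum_nbij' (fun A => ⟨gBF M A, (gBF M A \ A, A \ gBF M A)⟩)
    (fun p => (p.1 \ p.2.1) ∪ p.2.2) ?_ ?_ ?_ ?_ ?_
  · intro A _
    simp only [sigT, Finset.mem_sigma, Finset.mem_filter, Finset.mem_univ, true_and,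
      Finset.mem_product, Finset.mem_powerset]
    refine ⟨?_, ?_, ?_⟩
    · rw [coe_gBF]; exact gBase_base hME
    · rw [← Finset.coe_subset, Finset.coe_sdiff, coe_gBF, coe_IAF, coe_gBF]
      exact greedy_P4 hME
    · rw [← Finset.coe_subset, Finset.coe_sdiff, coe_gBF, coe_EAF, coe_gBF]
      exact greedy_P5 hME
  · intro p _
    exact Finset.mem_univ _
  · intro A _
    exact hLI A
  · rintro ⟨B, I, X⟩ hp
    simp only [sigT, Finset.mem_sigma, Finset.mem_filter, Finset.mem_univ, true_and,
      Finset.mem_product, Finset.mem_powerset] at hp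
    obtain ⟨hB, hI, hX⟩ := hp
    obtain ⟨hgB, hBS1, hBS2⟩ := reconstruct hME hB hI hX
    have h1 : gBF M ((B \ I) ∪ X) = B := by
      apply Finset.coe_injective
      rw [coe_gBF, ← hgB]
    have h2 : B \ ((B \ I) ∪ X) = I := by
      apply Finset.coe_injective
      rw [Finset.coe_sdiff]
      exact hBS1
    have h3 : ((B \ I) ∪ X) \ B = X := by
      apply Finset.coe_injective
      rw [Finset.coe_sdiff]
      exact hBS2
    show (⟨gBF M ((B \ I) ∪ X), (gBF M ((B \ I) ∪ X) \ ((B \ I) ∪ X),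
        ((B \ I) ∪ X) \ gBF M ((B \ I) ∪ X))⟩ : (_ : Finset α) × Finset α × Finset α)
      = ⟨B, (I, X)⟩
    rw [h1, h2, h3]
  · intro A _
    rw [show ((gBF M A \ (gBF M A \ A)) ∪ (A \ gBF M A)) = A from hLI A]

lemma sum_pow_powerset {R : Type*} [CommRing R] (T : Finset α) (a b : R) :
    ∑ I ∈ T.powerset, a ^ I.card * b ^ (T.card - I.card) = (a + b) ^ T.card := by
  calc ∑ I ∈ T.powerset, a ^ I.card * b ^ (T.card - I.card)
      = ∑ I ∈ T.powerset, (∏ _i ∈ I, a) * ∏ _i ∈ T \ I, b := by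
        refine Finset.sum_congr rfl fun I hI => ?_
        rw [Finset.prod_const, Finset.prod_const, Finset.card_sdiff_of_subset (Finset.mem_powerset.1 hI)]
    _ = ∏ _i ∈ T, (a + b) := (Finset.prod_add _ _ T).symm
    _ = (a + b) ^ T.card := by rw [Finset.prod_const]

lemma sum_pow_card {R : Type*} [CommRing R] (T : Finset α) (a : R) :
    ∑ I ∈ T.powerset, a ^ I.card = (a + 1) ^ T.card := by
  have h := sum_pow_powerset T a (1 : R)
  simpa using h

end TutteAux3
/-- The 4-variable expansion of the Tutte polynomial of a matroid:
`t(M; x+u, y+v) = Σ_{A⊆E} x^|Int_M(A)| u^{r(M)−r_M(A)} y^|Ext_M(A)| v^{|A|−r_M(A)}`. -/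
theorem stmt3 {α : Type*} [Fintype α] [LinearOrder α] (M : Matroid α)
    (hME : M.E = Set.univ)
    {R : Type*} [CommRing R] (x u y v : R) :
    ∑ A : Finset α,
        (x + u - 1) ^ (M.rk' Set.univ - M.rk' ↑A) *
          (y + v - 1) ^ (A.card - M.rk' ↑A) =
      ∑ A : Finset α,
        x ^ (IntSet M ↑A).ncard * u ^ (M.rk' Set.univ - M.rk' ↑A) *
          y ^ (ExtSet M ↑A).ncard * v ^ (A.card - M.rk' ↑A) := by
  classical
  rw [TutteAux3.sum_decomp hME (fun A : Finset α =>
        (x + u - 1) ^ (M.rk' Set.univ - M.rk' ↑A) * (y + v - 1) ^ (A.card - M.rk' ↑A)),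
      TutteAux3.sum_decomp hME (fun A : Finset α =>
        x ^ (IntSet M ↑A).ncard * u ^ (M.rk' Set.univ - M.rk' ↑A) * y ^ (ExtSet M ↑A).ncard *
          v ^ (A.card - M.rk' ↑A))]
  simp only [TutteAux3.sigT]
  rw [Finset.sum_sigma, Finset.sum_sigma]
  refine Finset.sum_congr rfl fun B hB => ?_
  have hBbase : M.IsBase (↑B : Set α) := (Finset.mem_filter.1 hB).2
  rw [Finset.sum_product, Finset.sum_product]
  have key : ∀ I ∈ (TutteAux3.IAF M B).powerset, ∀ X ∈ (TutteAux3.EAF M B).powerset,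
      (M.rk' Set.univ - M.rk' ↑((B \ I) ∪ X) = I.card) ∧
      (((B \ I) ∪ X).card - M.rk' ↑((B \ I) ∪ X) = X.card) ∧
      ((IntSet M ↑((B \ I) ∪ X)).ncard = (TutteAux3.IAF M B).card - I.card) ∧
      ((ExtSet M ↑((B \ I) ∪ X)).ncard = (TutteAux3.EAF M B).card - X.card) :=
    fun I hI X hX =>
      TutteAux3.facts hME hBbase (Finset.mem_powerset.1 hI) (Finset.mem_powerset.1 hX)
  have hL : (∑ I ∈ (TutteAux3.IAF M B).powerset, ∑ X ∈ (TutteAux3.EAF M B).powerset,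
      (x + u - 1) ^ (M.rk' Set.univ - M.rk' ↑((B \ I) ∪ X)) *
        (y + v - 1) ^ (((B \ I) ∪ X).card - M.rk' ↑((B \ I) ∪ X))) =
      (x + u) ^ (TutteAux3.IAF M B).card * (y + v) ^ (TutteAux3.EAF M B).card := by
    calc (∑ I ∈ (TutteAux3.IAF M B).powerset, ∑ X ∈ (TutteAux3.EAF M B).powerset,
        (x + u - 1) ^ (M.rk' Set.univ - M.rk' ↑((B \ I) ∪ X)) *
          (y + v - 1) ^ (((B \ I) ∪ X).card - M.rk' ↑((B \ I) ∪ X)))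
        = ∑ I ∈ (TutteAux3.IAF M B).powerset, ∑ X ∈ (TutteAux3.EAF M B).powerset,
            (x + u - 1) ^ I.card * (y + v - 1) ^ X.card := by
          refine Finset.sum_congr rfl fun I hI => Finset.sum_congr rfl fun X hX => ?_
          obtain ⟨h1, h2, -, -⟩ := key I hI X hX
          rw [h1, h2]
      _ = (∑ I ∈ (TutteAux3.IAF M B).powerset, (x + u - 1) ^ I.card) *
            (∑ X ∈ (TutteAux3.EAF M B).powerset, (y + v - 1) ^ X.card) :=
          (Finset.sum_mul_sum _ _ _ _).symm
      _ = (x + u) ^ (TutteAux3.IAF M B).card * (y + v) ^ (TutteAux3.EAF M B).card := by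
          rw [TutteAux3.sum_pow_card, TutteAux3.sum_pow_card,
            show x + u - 1 + 1 = x + u by ring, show y + v - 1 + 1 = y + v by ring]
  have hR : (∑ I ∈ (TutteAux3.IAF M B).powerset, ∑ X ∈ (TutteAux3.EAF M B).powerset,
      x ^ (IntSet M ↑((B \ I) ∪ X)).ncard * u ^ (M.rk' Set.univ - M.rk' ↑((B \ I) ∪ X)) *
        y ^ (ExtSet M ↑((B \ I) ∪ X)).ncard *
          v ^ (((B \ I) ∪ X).card - M.rk' ↑((B \ I) ∪ X))) =
      (x + u) ^ (TutteAux3.IAF M B).card * (y + v) ^ (TutteAux3.EAF M B).card := by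
    calc (∑ I ∈ (TutteAux3.IAF M B).powerset, ∑ X ∈ (TutteAux3.EAF M B).powerset,
        x ^ (IntSet M ↑((B \ I) ∪ X)).ncard * u ^ (M.rk' Set.univ - M.rk' ↑((B \ I) ∪ X)) *
          y ^ (ExtSet M ↑((B \ I) ∪ X)).ncard *
            v ^ (((B \ I) ∪ X).card - M.rk' ↑((B \ I) ∪ X)))
        = ∑ I ∈ (TutteAux3.IAF M B).powerset, ∑ X ∈ (TutteAux3.EAF M B).powerset,
            (u ^ I.card * x ^ ((TutteAux3.IAF M B).card - I.card)) *
              (v ^ X.card * y ^ ((TutteAux3.EAF M B).card - X.card)) := by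
          refine Finset.sum_congr rfl fun I hI => Finset.sum_congr rfl fun X hX => ?_
          obtain ⟨h1, h2, h3, h4⟩ := key I hI X hX
          rw [h1, h2, h3, h4]; ring
      _ = (∑ I ∈ (TutteAux3.IAF M B).powerset,
              u ^ I.card * x ^ ((TutteAux3.IAF M B).card - I.card)) *
            (∑ X ∈ (TutteAux3.EAF M B).powerset,
              v ^ X.card * y ^ ((TutteAux3.EAF M B).card - X.card)) :=
          (Finset.sum_mul_sum _ _ _ _).symm
      _ = (u + x) ^ (TutteAux3.IAF M B).card * (v + y) ^ (TutteAux3.EAF M B).card := by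
          rw [TutteAux3.sum_pow_powerset, TutteAux3.sum_pow_powerset]
      _ = (x + u) ^ (TutteAux3.IAF M B).card * (y + v) ^ (TutteAux3.EAF M B).card := by
          rw [add_comm u x, add_comm v y]
  exact hL.trans hR.symm
end

section
/- Let M→N be a matroid perspective on a finite linearly ordered ground set E. Then for all elements x, y, z of a commutative ring, Σ_{A⊆E} (x−1)^{r(N)−r_N(A)} · (y−1)^{|A|−r_M(A)} · z^{(r(M)−r_M(A))−(r(N)−r_N(A))} = Σ_{B} x^{|Int_N(B)|} · y^{|Ext_M(B)|} · z^{(r(M)−r_M(B))−(r(N)−r_N(B))}, where the second sum is over all B ⊆ E that are independent in M and spanning in N. -/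
open Set

set_option linter.unusedSectionVars false

namespace MPAux

variable {α : Type*} [Fintype α] [LinearOrder α] {M : Matroid α} {C D X Y I A B : Set α} {e f : α}

lemma gr (hE : M.E = univ) (X : Set α) : X ⊆ M.E := hE ▸ Set.subset_univ X

lemma fin (X : Set α) : X.Finite := Set.toFinite X

private lemma circ_aux (hE : M.E = univ) :
    ∀ n, ∀ D : Set α, D.ncard ≤ n → M.Dep D → ∃ C ⊆ D, M.IsCircuit' C := by
  intro n
  induction n with
  | zero => intro D hle hD
            simp only [Nat.le_zero, Set.ncard_eq_zero (fin D)] at hle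
            exact absurd (hle ▸ hD.nonempty) (by simp)
  | succ n IH =>
    intro D hle hD
    by_cases h : ∀ D', M.Dep D' → D' ⊆ D → D' = D
    · exact ⟨D, Subset.rfl, hD, h⟩
    · push_neg at h
      obtain ⟨D', hD', hsub, hne⟩ := h
      obtain ⟨C, hCD, hC⟩ := IH D' (by
        have := Set.ncard_lt_ncard (ssubset_of_subset_of_ne hsub hne) (fin D)
        omega) hD'
      exact ⟨C, hCD.trans hsub, hC⟩

lemma exists_circuit_subset_of_dep (hE : M.E = univ) (hD : M.Dep D) :
    ∃ C ⊆ D, M.IsCircuit' C :=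
  circ_aux hE D.ncard D le_rfl hD

lemma circuit_diff_indep (hE : M.E = univ) (hC : M.IsCircuit' C) (he : e ∈ C) :
    M.Indep (C \ {e}) := by
  by_contra h
  have hdep : M.Dep (C \ {e}) := Matroid.dep_of_not_indep h (gr hE _)
  have := hC.2 _ hdep diff_subset
  exact (this ▸ he).2 rfl

lemma circuit_mem_closure_diff (hE : M.E = univ) (hC : M.IsCircuit' C) (he : e ∈ C) :
    e ∈ M.closure (C \ {e}) := by
  have hI := circuit_diff_indep hE hC he
  have hins : insert e (C \ {e}) = C := insert_diff_singleton.trans (by simp [he])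
  have hdep : M.Dep (insert e (C \ {e})) := by rw [hins]; exact hC.1
  exact (hI.insert_dep_iff.1 hdep).1

lemma circuit_subset_closure (hE : M.E = univ) (hC : M.IsCircuit' C) (he : e ∈ C)
    (hsub : C \ {e} ⊆ X) : e ∈ M.closure X :=
  M.closure_subset_closure hsub (circuit_mem_closure_diff hE hC he)

lemma exists_fund_circuit (hE : M.E = univ) (hI : M.Indep I) (heI : e ∉ I)
    (he : e ∈ M.closure I) : ∃ C, M.IsCircuit' C ∧ C ⊆ insert e I ∧ e ∈ C := by
  have hdep : M.Dep (insert e I) := hI.insert_dep_iff.2 ⟨he, heI⟩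
  obtain ⟨C, hCsub, hC⟩ := exists_circuit_subset_of_dep hE hdep
  refine ⟨C, hC, hCsub, ?_⟩
  by_contra heC
  exact hC.1.not_indep (hI.subset (fun x hx => (hCsub hx).resolve_left
    (by rintro rfl; exact heC hx)))

variable {J S : Set α}

section Rank

lemma le_rk'_of_indep (hJ : M.Indep J) (hJX : J ⊆ X) : J.ncard ≤ M.rk' X := by
  apply le_csSup
  · apply Set.Finite.bddAbove
    apply (Set.finite_Iic (Fintype.card α)).subset
    rintro n ⟨I, -, -, hcard⟩
    simp only [Set.mem_Iic]
    exact hcard ▸ (Set.ncard_le_ncard (Set.subset_univ I) (fin _)).trans (by simp [Set.ncard_univ])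
  · exact ⟨J, hJX, hJ, rfl⟩

lemma rk'_eq_ncard_basis (hE : M.E = univ) (hI : M.IsBasis I X) : M.rk' X = I.ncard := by
  apply le_antisymm
  · have hne : {n : ℕ | ∃ I, I ⊆ X ∧ M.Indep I ∧ I.ncard = n}.Nonempty :=
      ⟨0, ∅, Set.empty_subset X, M.empty_indep, by simp⟩
    apply csSup_le hne
    rintro n ⟨J, hJX, hJ, rfl⟩
    obtain ⟨J', hJ', hJJ'⟩ := hJ.subset_isBasis_of_subset hJX (gr hE X)
    have hcard : J'.encard = I.encard := hJ'.encard_eq_encard hI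
    have : J'.ncard = I.ncard := by
      rw [Set.ncard_def, Set.ncard_def, hcard]
    exact (Set.ncard_le_ncard hJJ' (fin _)).trans this.le
  · exact le_rk'_of_indep hI.indep hI.subset

lemma rk'_indep (hE : M.E = univ) (hI : M.Indep I) : M.rk' I = I.ncard :=
  rk'_eq_ncard_basis hE (hI.isBasis_self)

lemma rk'_mono (hE : M.E = univ) (hXY : X ⊆ Y) : M.rk' X ≤ M.rk' Y := by
  obtain ⟨I, hI⟩ := M.exists_isBasis X (gr hE X)
  rw [rk'_eq_ncard_basis hE hI]
  exact le_rk'_of_indep hI.indep (hI.subset.trans hXY)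

lemma rk'_closure (hE : M.E = univ) (X : Set α) : M.rk' (M.closure X) = M.rk' X := by
  obtain ⟨I, hI⟩ := M.exists_isBasis X (gr hE X)
  rw [rk'_eq_ncard_basis hE hI, rk'_eq_ncard_basis hE hI.isBasis_closure_right]

lemma rk'_le_of_subset_closure (hE : M.E = univ) (h : X ⊆ M.closure Y) :
    M.rk' X ≤ M.rk' Y := by
  rw [← rk'_closure hE Y]
  exact rk'_mono hE h

lemma rk'_insert_of_not_mem_closure (hE : M.E = univ) (he : e ∉ M.closure X) :
    M.rk' (insert e X) = M.rk' X + 1 := by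
  obtain ⟨I, hI⟩ := M.exists_isBasis X (gr hE X)
  have heI : e ∉ M.closure I := by rwa [hI.closure_eq_closure]
  have heI' : e ∉ I := fun h => heI (M.mem_closure_of_mem h (gr hE I))
  have hIe : M.Indep (insert e I) := by
    rw [hI.indep.insert_indep_iff_of_notMem heI']
    exact ⟨by rw [hE]; trivial, heI⟩
  have hbas : M.IsBasis (insert e I) (insert e X) := by
    apply hIe.isBasis_of_subset_of_subset_closure (insert_subset_insert hI.subset)
    apply insert_subset (M.mem_closure_of_mem (mem_insert _ _) (gr hE _))
    exact (hI.subset_closure).trans (M.closure_subset_closure (subset_insert _ _))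
  rw [rk'_eq_ncard_basis hE hI, rk'_eq_ncard_basis hE hbas,
    Set.ncard_insert_of_notMem heI' (fin _)]

lemma rk'_insert_le (hE : M.E = univ) (e : α) (X : Set α) :
    M.rk' (insert e X) ≤ M.rk' X + 1 := by
  obtain ⟨I, hI⟩ := M.exists_isBasis (insert e X) (gr hE _)
  rw [rk'_eq_ncard_basis hE hI]
  have h1 : M.Indep (I \ {e}) := hI.indep.diff _
  have h2 : I \ {e} ⊆ X := by
    intro x hx
    rcases hI.subset hx.1 with h | h
    · exact absurd h hx.2
    · exact h
  have := le_rk'_of_indep h1 h2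
  have hcard : I.ncard ≤ (I \ {e}).ncard + 1 := by
    by_cases he : e ∈ I
    · rw [Set.ncard_diff_singleton_of_mem he]
      have : 0 < I.ncard := Set.ncard_pos (fin _) |>.2 ⟨e, he⟩
      omega
    · rw [Set.diff_singleton_eq_self he]; omega
  omega

lemma rk'_spanning (hE : M.E = univ) {S : Set α} (hS : M.Spanning S) :
    M.rk' S = M.rk' univ := by
  rw [← rk'_closure hE S, hS.closure_eq, hE]

lemma rk'_le_univ (hE : M.E = univ) (X : Set α) : M.rk' X ≤ M.rk' univ :=
  rk'_mono hE (Set.subset_univ X)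

end Rank


variable {x : α}

section Elim

/-- existence of a minimum of a nonempty set -/
lemma exists_isMinOf (hC : C.Nonempty) : ∃ e, IsMinOf C e := by
  classical
  obtain ⟨e, he, hmin⟩ := Set.exists_min_image C id (fin C) hC
  exact ⟨e, he, hmin⟩

lemma isMinOf_le (h : IsMinOf C e) (hx : x ∈ C) : e ≤ x := h.2 x hx

/-- strong circuit elimination -/
lemma strong_elimination (hE : M.E = univ) (hC₁ : M.IsCircuit' C) (hC₂ : M.IsCircuit' D)
    (he : e ∈ C ∩ D) (hf : f ∈ C \ D) :
    ∃ C', M.IsCircuit' C' ∧ f ∈ C' ∧ C' ⊆ (C ∪ D) \ {e} := by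
  have hef : e ≠ f := fun h => hf.2 (h ▸ he.2)
  set X := (C ∪ D) \ {e, f} with hX
  have heX : e ∈ M.closure X := by
    apply circuit_subset_closure hE hC₂ he.2
    intro x hx
    refine ⟨Or.inr hx.1, ?_⟩
    simp only [Set.mem_insert_iff, Set.mem_singleton_iff]
    push_neg
    refine ⟨fun h => hx.2 (h ▸ rfl), fun h => hf.2 (h ▸ hx.1)⟩
  have hfX : f ∈ M.closure X := by
    have h1 : f ∈ M.closure ((C ∪ D) \ {f}) := by
      apply circuit_subset_closure hE hC₁ hf.1
      intro x hx
      exact ⟨Or.inl hx.1, hx.2⟩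
    have h2 : (C ∪ D) \ {f} = insert e X := by
      ext x
      simp only [hX, Set.mem_diff, Set.mem_insert_iff, Set.mem_singleton_iff]
      constructor
      · rintro ⟨hx, hxf⟩
        by_cases hxe : x = e
        · exact Or.inl hxe
        · exact Or.inr ⟨hx, by push_neg; exact ⟨hxe, hxf⟩⟩
      · rintro (rfl | ⟨hx, hx2⟩)
        · exact ⟨Or.inl he.1, hef⟩
        · push_neg at hx2
          exact ⟨hx, hx2.2⟩
    rw [h2] at h1
    rwa [Matroid.closure_insert_eq_of_mem_closure heX] at h1
  have hfXmem : f ∉ X := by simp [hX]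
  obtain ⟨I, hI⟩ := M.exists_isBasis X (gr hE X)
  have hfI : f ∈ M.closure I := by rwa [hI.closure_eq_closure]
  have hfInotmem : f ∉ I := fun h => hfXmem (hI.subset h)
  obtain ⟨C', hC', hC'sub, hfC'⟩ := exists_fund_circuit hE hI.indep hfInotmem hfI
  refine ⟨C', hC', hfC', ?_⟩
  intro x hx
  rcases hC'sub hx with rfl | hxI
  · exact ⟨Or.inl hf.1, by simp [hef.symm]⟩
  · have := hI.subset hxI
    exact ⟨this.1, fun hxe => this.2 (Or.inl hxe)⟩

/-- A cocircuit is disjoint from the closure of its complement (key: compl of cocircuit is a flat). -/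
lemma cocircuit_not_mem_closure_compl (hE : M.E = univ) (hD : M.IsCocircuit' D) (hx : x ∈ D) :
    x ∉ M.closure Dᶜ := by
  intro hmem
  have hE' : M✶.E = univ := by rw [Matroid.dual_ground]; exact hE
  have hind : M✶.Indep (D \ {x}) := circuit_diff_indep hE' hD hx
  have hco : M.Coindep (D \ {x}) := Matroid.coindep_def.2 hind
  have hsp : M.Spanning (M.E \ (D \ {x})) := hco.compl_spanning
  have heq : M.E \ (D \ {x}) = insert x Dᶜ := by
    rw [hE]
    ext a
    simp only [Set.mem_diff, Set.mem_univ, true_and, Set.mem_insert_iff, Set.mem_compl_iff,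
      Set.mem_diff, Set.mem_singleton_iff]
    tauto
  rw [heq] at hsp
  have hclins : M.closure (insert x Dᶜ) = M.closure Dᶜ :=
    Matroid.closure_insert_eq_of_mem_closure hmem
  have hsp' : M.Spanning Dᶜ := by
    rw [Matroid.spanning_iff_closure_eq (gr hE _)] at hsp ⊢
    rwa [hclins] at hsp
  have hnsp : ¬ M.Spanning Dᶜ := by
    intro h
    have : M.Coindep (M.E \ Dᶜ) := (Matroid.spanning_iff_compl_coindep (gr hE _)).1 h
    have hDeq : M.E \ Dᶜ = D := by rw [hE]; simp
    rw [hDeq] at this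
    exact hD.1.not_indep this
  exact hnsp hsp'

lemma closure_subset_compl_cocircuit (hE : M.E = univ) (hD : M.IsCocircuit' D) (hY : Y ⊆ Dᶜ) :
    M.closure Y ⊆ Dᶜ := by
  intro a ha
  intro haD
  exact cocircuit_not_mem_closure_compl hE hD haD (M.closure_subset_closure hY ha)

/-- not spanning iff some cocircuit in the complement -/
lemma exists_cocircuit_of_not_spanning (hE : M.E = univ) (hA : ¬ M.Spanning A) :
    ∃ D, M.IsCocircuit' D ∧ D ⊆ Aᶜ := by
  have hE' : M✶.E = univ := hE
  have hdep : M✶.Dep Aᶜ := by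
    rw [Matroid.dep_iff]
    refine ⟨fun hind => hA ?_, gr hE' _⟩
    have hco : M.Coindep Aᶜ := Matroid.coindep_def.2 hind
    have := hco.compl_spanning
    rw [hE] at this
    have heq : univ \ Aᶜ = A := by simp
    rwa [heq] at this
  obtain ⟨D, hDsub, hD⟩ := exists_circuit_subset_of_dep hE' hdep
  exact ⟨D, hD, hDsub⟩

lemma not_spanning_of_cocircuit_subset_compl (hE : M.E = univ) (hD : M.IsCocircuit' D)
    (hsub : D ⊆ Aᶜ) : ¬ M.Spanning A := by
  intro hsp
  have hco : M.Coindep (M.E \ A) := (Matroid.spanning_iff_compl_coindep (gr hE _)).1 hsp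
  have : M✶.Indep Aᶜ := by
    rw [hE, Set.compl_eq_univ_diff] at *
    exact hco.indep
  exact hD.1.not_indep (this.subset hsub)

end Elim


variable {F : Set α}

section Persp

lemma flat_of_closure_eq (hF : M.closure F = F) (hFE : F ⊆ M.E) : M.IsFlat F := by
  refine ⟨fun I X' hIF hIX' => ?_, hFE⟩
  have h1 : X' ⊆ M.closure I := hIX'.subset_closure
  have h2 : M.closure I = M.closure F := hIF.closure_eq_closure
  rw [h2, hF] at h1
  exact h1

variable {N : Matroid α}

/-- The key consequence of the perspective property: no `M`-circuit meets an `N`-cocircuit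
in exactly one element. -/
lemma persp_not_singleton (hME : M.E = univ) (hNE : N.E = univ)
    (hMN : ∀ F, N.IsFlat F → M.IsFlat F)
    (hC : M.IsCircuit' C) (hD : N.IsCocircuit' D) (hf : f ∈ C ∩ D)
    (hsub : C ∩ D ⊆ {f}) : False := by
  have hflatN : N.IsFlat Dᶜ := by
    apply flat_of_closure_eq
    · exact le_antisymm (closure_subset_compl_cocircuit hNE hD Subset.rfl)
        (N.subset_closure Dᶜ (gr hNE _))
    · exact gr hNE _
  have hflatM : M.IsFlat Dᶜ := hMN _ hflatN
  have hCD : C \ {f} ⊆ Dᶜ := by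
    intro a ha haD
    exact ha.2 (hsub ⟨ha.1, haD⟩)
  have hfcl : f ∈ M.closure Dᶜ := circuit_subset_closure hME hC hf.1 hCD
  rw [hflatM.closure] at hfcl
  exact hfcl hf.2

end Persp


section Phase

variable {K : Matroid α}

lemma ext_mem_closure (hE : K.E = univ) (he : e ∈ ExtSet K Y) : e ∈ K.closure Y := by
  obtain ⟨heY, C, hC, hCsub, hmin⟩ := he
  apply circuit_subset_closure hE hC hmin.1
  intro x hx
  rcases hCsub hx.1 with h | h
  · exact h
  · exact absurd h hx.2

private lemma phase_aux (hE : K.E = univ) :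
    ∀ n, ∀ X : Set α, X.ncard ≤ n →
      ∃ Y, Y ⊆ X ∧ K.Indep Y ∧ X \ Y ⊆ ExtSet K Y := by
  intro n
  induction n with
  | zero =>
    intro X hle
    have : X = ∅ := by
      have := Set.ncard_eq_zero (fin X) |>.1 (Nat.le_zero.1 hle)
      exact this
    exact ⟨∅, by simp [this], K.empty_indep, by simp [this]⟩
  | succ n IH =>
    intro X hle
    by_cases hX : K.Indep X
    · exact ⟨X, Subset.rfl, hX, by simp⟩
    · have hdep : K.Dep X := Matroid.dep_of_not_indep hX (gr hE X)
      -- Q is nonempty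
      have hQne : (QActSet K X).Nonempty := by
        obtain ⟨C, hCsub, hC⟩ := exists_circuit_subset_of_dep hE hdep
        obtain ⟨m, hm⟩ := exists_isMinOf hC.1.nonempty
        exact ⟨m, hCsub hm.1, C, hC, hCsub, hm⟩
      obtain ⟨q, hq⟩ := exists_isMinOf hQne
      obtain ⟨hqX, Cq, hCq, hCqsub, hCqmin⟩ := hq.1
      have hqcl : q ∈ K.closure (X \ {q}) := by
        apply circuit_subset_closure hE hCq hCqmin.1
        intro x hx
        exact ⟨hCqsub hx.1, hx.2⟩
      obtain ⟨Y, hYsub, hY, hext⟩ := IH (X \ {q}) (by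
        have := Set.ncard_diff_singleton_lt_of_mem hqX (fin X)
        omega)
      refine ⟨Y, hYsub.trans diff_subset, hY, ?_⟩
      have hXcl : X \ {q} ⊆ K.closure Y := by
        intro x hx
        by_cases hxY : x ∈ Y
        · exact K.subset_closure Y (gr hE Y) hxY
        · exact ext_mem_closure hE (hext ⟨hx, hxY⟩)
      have hqY : q ∉ Y := fun h => (hYsub h).2 rfl
      have hqclY : q ∈ K.closure Y := by
        have h1 : K.closure (X \ {q}) ⊆ K.closure Y := by
          rw [← K.closure_closure Y]
          exact K.closure_subset_closure hXcl
        exact h1 hqcl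
      obtain ⟨C', hC', hC'sub, hqC'⟩ := exists_fund_circuit hE hY hqY hqclY
      have hC'X : C' ⊆ X := by
        intro x hx
        rcases hC'sub hx with rfl | h
        · exact hqX
        · exact (hYsub h).1
      have hminC' : IsMinOf C' q := by
        obtain ⟨m, hm⟩ := exists_isMinOf ⟨q, hqC'⟩
        by_cases hmq : m = q
        · subst hmq; exact hm
        · exfalso
          have hmY : m ∈ Y := by
            rcases hC'sub hm.1 with h | h
            · exact absurd h hmq
            · exact h
          have hmQ : m ∈ QActSet K X := ⟨hC'X hm.1, C', hC', hC'X, hm⟩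
          have h1 : q ≤ m := hq.2 m hmQ
          have h2 : m ≤ q := hm.2 q hqC'
          exact hmq (le_antisymm h2 h1)
      intro r hr
      by_cases hrq : r = q
      · subst hrq
        refine ⟨hr.2, C', hC', ?_, hminC'⟩
        intro x hx
        rcases hC'sub hx with rfl | h
        · exact Or.inr rfl
        · exact Or.inl h
      · exact hext ⟨⟨hr.1, hrq⟩, hr.2⟩

end Phase


section Existence

variable {N : Matroid α}

lemma intSet_eq_extSet_dual (N : Matroid α) (B : Set α) : IntSet N B = ExtSet N✶ Bᶜ := by
  ext e
  simp only [IntSet, ExtSet, Matroid.IsCocircuit', Set.mem_setOf_eq, Set.mem_compl_iff,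
    not_not, compl_compl]

lemma spanning_compl_dual_indep (hNE : N.E = univ) (hB : N.Spanning B) : N✶.Indep Bᶜ := by
  have hco : N.Coindep (N.E \ B) := (Matroid.spanning_iff_compl_coindep hB.subset_ground).1 hB
  rw [hNE] at hco
  have : univ \ B = Bᶜ := by simp [Set.compl_eq_univ_diff]
  rw [this] at hco
  exact hco.indep

lemma dual_indep_compl_spanning (hNE : N.E = univ) (hB : N✶.Indep Bᶜ) : N.Spanning B := by
  have hco : N.Coindep Bᶜ := Matroid.coindep_def.2 hB
  have := hco.compl_spanning
  rw [hNE] at this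
  have heq : univ \ Bᶜ = B := by simp
  rwa [heq] at this

theorem exists_interval (hME : M.E = univ) (hNE : N.E = univ)
    (hMN : ∀ F, N.IsFlat F → M.IsFlat F) (A : Set α) :
    ∃ B : Set α, M.Indep B ∧ N.Spanning B ∧
      B \ IntSet N B ⊆ A ∧ A ⊆ B ∪ ExtSet M B := by
  have hNE' : N✶.E = univ := hNE
  obtain ⟨A', hA'sub, hA'ind, hA'ext⟩ := phase_aux hME A.ncard A le_rfl
  obtain ⟨Y, hYsub, hYind, hYext⟩ := phase_aux hNE' (A'ᶜ).ncard A'ᶜ le_rfl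
  set B := Yᶜ with hB
  have hYB : Y = Bᶜ := by simp [hB]
  have hA'B : A' ⊆ B := fun a ha => fun haY => (hYsub haY) ha
  have hBA'int : B \ A' ⊆ IntSet N B := by
    rw [intSet_eq_extSet_dual, ← hYB]
    intro b hb
    refine hYext ⟨hb.2, fun hY => ?_⟩
    rw [hYB] at hY
    exact hY hb.1
  have hspan : N.Spanning B := dual_indep_compl_spanning hNE (by rwa [← hYB])
  have hindep : M.Indep B := by
    by_contra h
    have hdep : M.Dep B := Matroid.dep_of_not_indep h (gr hME B)
    obtain ⟨C, hCsub, hC⟩ := exists_circuit_subset_of_dep hME hdep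
    have hCA' : ¬ C ⊆ A' := fun hsub => hC.1.not_indep (hA'ind.subset hsub)
    obtain ⟨p, hpC, hpA'⟩ := not_subset.1 hCA'
    have hpInt : p ∈ IntSet N B := hBA'int ⟨hCsub hpC, hpA'⟩
    obtain ⟨hpB, D, hD, hDsub, hDmin⟩ := hpInt
    apply persp_not_singleton hME hNE hMN hC hD ⟨hpC, hDmin.1⟩
    rintro x ⟨hxC, hxD⟩
    rcases hDsub hxD with h | h
    · exact absurd (hCsub hxC) h
    · exact h
  have hAB : A \ B ⊆ ExtSet M B := by
    rintro q ⟨hqA, hqB⟩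
    have hqA' : q ∉ A' := fun h => hqB (hA'B h)
    obtain ⟨hq1, C, hC, hCsub, hCmin⟩ := hA'ext ⟨hqA, hqA'⟩
    refine ⟨hqB, C, hC, ?_, hCmin⟩
    intro x hx
    rcases hCsub hx with h | h
    · exact Or.inl (hA'B h)
    · exact Or.inr h
  refine ⟨B, hindep, hspan, ?_, ?_⟩
  · rintro b ⟨hbB, hbInt⟩
    by_contra hbA
    have hbA' : b ∉ A' := fun h => hbA (hA'sub h)
    exact hbInt (hBA'int ⟨hbB, hbA'⟩)
  · intro a ha
    by_cases haB : a ∈ B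
    · exact Or.inl haB
    · exact Or.inr (hAB ⟨ha, haB⟩)

end Existence


section Activity

variable {N : Matroid α} {b q m : α}

/-- internal and external witnesses avoid each other -/
lemma witness_avoid (hME : M.E = univ) (hNE : N.E = univ)
    (hMN : ∀ F, N.IsFlat F → M.IsFlat F) {B : Set α}
    (hbB : b ∈ B) (heB : e ∉ B)
    (hC : M.IsCircuit' C) (hCsub : C ⊆ B ∪ {e}) (hCmin : IsMinOf C e)
    (hD : N.IsCocircuit' D) (hDsub : D ⊆ Bᶜ ∪ {b}) (hDmin : IsMinOf D b) :
    b ∉ C ∧ e ∉ D := by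
  have hbe : b ≠ e := fun h => heB (h ▸ hbB)
  have hnot : ¬ (b ∈ C ∧ e ∈ D) := by
    rintro ⟨hbC, heD⟩
    have h1 : e ≤ b := hCmin.2 b hbC
    have h2 : b ≤ e := hDmin.2 e heD
    exact hbe (le_antisymm h2 h1)
  constructor
  · intro hbC
    have heD : e ∉ D := fun h => hnot ⟨hbC, h⟩
    apply persp_not_singleton hME hNE hMN hC hD ⟨hbC, hDmin.1⟩
    rintro x ⟨hxC, hxD⟩
    rcases hDsub hxD with h | h
    · rcases hCsub hxC with h' | h'
      · exact absurd h' h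
      · exact absurd (h' ▸ hxD) heD
    · exact h
  · intro heD
    have hbC : b ∉ C := fun h => hnot ⟨h, heD⟩
    apply persp_not_singleton hME hNE hMN hC hD ⟨hCmin.1, heD⟩
    rintro x ⟨hxC, hxD⟩
    rcases hCsub hxC with h' | h'
    · rcases hDsub hxD with h | h
      · exact absurd h' h
      · exact absurd (h ▸ hxC) hbC
    · exact h'

lemma ext_refined (hME : M.E = univ) (hNE : N.E = univ)
    (hMN : ∀ F, N.IsFlat F → M.IsFlat F) {B : Set α} (he : e ∈ ExtSet M B) :
    ∃ C, M.IsCircuit' C ∧ C ⊆ (B \ IntSet N B) ∪ {e} ∧ IsMinOf C e := by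
  obtain ⟨heB, C, hC, hCsub, hCmin⟩ := he
  refine ⟨C, hC, ?_, hCmin⟩
  intro x hx
  rcases hCsub hx with h | h
  · left
    refine ⟨h, fun hxInt => ?_⟩
    obtain ⟨hxB, D, hD, hDsub, hDmin⟩ := hxInt
    exact (witness_avoid hME hNE hMN hxB heB hC hCsub hCmin hD hDsub hDmin).1 hx
  · exact Or.inr h

lemma int_refined (hME : M.E = univ) (hNE : N.E = univ)
    (hMN : ∀ F, N.IsFlat F → M.IsFlat F) {B : Set α} (hb : b ∈ IntSet N B) :
    ∃ D, N.IsCocircuit' D ∧ D ⊆ (Bᶜ \ ExtSet M B) ∪ {b} ∧ IsMinOf D b := by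
  obtain ⟨hbB, D, hD, hDsub, hDmin⟩ := hb
  refine ⟨D, hD, ?_, hDmin⟩
  intro x hx
  rcases hDsub hx with h | h
  · left
    refine ⟨h, fun hxExt => ?_⟩
    obtain ⟨hxB, C, hC, hCsub, hCmin⟩ := hxExt
    exact (witness_avoid hME hNE hMN hbB hxB hC hCsub hCmin hD hDsub hDmin).2 hx
  · exact Or.inr h

/-- Key claim: under suitable witness conditions, the minimum of any circuit inside `A`
avoids `B`. -/
private lemma claimC_aux {K : Matroid α} (hE : K.E = univ) {B W A : Set α}
    (hB : K.Indep B) (hWB : W ⊆ B) (hWA : W ⊆ A)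
    (h1 : ∀ e ∈ A \ B, ∃ Ce, K.IsCircuit' Ce ∧ Ce ⊆ W ∪ {e} ∧ IsMinOf Ce e) :
    ∀ n, ∀ C, (C \ B).ncard ≤ n → K.IsCircuit' C → C ⊆ A → ∀ m, IsMinOf C m → m ∉ B := by
  intro n
  induction n with
  | zero =>
    intro C hle hC hCA m hm hmB
    have hCB : C ⊆ B := by
      intro x hx
      by_contra hxB
      have : x ∈ C \ B := ⟨hx, hxB⟩
      have := Set.ncard_pos (fin _) |>.2 ⟨x, this⟩
      omega
    exact hC.1.not_indep (hB.subset hCB)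
  | succ n IH =>
    intro C hle hC hCA m hm hmB
    have hCBne : (C \ B).Nonempty := by
      by_contra h
      rw [Set.not_nonempty_iff_eq_empty, Set.diff_eq_empty] at h
      exact hC.1.not_indep (hB.subset h)
    obtain ⟨e, heC, heB⟩ := hCBne
    obtain ⟨Ce, hCe, hCesub, hCemin⟩ := h1 e ⟨hCA heC, heB⟩
    have hme : m ≠ e := fun h => heB (h ▸ hmB)
    have hmCe : m ∉ Ce := by
      intro hmCe
      rcases hCesub hmCe with h | h
      · have h1' : e ≤ m := hCemin.2 m hmCe
        have h2' : m ≤ e := hm.2 e heC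
        exact hme (le_antisymm h2' h1')
      · exact hme h
    obtain ⟨C', hC', hmC', hC'sub⟩ :=
      strong_elimination hE hC hCe ⟨heC, hCemin.1⟩ ⟨hm.1, hmCe⟩
    have hC'A : C' ⊆ A := by
      intro x hx
      rcases (hC'sub hx).1 with h | h
      · exact hCA h
      · rcases hCesub h with h' | h'
        · exact hWA h'
        · exact absurd h' (hC'sub hx).2
    have hC'B : C' \ B ⊆ (C \ B) \ {e} := by
      rintro x ⟨hx, hxB⟩
      rcases (hC'sub hx).1 with h | h
      · exact ⟨⟨h, hxB⟩, (hC'sub hx).2⟩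
      · rcases hCesub h with h' | h'
        · exact absurd (hWB h') hxB
        · exact absurd h' (hC'sub hx).2
    have hlt : (C' \ B).ncard ≤ n := by
      have h1' : (C' \ B).ncard ≤ ((C \ B) \ {e}).ncard := Set.ncard_le_ncard hC'B (fin _)
      have h2' : ((C \ B) \ {e}).ncard < (C \ B).ncard :=
        Set.ncard_diff_singleton_lt_of_mem ⟨heC, heB⟩ (fin _)
      omega
    have hminC' : IsMinOf C' m := by
      refine ⟨hmC', fun x hx => ?_⟩
      rcases (hC'sub hx).1 with h | h
      · exact hm.2 x h
      · rcases hCesub h with h' | h'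
        · exact le_trans (le_trans (hm.2 e heC) (hCemin.2 x h)) le_rfl
        · exact absurd h' (hC'sub hx).2
    exact IH C' hlt hC' hC'A m hminC' hmB

lemma min_circuit_not_mem (hME : M.E = univ) (hNE : N.E = univ)
    (hMN : ∀ F, N.IsFlat F → M.IsFlat F) {B A : Set α}
    (hBind : M.Indep B) (hint1 : B \ IntSet N B ⊆ A) (hint2 : A ⊆ B ∪ ExtSet M B)
    (hC : M.IsCircuit' C) (hCA : C ⊆ A) (hm : IsMinOf C m) : m ∉ B := by
  apply claimC_aux hME hBind diff_subset hint1 ?_ (C \ B).ncard C le_rfl hC hCA m hm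
  intro e he
  have heExt : e ∈ ExtSet M B := by
    rcases hint2 he.1 with h | h
    · exact absurd h he.2
    · exact h
  exact ext_refined hME hNE hMN heExt

lemma min_cocircuit_mem (hME : M.E = univ) (hNE : N.E = univ)
    (hMN : ∀ F, N.IsFlat F → M.IsFlat F) {B A : Set α}
    (hBsp : N.Spanning B) (hint1 : B \ IntSet N B ⊆ A) (hint2 : A ⊆ B ∪ ExtSet M B)
    (hD : N.IsCocircuit' D) (hDA : D ⊆ Aᶜ) (hm : IsMinOf D m) : m ∈ B := by
  have hNE' : N✶.E = univ := hNE
  have hBc : N✶.Indep Bᶜ := spanning_compl_dual_indep hNE hBsp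
  have h := claimC_aux hNE' (B := Bᶜ) (W := Bᶜ \ ExtSet M B) (A := Aᶜ) hBc diff_subset
    ?_ ?_ (D \ Bᶜ).ncard D le_rfl hD hDA m hm
  · by_contra hmB
    exact h hmB
  · intro x hx
    intro hxA
    rcases hint2 hxA with h' | h'
    · exact hx.1 h'
    · exact hx.2 h'
  · intro e he
    have heInt : e ∈ IntSet N B := by
      have heB : e ∈ B := by
        have := he.2
        simpa using this
      have heA : e ∉ A := he.1
      refine ?_
      have : e ∈ B \ IntSet N B → e ∈ A := fun h => hint1 h
      by_contra hne
      exact heA (this ⟨heB, hne⟩)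
    obtain ⟨Dw, hDw, hDwsub, hDwmin⟩ := int_refined hME hNE hMN heInt
    exact ⟨Dw, hDw, hDwsub, hDwmin⟩

end Activity


section Unique

variable {N : Matroid α} {m : α}

private def IntervalCond (M N : Matroid α) (B A : Set α) : Prop :=
  M.Indep B ∧ N.Spanning B ∧ B \ IntSet N B ⊆ A ∧ A ⊆ B ∪ ExtSet M B

private lemma eq_of_indep_spanning (hME : M.E = univ) (hNE : N.E = univ)
    (hMN : ∀ F, N.IsFlat F → M.IsFlat F) {B A : Set α}
    (hcond : IntervalCond M N B A) (hAind : M.Indep A) (hAsp : N.Spanning A) : A = B := by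
  obtain ⟨hBind, hBsp, h1, h2⟩ := hcond
  have hsub : A ⊆ B := by
    intro a ha
    by_contra haB
    have haExt : a ∈ ExtSet M B := (h2 ha).resolve_left haB
    obtain ⟨C, hC, hCsub, hCmin⟩ := ext_refined hME hNE hMN haExt
    have hCA : C ⊆ A := by
      intro x hx
      rcases hCsub hx with h | h
      · exact h1 h
      · exact h ▸ ha
    exact hC.1.not_indep (hAind.subset hCA)
  have hsup : B ⊆ A := by
    intro b hb
    by_contra hbA
    have hbInt : b ∈ IntSet N B := by
      by_contra hne
      exact hbA (h1 ⟨hb, hne⟩)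
    obtain ⟨D, hD, hDsub, hDmin⟩ := int_refined hME hNE hMN hbInt
    have hDA : D ⊆ Aᶜ := by
      intro x hx hxA
      rcases hDsub hx with h | h
      · rcases h2 hxA with h' | h'
        · exact h.1 h'
        · exact h.2 h'
      · exact hbA (h ▸ hxA)
    exact not_spanning_of_cocircuit_subset_compl hNE hD hDA hAsp
  exact le_antisymm hsub hsup

private lemma unique_aux (hME : M.E = univ) (hNE : N.E = univ)
    (hMN : ∀ F, N.IsFlat F → M.IsFlat F) :
    ∀ n, ∀ A B₁ B₂ : Set α, IntervalCond M N B₁ A → IntervalCond M N B₂ A →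
      ((A \ B₁) ∪ (B₁ \ A)).ncard + ((A \ B₂) ∪ (B₂ \ A)).ncard ≤ n → B₁ = B₂ := by
  intro n
  induction n with
  | zero =>
    intro A B₁ B₂ h1 h2 hle
    have e1 : (A \ B₁) ∪ (B₁ \ A) = ∅ := by
      have := Set.ncard_eq_zero (s := (A \ B₁) ∪ (B₁ \ A)) (fin _) |>.1 (by omega)
      exact this
    have e2 : (A \ B₂) ∪ (B₂ \ A) = ∅ := by
      have := Set.ncard_eq_zero (s := (A \ B₂) ∪ (B₂ \ A)) (fin _) |>.1 (by omega)
      exact this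
    simp only [Set.union_empty_iff, Set.diff_eq_empty] at e1 e2
    exact (le_antisymm e1.1 (e1.2)).symm.trans (le_antisymm e2.1 e2.2)
  | succ n IH =>
    intro A B₁ B₂ h1 h2 hle
    by_cases hAind : M.Indep A
    · by_cases hAsp : N.Spanning A
      · exact (eq_of_indep_spanning hME hNE hMN h1 hAind hAsp).symm.trans
          (eq_of_indep_spanning hME hNE hMN h2 hAind hAsp)
      · -- add the min of a cocircuit in the complement
        obtain ⟨D, hD, hDsub⟩ := exists_cocircuit_of_not_spanning hNE hAsp
        obtain ⟨m, hm⟩ := exists_isMinOf hD.1.nonempty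
        have hmB₁ : m ∈ B₁ := min_cocircuit_mem hME hNE hMN h1.2.1 h1.2.2.1 h1.2.2.2 hD hDsub hm
        have hmB₂ : m ∈ B₂ := min_cocircuit_mem hME hNE hMN h2.2.1 h2.2.2.1 h2.2.2.2 hD hDsub hm
        have hmA : m ∉ A := hDsub hm.1
        have step : ∀ B : Set α, m ∈ B → IntervalCond M N B A → IntervalCond M N B (insert m A) := by
          rintro B hmB ⟨c1, c2, c3, c4⟩
          refine ⟨c1, c2, c3.trans (subset_insert m A), ?_⟩
          intro a ha
          rcases ha with rfl | ha
          · exact Or.inl hmB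
          · exact c4 ha
        have hmeas : ∀ B : Set α, m ∈ B →
            ((insert m A \ B) ∪ (B \ insert m A)) = ((A \ B) ∪ (B \ A)) \ {m} := by
          intro B hmB
          ext t
          by_cases ht : t = m <;> simp [ht, hmB, hmA] <;> tauto
        apply IH (insert m A) B₁ B₂ (step B₁ hmB₁ h1) (step B₂ hmB₂ h2)
        rw [hmeas B₁ hmB₁, hmeas B₂ hmB₂]
        have d1 : (((A \ B₁) ∪ (B₁ \ A)) \ {m}).ncard < ((A \ B₁) ∪ (B₁ \ A)).ncard :=
          Set.ncard_diff_singleton_lt_of_mem (Or.inr ⟨hmB₁, hmA⟩) (fin _)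
        have d2 : (((A \ B₂) ∪ (B₂ \ A)) \ {m}).ncard ≤ ((A \ B₂) ∪ (B₂ \ A)).ncard :=
          Set.ncard_le_ncard diff_subset (fin _)
        omega
    · -- remove the min of a circuit inside A
      obtain ⟨C, hCsub, hC⟩ := exists_circuit_subset_of_dep hME
        (Matroid.dep_of_not_indep hAind (gr hME A))
      obtain ⟨m, hm⟩ := exists_isMinOf hC.1.nonempty
      have hmB₁ : m ∉ B₁ := min_circuit_not_mem hME hNE hMN h1.1 h1.2.2.1 h1.2.2.2 hC hCsub hm
      have hmB₂ : m ∉ B₂ := min_circuit_not_mem hME hNE hMN h2.1 h2.2.2.1 h2.2.2.2 hC hCsub hm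
      have hmA : m ∈ A := hCsub hm.1
      have step : ∀ B : Set α, m ∉ B → IntervalCond M N B A → IntervalCond M N B (A \ {m}) := by
        rintro B hmB ⟨c1, c2, c3, c4⟩
        refine ⟨c1, c2, ?_, diff_subset.trans c4⟩
        intro b hb
        exact ⟨c3 hb, fun h => hmB (h ▸ hb.1)⟩
      have hmeas : ∀ B : Set α, m ∉ B →
          (((A \ {m}) \ B) ∪ (B \ (A \ {m}))) = ((A \ B) ∪ (B \ A)) \ {m} := by
        intro B hmB
        ext t
        by_cases ht : t = m <;> simp [ht, hmB, hmA] <;> tauto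
      apply IH (A \ {m}) B₁ B₂ (step B₁ hmB₁ h1) (step B₂ hmB₂ h2)
      rw [hmeas B₁ hmB₁, hmeas B₂ hmB₂]
      have d1 : (((A \ B₁) ∪ (B₁ \ A)) \ {m}).ncard < ((A \ B₁) ∪ (B₁ \ A)).ncard :=
        Set.ncard_diff_singleton_lt_of_mem (Or.inl ⟨hmA, hmB₁⟩) (fin _)
      have d2 : (((A \ B₂) ∪ (B₂ \ A)) \ {m}).ncard ≤ ((A \ B₂) ∪ (B₂ \ A)).ncard :=
        Set.ncard_le_ncard diff_subset (fin _)
      omega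

theorem interval_unique (hME : M.E = univ) (hNE : N.E = univ)
    (hMN : ∀ F, N.IsFlat F → M.IsFlat F) {A B₁ B₂ : Set α}
    (h1 : M.Indep B₁ ∧ N.Spanning B₁ ∧ B₁ \ IntSet N B₁ ⊆ A ∧ A ⊆ B₁ ∪ ExtSet M B₁)
    (h2 : M.Indep B₂ ∧ N.Spanning B₂ ∧ B₂ \ IntSet N B₂ ⊆ A ∧ A ⊆ B₂ ∪ ExtSet M B₂) :
    B₁ = B₂ :=
  unique_aux hME hNE hMN _ A B₁ B₂ h1 h2 le_rfl

end Unique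


section RankInterval

variable {N : Matroid α} {m b : α}

lemma P1a (hME : M.E = univ) (hNE : N.E = univ)
    (hMN : ∀ F, N.IsFlat F → M.IsFlat F) {B A : Set α}
    (hBind : M.Indep B) (h1 : B \ IntSet N B ⊆ A) (h2 : A ⊆ B ∪ ExtSet M B) :
    M.rk' A = (A ∩ B).ncard := by
  have hABind : M.Indep (A ∩ B) := hBind.subset inter_subset_right
  have hcl : A ⊆ M.closure (A ∩ B) := by
    intro a ha
    by_cases haB : a ∈ B
    · exact M.subset_closure _ (gr hME _) ⟨ha, haB⟩
    · have haExt : a ∈ ExtSet M B := (h2 ha).resolve_left haB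
      obtain ⟨C, hC, hCsub, hCmin⟩ := ext_refined hME hNE hMN haExt
      apply circuit_subset_closure hME hC hCmin.1
      rintro x ⟨hx, hxa⟩
      rcases hCsub hx with h | h
      · exact ⟨h1 h, h.1⟩
      · exact absurd h hxa
  apply le_antisymm
  · calc M.rk' A ≤ M.rk' (A ∩ B) := rk'_le_of_subset_closure hME hcl
      _ = (A ∩ B).ncard := rk'_indep hME hABind
  · exact le_rk'_of_indep hABind inter_subset_left

lemma rk'_union_le (hE : M.E = univ) (A : Set α) :
    ∀ n, ∀ T : Set α, T.ncard ≤ n → M.rk' (A ∪ T) ≤ M.rk' A + T.ncard := by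
  intro n
  induction n with
  | zero =>
    intro T hle
    have hT : T = ∅ := Set.ncard_eq_zero (fin T) |>.1 (Nat.le_zero.1 hle)
    simp [hT]
  | succ n IH =>
    intro T hle
    rcases Set.eq_empty_or_nonempty T with rfl | ⟨b, hb⟩
    · simp
    · have hAT : A ∪ T = insert b (A ∪ (T \ {b})) := by
        ext t
        by_cases ht : t = b <;> simp [ht, hb] <;> tauto
      have hcard : (T \ {b}).ncard + 1 = T.ncard := by
        rw [Set.ncard_diff_singleton_of_mem hb]
        have := Set.ncard_pos (fin T) |>.2 ⟨b, hb⟩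
        omega
      calc M.rk' (A ∪ T) = M.rk' (insert b (A ∪ (T \ {b}))) := by rw [hAT]
        _ ≤ M.rk' (A ∪ (T \ {b})) + 1 := rk'_insert_le hE _ _
        _ ≤ M.rk' A + (T \ {b}).ncard + 1 := by
            have := IH (T \ {b}) (by omega)
            omega
        _ = M.rk' A + T.ncard := by omega

lemma P1b (hME : M.E = univ) (hNE : N.E = univ)
    (hMN : ∀ F, N.IsFlat F → M.IsFlat F) {B A : Set α}
    (hBsp : N.Spanning B) (h1 : B \ IntSet N B ⊆ A) (h2 : A ⊆ B ∪ ExtSet M B) :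
    N.rk' A + (B \ A).ncard = N.rk' univ := by
  have hSint : B \ A ⊆ IntSet N B := fun b hb => by
    by_contra hne
    exact hb.2 (h1 ⟨hb.1, hne⟩)
  -- lower bound on rank growth: adding elements of B \ A one at a time
  have key : ∀ n, ∀ T : Set α, T ⊆ B \ A → T.ncard ≤ n →
      N.rk' A + T.ncard ≤ N.rk' (A ∪ T) := by
    intro n
    induction n with
    | zero =>
      intro T hT hle
      have hT0 : T = ∅ := Set.ncard_eq_zero (fin T) |>.1 (Nat.le_zero.1 hle)
      simp [hT0]
    | succ n IH =>
      intro T hT hle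
      rcases Set.eq_empty_or_nonempty T with rfl | ⟨b, hb⟩
      · simp
      · have hbBA : b ∈ B \ A := hT hb
        obtain ⟨D, hD, hDsub, hDmin⟩ := int_refined hME hNE hMN (hSint hbBA)
        have hAT : A ∪ T = insert b (A ∪ (T \ {b})) := by
          ext t
          by_cases ht : t = b <;> simp [ht, hb] <;> tauto
        have hsubD : A ∪ (T \ {b}) ⊆ Dᶜ := by
          rintro t (ht | ht) htD
          · rcases hDsub htD with h | h
            · rcases h2 ht with h' | h'
              · exact h.1 h'
              · exact h.2 h'
            · rw [h] at ht
              exact hbBA.2 ht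
          · rcases hDsub htD with h | h
            · exact h.1 (hT ht.1).1
            · exact ht.2 h
        have hbncl : b ∉ N.closure (A ∪ (T \ {b})) := fun hmem =>
          (closure_subset_compl_cocircuit hNE hD hsubD hmem) hDmin.1
        have hcard : (T \ {b}).ncard + 1 = T.ncard := by
          rw [Set.ncard_diff_singleton_of_mem hb]
          have := Set.ncard_pos (fin T) |>.2 ⟨b, hb⟩
          omega
        have hstep : N.rk' (A ∪ T) = N.rk' (A ∪ (T \ {b})) + 1 := by
          rw [hAT]
          exact rk'_insert_of_not_mem_closure hNE hbncl
        have := IH (T \ {b}) ((diff_subset).trans hT) (by omega)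
        omega
  have hup : N.rk' A + (B \ A).ncard ≤ N.rk' (A ∪ (B \ A)) :=
    key _ (B \ A) Subset.rfl le_rfl
  have hsp : N.Spanning (A ∪ (B \ A)) := by
    apply hBsp.superset _ (gr hNE _)
    intro b hb
    by_cases h : b ∈ A
    · exact Or.inl h
    · exact Or.inr ⟨hb, h⟩
  have hspeq : N.rk' (A ∪ (B \ A)) = N.rk' univ := rk'_spanning hNE hsp
  have hdown : N.rk' (A ∪ (B \ A)) ≤ N.rk' A + (B \ A).ncard :=
    rk'_union_le hNE A _ (B \ A) le_rfl
  omega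

end RankInterval


end MPAux


open MPAux in
open scoped Classical in
/-- The Tutte polynomial of a matroid perspective in terms of activities of subsets
independent in `M` and spanning in `N`. -/
theorem stmt4 {α : Type*} [Fintype α] [LinearOrder α] (M N : Matroid α)
    (hME : M.E = Set.univ) (hNE : N.E = Set.univ)
    (hMN : ∀ F, N.IsFlat F → M.IsFlat F)
    {R : Type*} [CommRing R] (x y z : R) :
    ∑ A : Finset α,
        (x - 1) ^ (N.rk' Set.univ - N.rk' ↑A) *
          (y - 1) ^ (A.card - M.rk' ↑A) *
          z ^ ((M.rk' Set.univ - M.rk' ↑A) - (N.rk' Set.univ - N.rk' ↑A)) =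
      ∑ B ∈ Finset.univ.filter
          (fun B : Finset α => M.Indep ↑B ∧ N.Spanning ↑B),
        x ^ (IntSet N ↑B).ncard * y ^ (ExtSet M ↑B).ncard *
          z ^ ((M.rk' Set.univ - M.rk' ↑B) - (N.rk' Set.univ - N.rk' ↑B)) := by
  classical
  set f : Finset α → R := fun A =>
    (x - 1) ^ (N.rk' Set.univ - N.rk' ↑A) *
      (y - 1) ^ (A.card - M.rk' ↑A) *
      z ^ ((M.rk' Set.univ - M.rk' ↑A) - (N.rk' Set.univ - N.rk' ↑A)) with hf
  -- the classifier
  have hex : ∀ A : Finset α, ∃ B : Finset α, M.Indep ↑B ∧ N.Spanning ↑B ∧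
      ↑B \ IntSet N ↑B ⊆ (↑A : Set α) ∧ (↑A : Set α) ⊆ ↑B ∪ ExtSet M ↑B := by
    intro A
    obtain ⟨B₀, h1, h2, h3, h4⟩ := exists_interval hME hNE hMN (↑A : Set α)
    refine ⟨B₀.toFinset, ?_, ?_, ?_, ?_⟩ <;>
      rw [Set.coe_toFinset] <;> assumption
  set φ : Finset α → Finset α := fun A => Classical.choose (hex A) with hφdef
  have hφ : ∀ A : Finset α, M.Indep ↑(φ A) ∧ N.Spanning ↑(φ A) ∧
      ↑(φ A) \ IntSet N ↑(φ A) ⊆ (↑A : Set α) ∧ (↑A : Set α) ⊆ ↑(φ A) ∪ ExtSet M ↑(φ A) :=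
    fun A => Classical.choose_spec (hex A)
  have huniq : ∀ (A B : Finset α), M.Indep ↑B → N.Spanning ↑B →
      ↑B \ IntSet N ↑B ⊆ (↑A : Set α) → (↑A : Set α) ⊆ ↑B ∪ ExtSet M ↑B → φ A = B := by
    intro A B hB1 hB2 hB3 hB4
    have := interval_unique hME hNE hMN (A := (↑A : Set α))
      ⟨(hφ A).1, (hφ A).2.1, (hφ A).2.2.1, (hφ A).2.2.2⟩ ⟨hB1, hB2, hB3, hB4⟩
    exact_mod_cast Finset.coe_inj.1 this
  rw [← Finset.sum_fiberwise_of_maps_to (g := φ) (t := Finset.univ.filter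
      (fun B : Finset α => M.Indep ↑B ∧ N.Spanning ↑B))
      (fun A _ => Finset.mem_filter.2 ⟨Finset.mem_univ _, (hφ A).1, (hφ A).2.1⟩) f]
  apply Finset.sum_congr rfl
  intro B hBmem
  obtain ⟨-, hBind, hBsp⟩ := Finset.mem_filter.1 hBmem
  -- notation
  set intS : Set α := IntSet N ↑B with hintS
  set extS : Set α := ExtSet M ↑B with hextS
  set iF : Finset α := (fin intS).toFinset with hiF
  set eF : Finset α := (fin extS).toFinset with heF
  have hiFc : (↑iF : Set α) = intS := Set.Finite.coe_toFinset _
  have heFc : (↑eF : Set α) = extS := Set.Finite.coe_toFinset _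
  have hintB : intS ⊆ ↑B := fun e he => he.1
  have hextB : ∀ e ∈ extS, e ∉ (↑B : Set α) := fun e he => he.1
  have hiFB : iF ⊆ B := by
    intro a ha
    have : a ∈ intS := (fin intS).mem_toFinset.1 ha
    exact_mod_cast hintB this
  have heFB : ∀ a ∈ eF, a ∉ B := by
    intro a ha haB
    have : a ∈ extS := (fin extS).mem_toFinset.1 ha
    exact hextB a this (by exact_mod_cast haB)
  have hiFeF : Disjoint iF eF := by
    rw [Finset.disjoint_left]
    intro a ha hae
    exact heFB a hae (hiFB ha)
  -- the interval condition as a Finset statement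
  have hcond : ∀ A : Finset α, (φ A = B) ↔ (B \ iF ⊆ A ∧ A ⊆ B ∪ eF) := by
    intro A
    constructor
    · intro hAB
      obtain ⟨-, -, h3, h4⟩ := hφ A
      rw [hAB] at h3 h4
      constructor
      · intro a ha
        rw [Finset.mem_sdiff] at ha
        have : (a : α) ∈ (↑B : Set α) \ intS := by
          exact ⟨by exact_mod_cast ha.1, fun h => ha.2 ((fin intS).mem_toFinset.2 h)⟩
        exact_mod_cast h3 this
      · intro a ha
        have := h4 (by exact_mod_cast ha : (a : α) ∈ (↑A : Set α))
        rcases this with h | h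
        · exact Finset.mem_union_left _ (by exact_mod_cast h)
        · exact Finset.mem_union_right _ ((fin extS).mem_toFinset.2 h)
    · rintro ⟨h3, h4⟩
      apply huniq A B hBind hBsp
      · rintro a ⟨haB, haI⟩
        have : a ∈ B \ iF := Finset.mem_sdiff.2 ⟨by exact_mod_cast haB,
          fun h => haI ((fin intS).mem_toFinset.1 h)⟩
        exact_mod_cast h3 this
      · intro a ha
        have := h4 (by exact_mod_cast ha : a ∈ A)
        rw [Finset.mem_union] at this
        rcases this with h | h
        · exact Or.inl (by exact_mod_cast h)
        · exact Or.inr ((fin extS).mem_toFinset.1 h)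
  -- reduce the fiber to the interval
  have hfilter : Finset.univ.filter (fun A => φ A = B)
      = Finset.univ.filter (fun A => B \ iF ⊆ A ∧ A ⊆ B ∪ eF) :=
    Finset.filter_congr (fun A _ => by rw [hcond A])
  -- set versions of the interval condition
  have hsetconds : ∀ A : Finset α, B \ iF ⊆ A → A ⊆ B ∪ eF →
      ((↑B : Set α) \ intS ⊆ (↑A : Set α)) ∧ ((↑A : Set α) ⊆ ↑B ∪ extS) := by
    intro A h3 h4
    constructor
    · rintro a ⟨haB, haI⟩
      have : a ∈ B \ iF := Finset.mem_sdiff.2 ⟨by exact_mod_cast haB,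
        fun h => haI ((fin intS).mem_toFinset.1 h)⟩
      exact_mod_cast h3 this
    · intro a ha
      have := h4 (by exact_mod_cast ha : a ∈ A)
      rw [Finset.mem_union] at this
      rcases this with h | h
      · exact Or.inl (by exact_mod_cast h)
      · exact Or.inr ((fin extS).mem_toFinset.1 h)
  set c : ℕ := M.rk' Set.univ - B.card with hc
  have hterm : ∀ A : Finset α, B \ iF ⊆ A → A ⊆ B ∪ eF →
      f A = (x - 1) ^ (iF.card - (A ∩ iF).card) * (y - 1) ^ ((A ∩ eF).card) * z ^ c := by
    intro A h3 h4
    obtain ⟨hs3, hs4⟩ := hsetconds A h3 h4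
    have hP1a : M.rk' ↑A = (A ∩ B).card := by
      rw [P1a hME hNE hMN hBind hs3 hs4, ← Finset.coe_inter, Set.ncard_coe_finset]
    have hP1b : N.rk' ↑A + (B \ A).card = N.rk' Set.univ := by
      have := P1b hME hNE hMN hBsp hs3 hs4
      rwa [← Finset.coe_sdiff, Set.ncard_coe_finset] at this
    -- B \ A = iF \ A
    have hBAiF : B \ A = iF \ A := by
      ext a
      simp only [Finset.mem_sdiff]
      constructor
      · rintro ⟨haB, haA⟩
        refine ⟨(fin intS).mem_toFinset.2 ?_, haA⟩
        by_contra hnot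
        exact haA (by exact_mod_cast hs3 ⟨by exact_mod_cast haB, hnot⟩)
      · rintro ⟨haI, haA⟩
        exact ⟨hiFB haI, haA⟩
    -- A \ B = A ∩ eF
    have hABeF : A \ B = A ∩ eF := by
      ext a
      simp only [Finset.mem_sdiff, Finset.mem_inter]
      constructor
      · rintro ⟨haA, haB⟩
        refine ⟨haA, (fin extS).mem_toFinset.2 ?_⟩
        have := hs4 (by exact_mod_cast haA : (a : α) ∈ (↑A : Set α))
        rcases this with h | h
        · exact absurd (by exact_mod_cast h) haB
        · exact h
      · rintro ⟨haA, haE⟩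
        exact ⟨haA, fun h => heFB a haE h⟩
    have hcard1 : (iF \ A).card + (iF ∩ A).card = iF.card := Finset.card_sdiff_add_card_inter _ _
    have hcard2 : (A ∩ B).card + (A \ B).card = A.card := Finset.card_inter_add_card_sdiff _ _
    have hcard3 : (B ∩ A).card + (B \ A).card = B.card := Finset.card_inter_add_card_sdiff _ _
    have hBcard : B.card ≤ M.rk' Set.univ := by
      have h1 : M.rk' ↑B = B.card := by
        rw [rk'_indep hME hBind, Set.ncard_coe_finset]
      have := rk'_le_univ hME (↑B : Set α)
      omega
    have hAiF : A ∩ iF = iF ∩ A := Finset.inter_comm _ _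
    have hABBA : A ∩ B = B ∩ A := Finset.inter_comm _ _
    have hx' : N.rk' Set.univ - N.rk' ↑A = iF.card - (A ∩ iF).card := by
      rw [hAiF]
      rw [hBAiF] at hP1b
      omega
    have hy' : A.card - M.rk' ↑A = (A ∩ eF).card := by
      rw [← hABeF]
      omega
    have hz' : (M.rk' Set.univ - M.rk' ↑A) - (N.rk' Set.univ - N.rk' ↑A) = c := by
      rw [hc, hP1a]
      have hcomm : (A ∩ B).card = (B ∩ A).card := by rw [hABBA]
      omega
    rw [hf]
    simp only []
    rw [hz', hx', hy']
  -- reindex over the powerset of iF ∪ eF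
  have hreindex :
      ∑ A ∈ Finset.univ.filter (fun A => B \ iF ⊆ A ∧ A ⊆ B ∪ eF), f A
      = ∑ S ∈ (iF ∪ eF).powerset,
          (x - 1) ^ (iF.card - (S ∩ iF).card) * (y - 1) ^ ((S ∩ eF).card) * z ^ c := by
    have hdisjB : ∀ a ∈ iF ∪ eF, a ∉ B \ iF := by
      intro a ha hmem
      rw [Finset.mem_sdiff] at hmem
      rcases Finset.mem_union.1 ha with h | h
      · exact hmem.2 h
      · exact heFB a h hmem.1
    apply Finset.sum_nbij' (fun A => A \ (B \ iF)) (fun S => (B \ iF) ∪ S)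
    · intro A hA
      rw [Finset.mem_filter] at hA
      obtain ⟨-, h3, h4⟩ := hA
      rw [Finset.mem_powerset]
      intro a ha
      rw [Finset.mem_sdiff, Finset.mem_sdiff] at ha
      rcases Finset.mem_union.1 (h4 ha.1) with h | h
      · rcases Finset.mem_union.1 (Finset.mem_union_left iF h) with h' | h'
        · refine Finset.mem_union_left _ ?_
          by_contra hniF
          exact ha.2 ⟨h', hniF⟩
        · exact Finset.mem_union_left _ h'
      · exact Finset.mem_union_right _ h
    · intro S hS
      rw [Finset.mem_powerset] at hS
      rw [Finset.mem_filter]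
      refine ⟨Finset.mem_univ _, Finset.subset_union_left, ?_⟩
      apply Finset.union_subset
      · exact (Finset.sdiff_subset).trans Finset.subset_union_left
      · intro a ha
        rcases Finset.mem_union.1 (hS ha) with h | h
        · exact Finset.mem_union_left _ (hiFB h)
        · exact Finset.mem_union_right _ h
    · intro A hA
      rw [Finset.mem_filter] at hA
      ext a
      simp only [Finset.mem_union, Finset.mem_sdiff]
      constructor
      · rintro (h | h)
        · exact hA.2.1 (Finset.mem_sdiff.2 h)
        · exact h.1
      · intro ha
        by_cases h : a ∈ B \ iF
        · exact Or.inl (Finset.mem_sdiff.1 h)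
        · exact Or.inr ⟨ha, fun hc => h (Finset.mem_sdiff.2 hc)⟩
    · intro S hS
      rw [Finset.mem_powerset] at hS
      ext a
      simp only [Finset.mem_sdiff, Finset.mem_union]
      constructor
      · rintro ⟨h | h, h2⟩
        · exact absurd h h2
        · exact h
      · intro ha
        exact ⟨Or.inr ha, fun hc => hdisjB a (hS ha) (Finset.mem_sdiff.2 hc)⟩
    · intro A hA
      rw [Finset.mem_filter] at hA
      obtain ⟨-, h3, h4⟩ := hA
      rw [hterm A h3 h4]
      have e1 : (A \ (B \ iF)) ∩ iF = A ∩ iF := by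
        ext a
        simp only [Finset.mem_inter, Finset.mem_sdiff]
        constructor
        · rintro ⟨⟨h1, -⟩, h2⟩
          exact ⟨h1, h2⟩
        · rintro ⟨h1, h2⟩
          exact ⟨⟨h1, fun hm => hm.2 h2⟩, h2⟩
      have e2 : (A \ (B \ iF)) ∩ eF = A ∩ eF := by
        ext a
        simp only [Finset.mem_inter, Finset.mem_sdiff]
        constructor
        · rintro ⟨⟨h1, -⟩, h2⟩
          exact ⟨h1, h2⟩
        · rintro ⟨h1, h2⟩
          exact ⟨⟨h1, fun hm => heFB a h2 hm.1⟩, h2⟩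
      rw [e1, e2]
  rw [hfilter, hreindex]
  -- split the powerset sum into a product
  have hsplit :
      ∑ S ∈ (iF ∪ eF).powerset,
          (x - 1) ^ (iF.card - (S ∩ iF).card) * (y - 1) ^ ((S ∩ eF).card) * z ^ c
      = (∑ S₁ ∈ iF.powerset, (x - 1) ^ (iF.card - S₁.card)) *
        (∑ S₂ ∈ eF.powerset, (y - 1) ^ (S₂.card)) * z ^ c := by
    rw [Finset.sum_mul_sum]
    simp only [Finset.sum_mul]
    rw [← Finset.sum_product']
    apply Finset.sum_nbij' (fun S => (S ∩ iF, S ∩ eF)) (fun p => p.1 ∪ p.2)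
    · intro S hS
      rw [Finset.mem_product]
      exact ⟨Finset.mem_powerset.2 Finset.inter_subset_right,
        Finset.mem_powerset.2 Finset.inter_subset_right⟩
    · intro p hp
      rw [Finset.mem_product, Finset.mem_powerset, Finset.mem_powerset] at hp
      exact Finset.mem_powerset.2 (Finset.union_subset
        (hp.1.trans Finset.subset_union_left) (hp.2.trans Finset.subset_union_right))
    · intro S hS
      rw [Finset.mem_powerset] at hS
      ext a
      simp only [Finset.mem_union, Finset.mem_inter]
      constructor
      · rintro (⟨h, -⟩ | ⟨h, -⟩) <;> exact h
      · intro ha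
        rcases Finset.mem_union.1 (hS ha) with h | h
        · exact Or.inl ⟨ha, h⟩
        · exact Or.inr ⟨ha, h⟩
    · rintro ⟨p1, p2⟩ hp
      rw [Finset.mem_product, Finset.mem_powerset, Finset.mem_powerset] at hp
      have hd := Finset.disjoint_left.1 hiFeF
      have e1 : (p1 ∪ p2) ∩ iF = p1 := by
        ext a
        simp only [Finset.mem_inter, Finset.mem_union]
        constructor
        · rintro ⟨h | h, hi⟩
          · exact h
          · exact ((hd hi) (hp.2 h)).elim
        · intro h
          exact ⟨Or.inl h, hp.1 h⟩
      have e2 : (p1 ∪ p2) ∩ eF = p2 := by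
        ext a
        simp only [Finset.mem_inter, Finset.mem_union]
        constructor
        · rintro ⟨h | h, hi⟩
          · exact ((hd (hp.1 h)) hi).elim
          · exact h
        · intro h
          exact ⟨Or.inr h, hp.2 h⟩
      simp only [e1, e2]
    · intro S hS
      rfl
  rw [hsplit]
  -- evaluate the two binomial sums
  have hxsum : ∑ S₁ ∈ iF.powerset, (x - 1) ^ (iF.card - S₁.card) = x ^ iF.card := by
    have h := Finset.sum_pow_mul_eq_add_pow (1 : R) (x - 1) iF
    have h2 : (1 : R) + (x - 1) = x := by ring
    rw [h2] at h
    rw [← h]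
    apply Finset.sum_congr rfl
    intro t ht
    rw [one_pow, one_mul]
  have hysum : ∑ S₂ ∈ eF.powerset, (y - 1) ^ (S₂.card) = y ^ eF.card := by
    have h := Finset.sum_pow_mul_eq_add_pow (y - 1) (1 : R) eF
    have h2 : (y - 1) + (1 : R) = y := by ring
    rw [h2] at h
    rw [← h]
    apply Finset.sum_congr rfl
    intro t ht
    rw [one_pow, mul_one]
  rw [hxsum, hysum]
  -- match with the right-hand side term
  have hiFcard : intS.ncard = iF.card := Set.ncard_eq_toFinset_card _ (fin _)
  have heFcard : extS.ncard = eF.card := Set.ncard_eq_toFinset_card _ (fin _)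
  have hBrk : M.rk' ↑B = B.card := by
    rw [rk'_indep hME hBind, Set.ncard_coe_finset]
  have hBrkN : N.rk' ↑B = N.rk' Set.univ := rk'_spanning hNE hBsp
  have hexp : (M.rk' Set.univ - M.rk' ↑B) - (N.rk' Set.univ - N.rk' ↑B) = c := by
    rw [hBrk, hBrkN, hc]
    omega
  rw [hiFcard, heFcard, hexp]
end
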